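/- arXiv:2107.06549 — 6 statements merged into one kernel-verified Lean document; each statement's English description precedes it below -/
import Mathlib

section
/- Let P and Q be convex polytopes in R^d such that P ∪ Q is convex, and let F be a k-dimensional face of P ∪ Q. Then there exists a k-dimensional face F' of P or of Q lying in the same k-dimensional affine subspace as F (i.e., aff F = aff F'). -/
open Pointwise

/-- A face of a set `P` (in the sense of convex polytopes): either `P` itself or the
intersection of `P` with a supporting hyperplane. -/
def IsFaceOf {d : ℕ} (F P : Set (EuclideanSpace ℝ (Fin d))) : Prop :=
  F = P ∨ ∃ (f : EuclideanSpace ℝ (Fin d) →ₗ[ℝ] ℝ) (c : ℝ), f ≠ 0 ∧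
    (∀ x ∈ P, f x ≤ c) ∧ F = {x | x ∈ P ∧ f x = c}

/-- The dimension of a set: the dimension of its affine hull. -/
noncomputable def dimSet {d : ℕ} (F : Set (EuclideanSpace ℝ (Fin d))) : ℕ :=
  Module.finrank ℝ (affineSpan ℝ F).direction

/-- A convex polytope: the convex hull of finitely many points. -/
def IsPolytope {d : ℕ} (P : Set (EuclideanSpace ℝ (Fin d))) : Prop :=
  ∃ S : Finset (EuclideanSpace ℝ (Fin d)), S.Nonempty ∧ P = convexHull ℝ (S : Set _)

lemma aux_line {d : ℕ} (s : AffineSubspace ℝ (EuclideanSpace ℝ (Fin d)))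
    {a b : EuclideanSpace ℝ (Fin d)} {t t' : ℝ} (u : ℝ) (h : t ≠ t')
    (h1 : a + t • (b - a) ∈ s) (h2 : a + t' • (b - a) ∈ s) :
    a + u • (b - a) ∈ s := by
  have ht : t' - t ≠ 0 := sub_ne_zero.2 h.symm
  have key := AffineSubspace.smul_vsub_vadd_mem s ((u - t) / (t' - t)) h2 h1 h1
  have : ((u - t) / (t' - t)) • ((a + t' • (b - a)) -ᵥ (a + t • (b - a))) +ᵥ
      (a + t • (b - a)) = a + u • (b - a) := by
    rw [vsub_eq_sub, vadd_eq_add]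
    have h3 : (a + t' • (b - a)) - (a + t • (b - a)) = (t' - t) • (b - a) := by module
    rw [h3, smul_smul, div_mul_cancel₀ _ ht]
    module
  rwa [this] at key

lemma aux_union {d : ℕ} {C : Set (EuclideanSpace ℝ (Fin d))} (hC : Convex ℝ C)
    (s₁ s₂ : AffineSubspace ℝ (EuclideanSpace ℝ (Fin d))) (h : C ⊆ ↑s₁ ∪ ↑s₂) :
    C ⊆ ↑s₁ ∨ C ⊆ ↑s₂ := by
  by_contra hcon
  push_neg at hcon
  obtain ⟨h1, h2⟩ := hcon
  obtain ⟨a, haC, ha1⟩ := Set.not_subset.1 h1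
  obtain ⟨b, hbC, hb2⟩ := Set.not_subset.1 h2
  have ha2 : a ∈ s₂ := (h haC).resolve_left ha1
  have hb1 : b ∈ s₁ := (h hbC).resolve_right hb2
  have hmid : a + (1/2 : ℝ) • (b - a) ∈ C := by
    have := hC haC hbC (by norm_num : (0:ℝ) ≤ 1/2) (by norm_num : (0:ℝ) ≤ 1/2) (by norm_num)
    convert this using 1
    module
  have hb1' : a + (1 : ℝ) • (b - a) ∈ s₁ := by simpa using hb1
  have ha2' : a + (0 : ℝ) • (b - a) ∈ s₂ := by simpa using ha2
  rcases h hmid with hm1 | hm2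
  · have := aux_line s₁ 0 (by norm_num : (1/2 : ℝ) ≠ 1) hm1 hb1'
    simp at this
    exact ha1 this
  · have := aux_line s₂ 1 (by norm_num : (0 : ℝ) ≠ 1/2) ha2' hm2
    simp at this
    exact hb2 this

/-- if `P ∪ Q` is convex and `F` is a `k`-dimensional face of `P ∪ Q`,
then some `k`-dimensional face `F'` of `P` or of `Q` has the same affine hull as `F`. -/
theorem face_of_union {d k : ℕ} (P Q F : Set (EuclideanSpace ℝ (Fin d)))
    (hP : IsPolytope P) (hQ : IsPolytope Q) (hU : Convex ℝ (P ∪ Q))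
    (hF : IsFaceOf F (P ∪ Q)) (hdim : dimSet F = k) :
    ∃ F' : Set (EuclideanSpace ℝ (Fin d)),
      (IsFaceOf F' P ∨ IsFaceOf F' Q) ∧ dimSet F' = k ∧
      affineSpan ℝ F = affineSpan ℝ F' := by
  rcases hF with rfl | ⟨f, c, hf0, hle, hFe⟩
  · have hsub : P ∪ Q ⊆ ↑(affineSpan ℝ P) ∪ ↑(affineSpan ℝ Q) :=
      Set.union_subset_union (subset_affineSpan ℝ P) (subset_affineSpan ℝ Q)
    rcases aux_union hU _ _ hsub with hs | hs
    · have hspan : affineSpan ℝ (P ∪ Q) = affineSpan ℝ P :=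
        le_antisymm (affineSpan_le.2 hs)
          (affineSpan_mono ℝ Set.subset_union_left)
      exact ⟨P, Or.inl (Or.inl rfl), by rwa [dimSet, ← hspan], hspan⟩
    · have hspan : affineSpan ℝ (P ∪ Q) = affineSpan ℝ Q :=
        le_antisymm (affineSpan_le.2 hs)
          (affineSpan_mono ℝ Set.subset_union_right)
      exact ⟨Q, Or.inr (Or.inl rfl), by rwa [dimSet, ← hspan], hspan⟩
  · set A : Set (EuclideanSpace ℝ (Fin d)) := {x | x ∈ P ∧ f x = c} with hA
    set B : Set (EuclideanSpace ℝ (Fin d)) := {x | x ∈ Q ∧ f x = c} with hB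
    have hFAB : F = A ∪ B := by
      rw [hFe]; ext x
      simp only [Set.mem_union, Set.mem_setOf_eq, hA, hB]
      tauto
    have hFconv : Convex ℝ F := by
      have : F = (P ∪ Q) ∩ {x | f x = c} := by rw [hFe]; ext x; simp only [Set.mem_inter_iff, Set.mem_setOf_eq]
      rw [this]
      exact hU.inter (convex_hyperplane f.isLinear c)
    have hsub : F ⊆ ↑(affineSpan ℝ A) ∪ ↑(affineSpan ℝ B) := by
      rw [hFAB]
      exact Set.union_subset_union (subset_affineSpan ℝ A) (subset_affineSpan ℝ B)
    have hAF : A ⊆ F := by rw [hFAB]; exact Set.subset_union_left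
    have hBF : B ⊆ F := by rw [hFAB]; exact Set.subset_union_right
    rcases aux_union hFconv _ _ hsub with hs | hs
    · have hspan : affineSpan ℝ F = affineSpan ℝ A :=
        le_antisymm (affineSpan_le.2 hs) (affineSpan_mono ℝ hAF)
      refine ⟨A, Or.inl (Or.inr ⟨f, c, hf0, fun x hx => hle x (Or.inl hx), rfl⟩),
        by rwa [dimSet, ← hspan], hspan⟩
    · have hspan : affineSpan ℝ F = affineSpan ℝ B :=
        le_antisymm (affineSpan_le.2 hs) (affineSpan_mono ℝ hBF)
      refine ⟨B, Or.inr (Or.inr ⟨f, c, hf0, fun x hx => hle x (Or.inr hx), rfl⟩),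
        by rwa [dimSet, ← hspan], hspan⟩
end

section
/- Let P and Q be convex polytopes in R^d such that P ∪ Q is convex, and let F be a k-dimensional face of P ∩ Q. Then there exists a k-dimensional face F' of P or of Q lying in the same k-dimensional affine subspace as F. -/
set_option linter.unusedSectionVars false
set_option maxHeartbeats 1000000

open Pointwise

section Aux

variable {V : Type*} [NormedAddCommGroup V] [NormedSpace ℝ V] [FiniteDimensional ℝ V]

/-- `w` is a convex-combination representation of `y` over the finset `S`. -/
def IsRep (S : Finset V) (w : V → ℝ) (y : V) : Prop :=
  (∀ s ∈ S, 0 ≤ w s) ∧ ∑ s ∈ S, w s = 1 ∧ ∑ s ∈ S, w s • s = y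

lemma mem_hull_iff {S : Finset V} {y : V} :
    y ∈ convexHull ℝ (S : Set V) ↔ ∃ w, IsRep S w y := by
  rw [Finset.convexHull_eq]
  constructor
  · rintro ⟨w, h0, h1, hc⟩
    refine ⟨w, h0, h1, ?_⟩
    rw [Finset.centerMass_eq_of_sum_1 _ _ h1] at hc
    simpa using hc
  · rintro ⟨w, h0, h1, hc⟩
    refine ⟨w, h0, h1, ?_⟩
    rw [Finset.centerMass_eq_of_sum_1 _ _ h1]
    simpa using hc

lemma IsRep.mem_hull {S : Finset V} {w : V → ℝ} {y : V} (h : IsRep S w y) :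
    y ∈ convexHull ℝ (S : Set V) := mem_hull_iff.2 ⟨w, h⟩

lemma IsRep.restrict {S A : Finset V} {w : V → ℝ} {y : V} (h : IsRep S w y) (hA : A ⊆ S)
    (hsupp : ∀ s ∈ S, w s ≠ 0 → s ∈ A) : IsRep A w y := by
  refine ⟨fun s hs => h.1 s (hA hs), ?_, ?_⟩
  · rw [Finset.sum_subset hA]; · exact h.2.1
    intro s hs hns; by_contra hne; exact hns (hsupp s hs hne)
  · rw [Finset.sum_subset hA]; · exact h.2.2
    intro s hs hns
    have : w s = 0 := by by_contra hne; exact hns (hsupp s hs hne)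
    simp [this]

lemma rep_combo {ι : Type*} {S : Finset V} (I : Finset ι) (c : ι → ℝ) (y : ι → V) (w : ι → V → ℝ)
    (hc0 : ∀ i ∈ I, 0 ≤ c i) (hc1 : ∑ i ∈ I, c i = 1) (h : ∀ i ∈ I, IsRep S (w i) (y i)) :
    IsRep S (fun s => ∑ i ∈ I, c i * w i s) (∑ i ∈ I, c i • y i) := by
  refine ⟨fun s hs => Finset.sum_nonneg fun i hi => mul_nonneg (hc0 i hi) ((h i hi).1 s hs),
    ?_, ?_⟩
  · rw [Finset.sum_comm]
    rw [Finset.sum_congr rfl (fun i hi => ?_), hc1]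
    rw [← Finset.mul_sum, (h i hi).2.1, mul_one]
  · simp_rw [Finset.sum_smul]
    rw [Finset.sum_comm]
    refine Finset.sum_congr rfl fun i hi => ?_
    simp_rw [mul_smul]
    rw [← Finset.smul_sum, (h i hi).2.2]

lemma crossing {P Q : Set V} (hPc : IsClosed P) (hQc : IsClosed Q)
    (hU : Convex ℝ (P ∪ Q)) {p q : V} (hp : p ∈ P) (hq : q ∈ Q) :
    ∃ z ∈ segment ℝ p q, z ∈ P ∧ z ∈ Q := by
  have hseg : segment ℝ p q ⊆ P ∪ Q := hU.segment_subset (Or.inl hp) (Or.inr hq)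
  have hconn : IsPreconnected (segment ℝ p q) := (convex_segment p q).isPreconnected
  obtain ⟨z, hzs, hz⟩ := isPreconnected_closed_iff.1 hconn P Q hPc hQc hseg
    ⟨p, left_mem_segment ℝ p q, hp⟩ ⟨q, right_mem_segment ℝ p q, hq⟩
  exact ⟨z, hzs, hz⟩

end Aux

section Cone

variable {V : Type*} [NormedAddCommGroup V] [NormedSpace ℝ V] [FiniteDimensional ℝ V]

/-- The convex cone generated by the elements of a finset. -/
def coneOf (A : Finset V) : Set V :=
  {y | ∃ μ : V → ℝ, (∀ a ∈ A, 0 ≤ μ a) ∧ ∑ a ∈ A, μ a • a = y}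

lemma coneOf_mono {A B : Finset V} (h : B ⊆ A) : coneOf B ⊆ coneOf A := by
  rintro y ⟨μ, hμ0, hμs⟩
  classical
  refine ⟨fun a => if a ∈ B then μ a else 0, ?_, ?_⟩
  · intro a _
    by_cases ha : a ∈ B
    · simpa [ha] using hμ0 a ha
    · simp [ha]
  · have h1 : ∑ a ∈ A, (if a ∈ B then μ a else 0) • a
        = ∑ a ∈ B, (if a ∈ B then μ a else 0) • a :=
      (Finset.sum_subset h (fun a _ hna => by simp [hna])).symm
    rw [h1, ← hμs]
    exact Finset.sum_congr rfl fun a ha => by simp [ha]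

lemma cone_carath (A : Finset V) (μ : V → ℝ) (hμ : ∀ a ∈ A, 0 ≤ μ a) :
    ∃ B ⊆ A, LinearIndependent ℝ (fun b : {z // z ∈ B} => (b : V)) ∧
      ∃ ν : V → ℝ, (∀ b ∈ B, 0 ≤ ν b) ∧ ∑ b ∈ B, ν b • b = ∑ a ∈ A, μ a • a := by
  classical
  induction A using Finset.strongInductionOn generalizing μ with
  | _ A ih =>
  by_cases hind : LinearIndependent ℝ (fun b : {z // z ∈ A} => (b : V))
  · exact ⟨A, le_refl _, hind, μ, hμ, rfl⟩
  · obtain ⟨g, hgsum, i₀, hgi₀⟩ := Fintype.not_linearIndependent_iff.1 hind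
    -- turn it into a function on V
    set G : V → ℝ := fun a => if h : a ∈ A then g ⟨a, h⟩ else 0 with hG
    have hGsum : ∑ a ∈ A, G a • a = 0 := by
      rw [← hgsum, ← Finset.sum_coe_sort A (fun a => G a • a)]
      exact Finset.sum_congr rfl fun b _ => by simp [hG, b.2]
    have hGex : ∃ a ∈ A, G a ≠ 0 := ⟨i₀, i₀.2, by simpa [hG, i₀.2] using hgi₀⟩
    -- WLOG some G positive
    have main : ∀ G : V → ℝ, (∑ a ∈ A, G a • a = 0) → (∃ a ∈ A, 0 < G a) →
        ∃ B ⊆ A, LinearIndependent ℝ (fun b : {z // z ∈ B} => (b : V)) ∧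
          ∃ ν : V → ℝ, (∀ b ∈ B, 0 ≤ ν b) ∧ ∑ b ∈ B, ν b • b = ∑ a ∈ A, μ a • a := by
      intro G hGsum ⟨apos, hapos, hGpos⟩
      set Apos := A.filter (fun a => 0 < G a) with hApos
      have hne : Apos.Nonempty := ⟨apos, Finset.mem_filter.2 ⟨hapos, hGpos⟩⟩
      obtain ⟨a₁, ha₁, hmin⟩ := Finset.exists_min_image Apos (fun a => μ a / G a) hne
      have ha₁A : a₁ ∈ A := (Finset.mem_filter.1 ha₁).1
      have hGa₁ : 0 < G a₁ := (Finset.mem_filter.1 ha₁).2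
      set t : ℝ := μ a₁ / G a₁ with ht
      have ht0 : 0 ≤ t := div_nonneg (hμ a₁ ha₁A) hGa₁.le
      set μ' : V → ℝ := fun a => μ a - t * G a with hμ'
      have hμ'0 : ∀ a ∈ A, 0 ≤ μ' a := by
        intro a ha
        by_cases hGa : 0 < G a
        · have h1 := hmin a (Finset.mem_filter.2 ⟨ha, hGa⟩)
          have h2 : t * G a ≤ μ a := (le_div_iff₀ hGa).1 h1
          simp only [hμ']
          linarith
        · push_neg at hGa
          have : t * G a ≤ 0 := mul_nonpos_of_nonneg_of_nonpos ht0 hGa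
          simp only [hμ']
          linarith [hμ a ha]
      have hμ'a₁ : μ' a₁ = 0 := by
        simp only [hμ', ht]
        field_simp
        ring
      have hsum' : ∑ a ∈ A, μ' a • a = ∑ a ∈ A, μ a • a := by
        simp only [hμ', sub_smul, mul_smul, Finset.sum_sub_distrib]
        rw [← Finset.smul_sum, hGsum, smul_zero, sub_zero]
      have hsub : A.erase a₁ ⊂ A := Finset.erase_ssubset ha₁A
      obtain ⟨B, hBsub, hBind, ν, hν0, hνsum⟩ :=
        ih (A.erase a₁) hsub μ' (fun a ha => hμ'0 a (Finset.mem_of_mem_erase ha))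
      refine ⟨B, hBsub.trans (Finset.erase_subset _ _), hBind, ν, hν0, ?_⟩
      rw [hνsum, ← hsum', ← Finset.add_sum_erase A _ ha₁A, hμ'a₁, zero_smul, zero_add]
    by_cases hpos : ∃ a ∈ A, 0 < G a
    · exact main G hGsum hpos
    · push_neg at hpos
      obtain ⟨a₂, ha₂, hGa₂⟩ := hGex
      refine main (fun a => -G a)
        (by simp only [neg_smul, Finset.sum_neg_distrib, hGsum, neg_zero]) ?_
      refine ⟨a₂, ha₂, ?_⟩
      have h1 : G a₂ < 0 := lt_of_le_of_ne (hpos a₂ ha₂) hGa₂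
      simpa using h1

lemma isClosed_coneOf_indep (B : Finset V)
    (h : LinearIndependent ℝ (fun b : {z // z ∈ B} => (b : V))) : IsClosed (coneOf B) := by
  classical
  set φ : ({z // z ∈ B} → ℝ) →ₗ[ℝ] V :=
    Fintype.linearCombination ℝ (fun b : {z // z ∈ B} => (b : V)) with hφ
  have hφapp : ∀ g, φ g = ∑ i : {z // z ∈ B}, g i • (i : V) := fun g => rfl
  have hker : LinearMap.ker φ = ⊥ := by
    rw [LinearMap.ker_eq_bot']
    intro g hg
    funext i
    exact Fintype.linearIndependent_iff.1 h g (by rw [← hφapp]; exact hg) i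
  have hce := LinearMap.isClosedEmbedding_of_injective hker
  have himg : coneOf B = φ '' {g | ∀ i, 0 ≤ g i} := by
    ext y
    constructor
    · rintro ⟨μ, hμ0, hμs⟩
      refine ⟨fun i => μ i, fun i => hμ0 i i.2, ?_⟩
      rw [hφapp, ← hμs, ← Finset.sum_coe_sort B (fun a => μ a • a)]
    · rintro ⟨g, hg0, rfl⟩
      refine ⟨fun a => if h : a ∈ B then g ⟨a, h⟩ else 0, fun a ha => by simp [ha, hg0 ⟨a, ha⟩], ?_⟩
      rw [hφapp, ← Finset.sum_coe_sort B (fun a => (if h : a ∈ B then g ⟨a, h⟩ else 0) • a)]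
      exact Finset.sum_congr rfl fun i _ => by simp [i.2]
  rw [himg]
  refine hce.isClosedMap _ ?_
  have : {g : {z // z ∈ B} → ℝ | ∀ i, 0 ≤ g i} = ⋂ i, (fun g : {z // z ∈ B} → ℝ => g i) ⁻¹' Set.Ici 0 := by
    ext g; simp [Set.mem_iInter]
  rw [this]
  exact isClosed_iInter fun i => IsClosed.preimage (continuous_apply i) isClosed_Ici

lemma isClosed_coneOf (A : Finset V) : IsClosed (coneOf A) := by
  classical
  have hdecomp : coneOf A = ⋃ B ∈ A.powerset.filter
      (fun B => LinearIndependent ℝ (fun b : {z // z ∈ B} => (b : V))), coneOf B := by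
    ext y
    simp only [Set.mem_iUnion, Finset.mem_filter, Finset.mem_powerset]
    constructor
    · rintro ⟨μ, hμ0, hμs⟩
      obtain ⟨B, hBA, hBind, ν, hν0, hνs⟩ := cone_carath A μ hμ0
      exact ⟨B, ⟨hBA, hBind⟩, ν, hν0, by rw [hνs, hμs]⟩
    · rintro ⟨B, ⟨hBA, _⟩, hy⟩
      exact coneOf_mono hBA hy
  rw [hdecomp]
  exact isClosed_biUnion_finset fun B hB => isClosed_coneOf_indep B (Finset.mem_filter.1 hB).2

lemma convex_coneOf (A : Finset V) : Convex ℝ (coneOf A) := by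
  rintro y₁ ⟨μ₁, hμ₁0, hμ₁s⟩ y₂ ⟨μ₂, hμ₂0, hμ₂s⟩ a b ha hb hab
  refine ⟨fun s => a * μ₁ s + b * μ₂ s,
    fun s hs => add_nonneg (mul_nonneg ha (hμ₁0 s hs)) (mul_nonneg hb (hμ₂0 s hs)), ?_⟩
  rw [← hμ₁s, ← hμ₂s]
  rw [Finset.smul_sum, Finset.smul_sum, ← Finset.sum_add_distrib]
  exact Finset.sum_congr rfl fun s _ => by
    rw [add_smul, mul_smul, mul_smul]

lemma smul_mem_coneOf (A : Finset V) {y : V} (hy : y ∈ coneOf A) {t : ℝ} (ht : 0 ≤ t) :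
    t • y ∈ coneOf A := by
  obtain ⟨μ, hμ0, hμs⟩ := hy
  refine ⟨fun s => t * μ s, fun s hs => mul_nonneg ht (hμ0 s hs), ?_⟩
  rw [← hμs, Finset.smul_sum]
  exact Finset.sum_congr rfl fun s _ => by simp [mul_smul]

lemma mem_coneOf_of_mem {A : Finset V} {a : V} (ha : a ∈ A) : a ∈ coneOf A := by
  classical
  refine ⟨fun s => if s = a then 1 else 0, fun s _ => by
    simp only
    split <;> norm_num, ?_⟩
  rw [Finset.sum_eq_single a]
  · simp
  · intro b _ hba; simp [hba]
  · intro hna; exact absurd ha hna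

lemma cone_sep (A : Finset V) (v₀ : V) (h : -v₀ ∉ coneOf A) :
    ∃ f : V →L[ℝ] ℝ, (∀ a ∈ A, f a ≤ 0) ∧ f v₀ < 0 := by
  obtain ⟨f, u, hfu, hu⟩ :=
    geometric_hahn_banach_closed_point (convex_coneOf A) (isClosed_coneOf A) h
  have h0 : (0 : V) ∈ coneOf A := ⟨0, by simp, by simp⟩
  have hupos : (0 : ℝ) < u := by simpa using hfu 0 h0
  have hbound : ∀ b ∈ coneOf A, f b ≤ 0 := by
    intro b hb
    by_contra hpos
    push_neg at hpos
    have hmem := smul_mem_coneOf A hb (t := 2 * u / f b) (by positivity)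
    have := hfu _ hmem
    rw [map_smul, smul_eq_mul, div_mul_cancel₀] at this
    · linarith
    · exact ne_of_gt hpos
  refine ⟨f, fun a ha => hbound a (mem_coneOf_of_mem ha), ?_⟩
  rw [map_neg] at hu
  linarith

end Cone

section Star

variable {V : Type*} [NormedAddCommGroup V] [NormedSpace ℝ V] [FiniteDimensional ℝ V]

-- the set of "vertices" of `S` that appear with positive weight in some rep of `x`
noncomputable def starS (S : Finset V) (x : V) : Finset V :=
  @Finset.filter _ (fun s => ∃ w, IsRep S w x ∧ 0 < w s) (Classical.decPred _) S

lemma starS_subset {S : Finset V} {x : V} : starS S x ⊆ S := by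
  classical
  simpa [starS] using Finset.filter_subset _ S

lemma mem_starS_iff {S : Finset V} {x s : V} :
    s ∈ starS S x ↔ s ∈ S ∧ ∃ w, IsRep S w x ∧ 0 < w s := by
  classical
  simp [starS]

lemma support_subset_starS {S : Finset V} {x : V} {w : V → ℝ} (h : IsRep S w x) {s : V}
    (hs : s ∈ S) (hw : w s ≠ 0) : s ∈ starS S x :=
  mem_starS_iff.2 ⟨hs, w, h, lt_of_le_of_ne (h.1 s hs) (Ne.symm hw)⟩

lemma starS_nonempty {S : Finset V} {x : V} (hx : x ∈ convexHull ℝ (S : Set V)) :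
    (starS S x).Nonempty := by
  obtain ⟨w, hw⟩ := mem_hull_iff.1 hx
  have : ∃ s ∈ S, w s ≠ 0 := by
    by_contra hcon
    push_neg at hcon
    have : ∑ s ∈ S, w s = 0 := Finset.sum_eq_zero hcon
    rw [hw.2.1] at this
    norm_num at this
  obtain ⟨s, hs, hws⟩ := this
  exact ⟨s, support_subset_starS hw hs hws⟩

lemma exists_rep_pos {S : Finset V} {x : V} (hx : x ∈ convexHull ℝ (S : Set V)) :
    ∃ w, IsRep S w x ∧ ∀ s ∈ starS S x, 0 < w s := by
  classical
  set B := starS S x with hB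
  have hBne : B.Nonempty := starS_nonempty hx
  set n : ℝ := (B.card : ℝ) with hn
  have hnpos : 0 < n := by
    simp only [hn]
    exact_mod_cast Finset.card_pos.2 hBne
  set W : V → (V → ℝ) := fun s => if h : ∃ w, IsRep S w x ∧ 0 < w s then h.choose else 0 with hW
  have hWs : ∀ s ∈ B, IsRep S (W s) x ∧ 0 < W s s := by
    intro s hs
    obtain ⟨hsS, hex⟩ := mem_starS_iff.1 hs
    simp only [hW, dif_pos hex]
    exact hex.choose_spec
  have hrep := rep_combo (S := S) B (fun _ => n⁻¹) (fun _ => x) W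
    (fun i _ => by positivity) (by
      rw [Finset.sum_const, nsmul_eq_mul]
      field_simp
      exact hn.symm)
    (fun i hi => (hWs i hi).1)
  have hxeq : ∑ _i ∈ B, (n : ℝ)⁻¹ • x = x := by
    rw [Finset.sum_const, ← Nat.cast_smul_eq_nsmul ℝ, smul_smul, ← hn,
      mul_inv_cancel₀ (ne_of_gt hnpos), one_smul]
  rw [hxeq] at hrep
  refine ⟨_, hrep, ?_⟩
  intro s hs
  refine Finset.sum_pos' (fun i hi => mul_nonneg (by positivity) ((hWs i hi).1.1 s (starS_subset hs)))
    ⟨s, hs, ?_⟩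
  exact mul_pos (by positivity) (hWs s hs).2

lemma bound_hull {S : Finset V} {f : V →ₗ[ℝ] ℝ} {c : ℝ} (hf : ∀ s ∈ S, f s ≤ c) :
    ∀ y ∈ convexHull ℝ (S : Set V), f y ≤ c := by
  intro y hy
  have hsub : convexHull ℝ (S : Set V) ⊆ {y | f y ≤ c} := by
    apply convexHull_min
    · intro s hs; exact hf s hs
    · exact convex_halfSpace_le ⟨f.map_add, f.map_smul⟩ c
  exact hsub hy

lemma x_mem_hull_starS {S : Finset V} {x : V} (hx : x ∈ convexHull ℝ (S : Set V)) :
    x ∈ convexHull ℝ (starS S x : Set V) := by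
  obtain ⟨w, hw⟩ := mem_hull_iff.1 hx
  exact (hw.restrict starS_subset fun s hs hne => support_subset_starS hw hs hne).mem_hull

lemma bound_eq_on_starS {S : Finset V} {x : V} (hx : x ∈ convexHull ℝ (S : Set V))
    {f : V →ₗ[ℝ] ℝ} (hf : ∀ s ∈ S, f s ≤ f x) : ∀ s ∈ starS S x, f s = f x := by
  obtain ⟨w, hw, hpos⟩ := exists_rep_pos hx
  have hfx : ∑ s ∈ S, w s * f s = ∑ s ∈ S, w s * f x := by
    have h1 : f x = ∑ s ∈ S, w s * f s := by
      conv_lhs => rw [← hw.2.2]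
      rw [map_sum]
      exact Finset.sum_congr rfl fun s _ => by rw [map_smul, smul_eq_mul]
    rw [← h1, ← Finset.sum_mul, hw.2.1, one_mul]
  have heach := (Finset.sum_eq_sum_iff_of_le
    (fun i hi => mul_le_mul_of_nonneg_left (hf i hi) (hw.1 i hi))).1 hfx
  intro s hs
  exact mul_left_cancel₀ (ne_of_gt (hpos s hs)) (heach s (starS_subset hs))

lemma sep_starS {S : Finset V} {x : V} (hx : x ∈ convexHull ℝ (S : Set V)) {s₀ : V}
    (hs₀ : s₀ ∈ S) (hns : s₀ ∉ starS S x) :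
    ∃ f : V →ₗ[ℝ] ℝ, (∀ s ∈ S, f s ≤ f x) ∧ f s₀ < f x := by
  classical
  set A : Finset V := S.image (fun s => s - x) with hA
  have hinj : ∀ a ∈ S, ∀ b ∈ S, a - x = b - x → a = b := fun a _ b _ h => by
    have := sub_left_inj.1 h; exact this
  have hnot : -(s₀ - x) ∉ coneOf A := by
    rintro ⟨μ, hμ0, hμs⟩
    rw [hA, Finset.sum_image hinj] at hμs
    set m : V → ℝ := fun s => μ (s - x) with hm
    have hm0 : ∀ s ∈ S, 0 ≤ m s := fun s hs =>
      hμ0 _ (Finset.mem_image_of_mem _ hs)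
    set M : ℝ := ∑ s ∈ S, m s with hM
    have hM0 : 0 ≤ M := Finset.sum_nonneg hm0
    have hkey : ∑ s ∈ S, m s • s + s₀ = (1 + M) • x := by
      have h1 : ∑ s ∈ S, m s • (s - x) = ∑ s ∈ S, m s • s - M • x := by
        rw [hM, Finset.sum_smul, ← Finset.sum_sub_distrib]
        exact Finset.sum_congr rfl fun s _ => smul_sub _ _ _
      rw [h1, neg_sub] at hμs
      have h2 : ∑ s ∈ S, m s • s = x - s₀ + M • x := by
        rw [sub_eq_iff_eq_add] at hμs
        exact hμs
      rw [h2, add_smul, one_smul]; abel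
    have h1M : (0:ℝ) < 1 + M := by linarith
    set w : V → ℝ := fun s => (m s + if s = s₀ then 1 else 0) / (1 + M) with hwdef
    have hsum_ind : ∑ s ∈ S, (if s = s₀ then (1:ℝ) else 0) = 1 := by
      rw [Finset.sum_eq_single s₀]
      · simp
      · intro b _ hba; simp [hba]
      · intro hna; exact absurd hs₀ hna
    have hsum_inds : ∑ s ∈ S, (if s = s₀ then (1:ℝ) else 0) • s = s₀ := by
      rw [Finset.sum_eq_single s₀]
      · simp
      · intro b _ hba; simp [hba]
      · intro hna; exact absurd hs₀ hna
    have hrep : IsRep S w x := by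
      refine ⟨fun s hs => div_nonneg (add_nonneg (hm0 s hs) (by positivity)) h1M.le, ?_, ?_⟩
      · simp only [hwdef, div_eq_inv_mul]
        rw [← Finset.mul_sum, Finset.sum_add_distrib, hsum_ind, ← hM]
        field_simp
        ring
      · simp only [hwdef, div_eq_inv_mul, mul_smul]
        rw [← Finset.smul_sum]
        have : ∑ s ∈ S, (m s + if s = s₀ then (1:ℝ) else 0) • s = (1 + M) • x := by
          have e1 : ∀ s ∈ S, (m s + if s = s₀ then (1:ℝ) else 0) • s
              = m s • s + (if s = s₀ then (1:ℝ) else 0) • s := fun s _ => add_smul _ _ _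
          rw [Finset.sum_congr rfl e1, Finset.sum_add_distrib, hsum_inds]
          exact hkey
        rw [this, smul_smul, inv_mul_cancel₀ (ne_of_gt h1M), one_smul]
    have hws₀ : 0 < w s₀ := by
      have h2 := hm0 s₀ hs₀
      simp only [hwdef, if_pos rfl]
      exact div_pos (by simp only [if_true]; linarith) h1M
    exact hns (support_subset_starS hrep hs₀ (ne_of_gt hws₀))
  obtain ⟨f, hf0, hfv⟩ := cone_sep A (s₀ - x) hnot
  refine ⟨(f : V →ₗ[ℝ] ℝ), fun s hs => ?_, ?_⟩
  · have h1 := hf0 _ (Finset.mem_image_of_mem (fun s => s - x) hs)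
    rw [map_sub] at h1
    simp only [ContinuousLinearMap.coe_coe]
    linarith
  · rw [map_sub] at hfv
    simp only [ContinuousLinearMap.coe_coe]
    linarith

lemma exists_fstar {S : Finset V} {x : V} (hx : x ∈ convexHull ℝ (S : Set V)) :
    ∃ f : V →ₗ[ℝ] ℝ, (∀ s ∈ S, f s ≤ f x) ∧ ∀ s ∈ S, (f s = f x ↔ s ∈ starS S x) := by
  classical
  set out : Finset V := S.filter (fun s => s ∉ starS S x) with hout
  set g : V → (V →ₗ[ℝ] ℝ) := fun s₀ =>
    if h : ∃ f : V →ₗ[ℝ] ℝ, (∀ s ∈ S, f s ≤ f x) ∧ f s₀ < f x then h.choose else 0 with hg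
  have hgs : ∀ s₀ ∈ out, (∀ s ∈ S, g s₀ s ≤ g s₀ x) ∧ g s₀ s₀ < g s₀ x := by
    intro s₀ hs₀
    obtain ⟨hs₀S, hs₀n⟩ := Finset.mem_filter.1 hs₀
    have hex := sep_starS hx hs₀S hs₀n
    simp only [hg, dif_pos hex]
    exact hex.choose_spec
  set f : V →ₗ[ℝ] ℝ := ∑ s₀ ∈ out, g s₀ with hf
  have hfapp : ∀ y, f y = ∑ s₀ ∈ out, g s₀ y := fun y => by
    rw [hf, LinearMap.coe_sum, Finset.sum_apply]
  have hbound : ∀ s ∈ S, f s ≤ f x := by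
    intro s hs
    rw [hfapp, hfapp]
    exact Finset.sum_le_sum fun i hi => (hgs i hi).1 s hs
  refine ⟨f, hbound, fun s hs => ⟨?_, ?_⟩⟩
  · intro hfs
    by_contra hns
    have hsout : s ∈ out := Finset.mem_filter.2 ⟨hs, hns⟩
    have hlt : f s < f x := by
      rw [hfapp, hfapp]
      exact Finset.sum_lt_sum (fun i hi => (hgs i hi).1 s hs) ⟨s, hsout, (hgs s hsout).2⟩
    exact absurd hfs (ne_of_lt hlt)
  · intro hsstar
    rw [hfapp, hfapp]
    exact Finset.sum_congr rfl fun i hi => bound_eq_on_starS hx (hgs i hi).1 s hsstar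

lemma face_eq_hull_starS {S : Finset V} {x : V} (hx : x ∈ convexHull ℝ (S : Set V))
    {f : V →ₗ[ℝ] ℝ} (hf : ∀ s ∈ S, f s ≤ f x) (hiff : ∀ s ∈ S, (f s = f x ↔ s ∈ starS S x)) :
    {y | y ∈ convexHull ℝ (S : Set V) ∧ f y = f x} = convexHull ℝ (starS S x : Set V) := by
  apply Set.Subset.antisymm
  · rintro y ⟨hy, hfy⟩
    obtain ⟨w, hw⟩ := mem_hull_iff.1 hy
    have hsum : ∑ s ∈ S, w s * f s = ∑ s ∈ S, w s * f x := by
      have h1 : f y = ∑ s ∈ S, w s * f s := by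
        conv_lhs => rw [← hw.2.2]
        rw [map_sum]
        exact Finset.sum_congr rfl fun s _ => by rw [map_smul, smul_eq_mul]
      rw [← h1, hfy, ← Finset.sum_mul, hw.2.1, one_mul]
    have heach := (Finset.sum_eq_sum_iff_of_le
      (fun i hi => mul_le_mul_of_nonneg_left (hf i hi) (hw.1 i hi))).1 hsum
    refine (hw.restrict starS_subset fun s hs hne => ?_).mem_hull
    have := heach s hs
    have hfs : f s = f x := mul_left_cancel₀ hne this
    exact (hiff s hs).1 hfs
  · apply convexHull_min
    · intro s hs
      exact ⟨subset_convexHull ℝ (S : Set V) (starS_subset hs), (hiff s (starS_subset hs)).2 hs⟩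
    · have : {y | y ∈ convexHull ℝ (S : Set V) ∧ f y = f x}
          = convexHull ℝ (S : Set V) ∩ {y | f y = f x} := rfl
      rw [this]
      exact (convex_convexHull ℝ _).inter (convex_hyperplane ⟨f.map_add, f.map_smul⟩ (f x))

lemma mem_affineSpan_finset {A : Finset V} {y : V} (hy : y ∈ affineSpan ℝ (A : Set V)) :
    ∃ μ : V → ℝ, ∑ s ∈ A, μ s = 1 ∧ ∑ s ∈ A, μ s • s = y := by
  classical
  have hAne : A.Nonempty := by
    rcases A.eq_empty_or_nonempty with h | h
    · rw [h] at hy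
      rw [Finset.coe_empty, AffineSubspace.span_empty] at hy
      exact absurd hy (AffineSubspace.notMem_bot ℝ V y)
    · exact h
  obtain ⟨s₁, hs₁⟩ := hAne
  have hs₁' : s₁ ∈ affineSpan ℝ (A : Set V) := subset_affineSpan ℝ _ (by exact_mod_cast hs₁)
  have hdir : y - s₁ ∈ vectorSpan ℝ (A : Set V) := by
    have := AffineSubspace.vsub_mem_direction hy hs₁'
    rwa [direction_affineSpan] at this
  rw [vectorSpan_eq_span_vsub_set_right ℝ (show s₁ ∈ (A : Set V) from by exact_mod_cast hs₁)]
    at hdir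
  have himg : ((· -ᵥ s₁) '' (A : Set V)) = ((A.image (· - s₁) : Finset V) : Set V) := by
    rw [Finset.coe_image]
    simp [vsub_eq_sub]
  rw [himg] at hdir
  obtain ⟨gg, -, hgg⟩ := Submodule.mem_span_finset.1 hdir
  rw [Finset.sum_image (fun a _ b _ h => by exact sub_left_inj.1 h)] at hgg
  set a : V → ℝ := fun s => gg (s - s₁) with ha
  set c : ℝ := 1 - ∑ s ∈ A, a s with hc
  refine ⟨Function.update a s₁ (a s₁ + c), ?_, ?_⟩
  · rw [Finset.sum_update_of_mem hs₁, Finset.sdiff_singleton_eq_erase, hc,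
      ← Finset.add_sum_erase A a hs₁]
    ring
  · have hup : ∀ s, Function.update a s₁ (a s₁ + c) s • s
        = Function.update (fun s => a s • s) s₁ ((a s₁ + c) • s₁) s := by
      intro s
      rcases eq_or_ne s s₁ with h | h
      · subst h; simp
      · simp [Function.update_apply, h]
    rw [Finset.sum_congr rfl (fun s _ => hup s), Finset.sum_update_of_mem hs₁,
      Finset.sdiff_singleton_eq_erase]
    have h2 : ∑ s ∈ A.erase s₁, a s • s = (∑ s ∈ A, a s • s) - a s₁ • s₁ := by
      rw [← Finset.add_sum_erase A (fun s => a s • s) hs₁]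
      abel
    rw [h2]
    have h3 : ∑ s ∈ A, a s • s = y - s₁ + (∑ s ∈ A, a s) • s₁ := by
      have h4 : ∑ s ∈ A, a s • (s - s₁) = ∑ s ∈ A, a s • s - (∑ s ∈ A, a s) • s₁ := by
        rw [Finset.sum_smul, ← Finset.sum_sub_distrib]
        exact Finset.sum_congr rfl fun s _ => smul_sub _ _ _
      rw [h4] at hgg
      rw [sub_eq_iff_eq_add] at hgg
      exact hgg
    rw [h3, hc, add_smul, sub_smul, one_smul]
    abel

lemma move_lemma {S : Finset V} {x : V} (hx : x ∈ convexHull ℝ (S : Set V)) {u : V}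
    (hu : x + u ∈ affineSpan ℝ ((starS S x : Finset V) : Set V)) :
    ∃ ε : ℝ, 0 < ε ∧ x + ε • u ∈ convexHull ℝ ((starS S x : Finset V) : Set V) ∧
      x - ε • u ∈ convexHull ℝ ((starS S x : Finset V) : Set V) := by
  classical
  obtain ⟨w, hw, hpos⟩ := exists_rep_pos hx
  set B := starS S x with hB
  have hBne : B.Nonempty := starS_nonempty hx
  have hwB : IsRep B w x := hw.restrict starS_subset fun s hs hne => support_subset_starS hw hs hne
  obtain ⟨μ, hμ1, hμ2⟩ := mem_affineSpan_finset hu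
  set D : V → ℝ := fun s => μ s - w s with hD
  have hDsum : ∑ s ∈ B, D s = 0 := by
    simp only [hD]
    rw [Finset.sum_sub_distrib, hμ1, hwB.2.1, sub_self]
  have hDvec : ∑ s ∈ B, D s • s = u := by
    simp only [hD, sub_smul]
    rw [Finset.sum_sub_distrib, hμ2, hwB.2.2, add_sub_cancel_left]
  set ε : ℝ := B.inf' hBne (fun s => w s / (|D s| + 1)) with hε
  have hεpos : 0 < ε := by
    rw [hε, Finset.lt_inf'_iff]
    intro b hb
    exact div_pos (hpos b hb) (by positivity)
  have hεb : ∀ s ∈ B, |ε * D s| < w s := by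
    intro s hs
    have h1 : ε ≤ w s / (|D s| + 1) := Finset.inf'_le _ hs
    have h2 : ε * (|D s| + 1) ≤ w s := by
      rw [← le_div_iff₀ (by positivity)]
      exact h1
    have h3 : |ε * D s| = ε * |D s| := by
      rw [abs_mul, abs_of_pos hεpos]
    rw [h3]
    nlinarith [abs_nonneg (D s), hεpos]
  have hrepp : IsRep B (fun s => w s + ε * D s) (x + ε • u) := by
    refine ⟨fun s hs => by
      have h6 := abs_lt.1 (hεb s hs)
      show 0 ≤ w s + ε * D s
      linarith, ?_, ?_⟩
    · rw [Finset.sum_add_distrib, hwB.2.1, ← Finset.mul_sum, hDsum, mul_zero, add_zero]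
    · have e1 : ∀ s ∈ B, (w s + ε * D s) • s = w s • s + ε • (D s • s) := fun s _ => by
        rw [add_smul, mul_smul]
      rw [Finset.sum_congr rfl e1, Finset.sum_add_distrib, hwB.2.2, ← Finset.smul_sum, hDvec]
  have hrepm : IsRep B (fun s => w s - ε * D s) (x - ε • u) := by
    refine ⟨fun s hs => by
      have h6 := abs_lt.1 (hεb s hs)
      show 0 ≤ w s - ε * D s
      linarith, ?_, ?_⟩
    · rw [Finset.sum_sub_distrib, hwB.2.1, ← Finset.mul_sum, hDsum, mul_zero, sub_zero]
    · have e1 : ∀ s ∈ B, (w s - ε * D s) • s = w s • s - ε • (D s • s) := fun s _ => by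
        rw [sub_smul, mul_smul]
      rw [Finset.sum_congr rfl e1, Finset.sum_sub_distrib, hwB.2.2, ← Finset.smul_sum, hDvec]
  exact ⟨ε, hεpos, hrepp.mem_hull, hrepm.mem_hull⟩

lemma two_sided_mem {S : Finset V} {x : V} (hx : x ∈ convexHull ℝ (S : Set V)) {wv : V}
    {δ δ' : ℝ} (hδ : 0 < δ) (hδ' : 0 < δ')
    (h₁ : x + δ • wv ∈ convexHull ℝ (S : Set V)) (h₂ : x - δ' • wv ∈ convexHull ℝ (S : Set V)) :
    wv ∈ (affineSpan ℝ ((starS S x : Finset V) : Set V)).direction ∧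
      x + δ • wv ∈ convexHull ℝ ((starS S x : Finset V) : Set V) ∧
      x - δ' • wv ∈ convexHull ℝ ((starS S x : Finset V) : Set V) := by
  obtain ⟨f, hf, hiff⟩ := exists_fstar hx
  have hb := bound_hull (c := f x) hf
  have hv1 : f (x + δ • wv) = f x + δ * f wv := by rw [map_add, map_smul, smul_eq_mul]
  have hv2 : f (x - δ' • wv) = f x - δ' * f wv := by rw [map_sub, map_smul, smul_eq_mul]
  have hfwv : f wv = 0 := by
    have b1 := hb _ h₁
    have b2 := hb _ h₂
    rw [hv1] at b1
    rw [hv2] at b2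
    nlinarith
  have hm1 : x + δ • wv ∈ convexHull ℝ ((starS S x : Finset V) : Set V) := by
    rw [← face_eq_hull_starS hx hf hiff]
    exact ⟨h₁, by rw [hv1, hfwv, mul_zero, add_zero]⟩
  have hm2 : x - δ' • wv ∈ convexHull ℝ ((starS S x : Finset V) : Set V) := by
    rw [← face_eq_hull_starS hx hf hiff]
    exact ⟨h₂, by rw [hv2, hfwv, mul_zero, sub_zero]⟩
  refine ⟨?_, hm1, hm2⟩
  have hxs : x ∈ affineSpan ℝ ((starS S x : Finset V) : Set V) :=
    convexHull_subset_affineSpan _ (x_mem_hull_starS hx)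
  have hzs : x + δ • wv ∈ affineSpan ℝ ((starS S x : Finset V) : Set V) :=
    convexHull_subset_affineSpan _ hm1
  have hdir : (x + δ • wv) -ᵥ x ∈ (affineSpan ℝ ((starS S x : Finset V) : Set V)).direction :=
    AffineSubspace.vsub_mem_direction hzs hxs
  have : (x + δ • wv) -ᵥ x = δ • wv := by
    rw [vsub_eq_sub]; abel
  rw [this] at hdir
  have := Submodule.smul_mem _ δ⁻¹ hdir
  rwa [smul_smul, inv_mul_cancel₀ (ne_of_gt hδ), one_smul] at this

lemma final_step {S T : Finset V} {F : Set V} {x : V}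
    (hxP : x ∈ convexHull ℝ (S : Set V)) (hxQ : x ∈ convexHull ℝ (T : Set V)) (hxF : x ∈ F)
    (hFstarP : F ⊆ convexHull ℝ ((starS S x : Finset V) : Set V))
    (hsub : (affineSpan ℝ ((starS S x : Finset V) : Set V)).direction
      ≤ (affineSpan ℝ ((starS T x : Finset V) : Set V)).direction)
    (hkey : ∀ (wv : V) (ε : ℝ), 0 < ε →
      x + ε • wv ∈ convexHull ℝ (S : Set V) → x + ε • wv ∈ convexHull ℝ (T : Set V) →
      x - ε • wv ∈ convexHull ℝ (S : Set V) → x - ε • wv ∈ convexHull ℝ (T : Set V) →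
      x + ε • wv ∈ F ∧ x - ε • wv ∈ F) :
    ∃ G : Set V, (G = convexHull ℝ (S : Set V) ∨ ∃ (f : V →ₗ[ℝ] ℝ) (c : ℝ), f ≠ 0 ∧
      (∀ y ∈ convexHull ℝ (S : Set V), f y ≤ c) ∧
        G = {y | y ∈ convexHull ℝ (S : Set V) ∧ f y = c}) ∧
      affineSpan ℝ F = affineSpan ℝ G := by
  classical
  set G := convexHull ℝ ((starS S x : Finset V) : Set V) with hG
  have hhullP : convexHull ℝ ((starS S x : Finset V) : Set V) ⊆ convexHull ℝ (S : Set V) :=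
    convexHull_mono (Finset.coe_subset.2 starS_subset)
  have hhullQ : convexHull ℝ ((starS T x : Finset V) : Set V) ⊆ convexHull ℝ (T : Set V) :=
    convexHull_mono (Finset.coe_subset.2 starS_subset)
  have hspan : affineSpan ℝ F = affineSpan ℝ G := by
    apply le_antisymm
    · exact affineSpan_mono ℝ hFstarP
    · apply affineSpan_le.2
      intro y hy
      set wv := y - x with hwv
      have hxstarP : x ∈ convexHull ℝ ((starS S x : Finset V) : Set V) := x_mem_hull_starS hxP
      have hxaffP : x ∈ affineSpan ℝ ((starS S x : Finset V) : Set V) :=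
        convexHull_subset_affineSpan _ hxstarP
      have hyaff : y ∈ affineSpan ℝ ((starS S x : Finset V) : Set V) :=
        convexHull_subset_affineSpan _ hy
      have hdirP : wv ∈ (affineSpan ℝ ((starS S x : Finset V) : Set V)).direction := by
        have := AffineSubspace.vsub_mem_direction hyaff hxaffP
        rwa [vsub_eq_sub] at this
      have hmemP : x + wv ∈ affineSpan ℝ ((starS S x : Finset V) : Set V) := by
        have : x + wv = y := by rw [hwv]; abel
        rwa [this]
      have hmemQ : x + wv ∈ affineSpan ℝ ((starS T x : Finset V) : Set V) := by
        have hxaffQ : x ∈ affineSpan ℝ ((starS T x : Finset V) : Set V) :=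
          convexHull_subset_affineSpan _ (x_mem_hull_starS hxQ)
        have := AffineSubspace.vadd_mem_of_mem_direction (hsub hdirP) hxaffQ
        rwa [vadd_eq_add, add_comm] at this
      obtain ⟨ε₁, hε₁, hp₁, hm₁⟩ := move_lemma hxP hmemP
      obtain ⟨ε₂, hε₂, hp₂, hm₂⟩ := move_lemma hxQ hmemQ
      set ε : ℝ := min ε₁ ε₂ with hεdef
      have hεpos : 0 < ε := lt_min hε₁ hε₂
      have hscale : ∀ (ε' : ℝ), 0 < ε' → ε ≤ ε' → ∀ σ : ℝ, σ = 1 ∨ σ = -1 →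
          ∀ {C : Set V}, Convex ℝ C → x ∈ C → x + ε' • (σ • wv) ∈ C → x + ε • (σ • wv) ∈ C := by
        intro ε' hε' hle σ hσ C hC hxC hyC
        have h1 : x + (ε / ε') • ((x + ε' • (σ • wv)) - x) ∈ C :=
          hC.add_smul_sub_mem hxC hyC
            ⟨div_nonneg hεpos.le hε'.le, div_le_one_of_le₀ hle hε'.le⟩
        have h2 : x + (ε / ε') • ((x + ε' • (σ • wv)) - x) = x + ε • (σ • wv) := by
          rw [add_sub_cancel_left, smul_smul, div_mul_cancel₀ _ (ne_of_gt hε')]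
        rwa [h2] at h1
      have hxhS : x ∈ convexHull ℝ (S : Set V) := hxP
      have hxhT : x ∈ convexHull ℝ (T : Set V) := hxQ
      have hconvS : Convex ℝ (convexHull ℝ (S : Set V)) := convex_convexHull ℝ _
      have hconvT : Convex ℝ (convexHull ℝ (T : Set V)) := convex_convexHull ℝ _
      have hPp : x + ε • wv ∈ convexHull ℝ (S : Set V) := by
        have := hscale ε₁ hε₁ (min_le_left _ _) 1 (Or.inl rfl) hconvS hxhS
          (by simpa using hhullP hp₁)
        simpa using this
      have hPm : x - ε • wv ∈ convexHull ℝ (S : Set V) := by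
        have := hscale ε₁ hε₁ (min_le_left _ _) (-1) (Or.inr rfl) hconvS hxhS
          (by
            have : x + ε₁ • ((-1 : ℝ) • wv) = x - ε₁ • wv := by
              rw [smul_smul]; simp [sub_eq_add_neg, neg_smul]
            rw [this]
            exact hhullP hm₁)
        have h2 : x + ε • ((-1 : ℝ) • wv) = x - ε • wv := by
          rw [smul_smul]; simp [sub_eq_add_neg, neg_smul]
        rwa [h2] at this
      have hQp : x + ε • wv ∈ convexHull ℝ (T : Set V) := by
        have := hscale ε₂ hε₂ (min_le_right _ _) 1 (Or.inl rfl) hconvT hxhT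
          (by simpa using hhullQ hp₂)
        simpa using this
      have hQm : x - ε • wv ∈ convexHull ℝ (T : Set V) := by
        have := hscale ε₂ hε₂ (min_le_right _ _) (-1) (Or.inr rfl) hconvT hxhT
          (by
            have : x + ε₂ • ((-1 : ℝ) • wv) = x - ε₂ • wv := by
              rw [smul_smul]; simp [sub_eq_add_neg, neg_smul]
            rw [this]
            exact hhullQ hm₂)
        have h2 : x + ε • ((-1 : ℝ) • wv) = x - ε • wv := by
          rw [smul_smul]; simp [sub_eq_add_neg, neg_smul]
        rwa [h2] at this
      obtain ⟨hFp, _⟩ := hkey wv ε hεpos hPp hQp hPm hQm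
      have hmem := AffineSubspace.smul_vsub_vadd_mem (affineSpan ℝ F) ε⁻¹
        (subset_affineSpan ℝ F hFp) (subset_affineSpan ℝ F hxF) (subset_affineSpan ℝ F hxF)
      have heq : ε⁻¹ • ((x + ε • wv) -ᵥ x) +ᵥ x = y := by
        rw [vsub_eq_sub, add_sub_cancel_left, smul_smul, inv_mul_cancel₀ (ne_of_gt hεpos),
          one_smul, vadd_eq_add, hwv]
        abel
      rwa [heq] at hmem
  by_cases hall : ∀ s ∈ S, s ∈ starS S x
  · have hSeq : starS S x = S := Finset.Subset.antisymm starS_subset hall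
    exact ⟨G, Or.inl (by rw [hG, hSeq]), hspan⟩
  · push_neg at hall
    obtain ⟨s₀, hs₀S, hs₀n⟩ := hall
    obtain ⟨f, hf, hiff⟩ := exists_fstar hxP
    have hlt : f s₀ < f x := lt_of_le_of_ne (hf s₀ hs₀S) (fun h => hs₀n ((hiff s₀ hs₀S).1 h))
    have hfne : f ≠ 0 := by
      intro h0
      rw [h0] at hlt
      simp at hlt
    exact ⟨G, Or.inr ⟨f, f x, hfne, bound_hull hf,
      (face_eq_hull_starS hxP hf hiff).symm⟩, hspan⟩

lemma mem_dir_of_plus {S : Finset V} {x : V} (hx : x ∈ convexHull ℝ (S : Set V)) {w : V}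
    (h : x + w ∈ convexHull ℝ ((starS S x : Finset V) : Set V)) :
    w ∈ (affineSpan ℝ ((starS S x : Finset V) : Set V)).direction := by
  have hxaff : x ∈ affineSpan ℝ ((starS S x : Finset V) : Set V) :=
    convexHull_subset_affineSpan _ (x_mem_hull_starS hx)
  have hyaff : x + w ∈ affineSpan ℝ ((starS S x : Finset V) : Set V) :=
    convexHull_subset_affineSpan _ h
  have := AffineSubspace.vsub_mem_direction hyaff hxaff
  rwa [vsub_eq_sub, add_sub_cancel_left] at this

lemma dichotomy {S T : Finset V} {x : V}
    (hxP : x ∈ convexHull ℝ (S : Set V)) (hxQ : x ∈ convexHull ℝ (T : Set V))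
    (hU : Convex ℝ (convexHull ℝ (S : Set V) ∪ convexHull ℝ (T : Set V))) :
    (affineSpan ℝ ((starS S x : Finset V) : Set V)).direction
      ≤ (affineSpan ℝ ((starS T x : Finset V) : Set V)).direction ∨
    (affineSpan ℝ ((starS T x : Finset V) : Set V)).direction
      ≤ (affineSpan ℝ ((starS S x : Finset V) : Set V)).direction := by
  set dS := (affineSpan ℝ ((starS S x : Finset V) : Set V)).direction with hdS
  set dT := (affineSpan ℝ ((starS T x : Finset V) : Set V)).direction with hdT
  by_contra hcon
  push_neg at hcon
  obtain ⟨h1, h2⟩ := hcon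
  obtain ⟨u, huS, huT⟩ := SetLike.not_le_iff_exists.1 h1
  obtain ⟨v, hvT, hvS⟩ := SetLike.not_le_iff_exists.1 h2
  have hhullP : convexHull ℝ ((starS S x : Finset V) : Set V) ⊆ convexHull ℝ (S : Set V) :=
    convexHull_mono (Finset.coe_subset.2 starS_subset)
  have hhullQ : convexHull ℝ ((starS T x : Finset V) : Set V) ⊆ convexHull ℝ (T : Set V) :=
    convexHull_mono (Finset.coe_subset.2 starS_subset)
  -- two-sided moves along u and v
  have hmemP : x + u ∈ affineSpan ℝ ((starS S x : Finset V) : Set V) := by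
    have hxaff : x ∈ affineSpan ℝ ((starS S x : Finset V) : Set V) :=
      convexHull_subset_affineSpan _ (x_mem_hull_starS hxP)
    have := AffineSubspace.vadd_mem_of_mem_direction huS hxaff
    rwa [vadd_eq_add, add_comm] at this
  have hmemQ : x + v ∈ affineSpan ℝ ((starS T x : Finset V) : Set V) := by
    have hxaff : x ∈ affineSpan ℝ ((starS T x : Finset V) : Set V) :=
      convexHull_subset_affineSpan _ (x_mem_hull_starS hxQ)
    have := AffineSubspace.vadd_mem_of_mem_direction hvT hxaff
    rwa [vadd_eq_add, add_comm] at this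
  obtain ⟨ε₁, hε₁, hup, hum⟩ := move_lemma hxP hmemP
  obtain ⟨ε₂, hε₂, hvp, hvm⟩ := move_lemma hxQ hmemQ
  -- sign-fixing for u
  have hsgnU : ∃ u'' : V, (x + u'' ∈ convexHull ℝ ((starS S x : Finset V) : Set V)) ∧
      (x - u'' ∈ convexHull ℝ ((starS S x : Finset V) : Set V)) ∧
      (∀ δ : ℝ, 0 < δ → x + δ • u'' ∉ convexHull ℝ (T : Set V)) ∧
      (u'' = ε₁ • u ∨ u'' = -(ε₁ • u)) := by
    by_cases hc : ∃ δ : ℝ, 0 < δ ∧ x + δ • (ε₁ • u) ∈ convexHull ℝ (T : Set V)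
    · obtain ⟨δ₀, hδ₀, hδ₀m⟩ := hc
      refine ⟨-(ε₁ • u), by rw [← sub_eq_add_neg]; exact hum, by rw [sub_neg_eq_add]; exact hup,
        ?_, Or.inr rfl⟩
      intro δ hδ hmem
      rw [smul_neg, ← sub_eq_add_neg] at hmem
      have := (two_sided_mem hxQ hδ₀ hδ hδ₀m hmem).1
      exact huT (by
        have := Submodule.smul_mem _ ε₁⁻¹ this
        rwa [smul_smul, inv_mul_cancel₀ (ne_of_gt hε₁), one_smul] at this)
    · push_neg at hc
      exact ⟨ε₁ • u, hup, hum, fun δ hδ => hc δ hδ, Or.inl rfl⟩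
  have hsgnV : ∃ v'' : V, (x + v'' ∈ convexHull ℝ ((starS T x : Finset V) : Set V)) ∧
      (x - v'' ∈ convexHull ℝ ((starS T x : Finset V) : Set V)) ∧
      (∀ δ : ℝ, 0 < δ → x + δ • v'' ∉ convexHull ℝ (S : Set V)) ∧
      (v'' = ε₂ • v ∨ v'' = -(ε₂ • v)) := by
    by_cases hc : ∃ δ : ℝ, 0 < δ ∧ x + δ • (ε₂ • v) ∈ convexHull ℝ (S : Set V)
    · obtain ⟨δ₀, hδ₀, hδ₀m⟩ := hc
      refine ⟨-(ε₂ • v), by rw [← sub_eq_add_neg]; exact hvm, by rw [sub_neg_eq_add]; exact hvp,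
        ?_, Or.inr rfl⟩
      intro δ hδ hmem
      rw [smul_neg, ← sub_eq_add_neg] at hmem
      have := (two_sided_mem hxP hδ₀ hδ hδ₀m hmem).1
      exact hvS (by
        have := Submodule.smul_mem _ ε₂⁻¹ this
        rwa [smul_smul, inv_mul_cancel₀ (ne_of_gt hε₂), one_smul] at this)
    · push_neg at hc
      exact ⟨ε₂ • v, hvp, hvm, fun δ hδ => hc δ hδ, Or.inl rfl⟩
  obtain ⟨u'', hu''p, hu''m, hu''nT, hu''eq⟩ := hsgnU
  obtain ⟨v'', hv''p, hv''m, hv''nS, hv''eq⟩ := hsgnV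
  have hu''S : u'' ∈ dS := mem_dir_of_plus hxP hu''p
  have hv''T : v'' ∈ dT := mem_dir_of_plus hxQ hv''p
  have hu''nT' : u'' ∉ dT := by
    have hεu : ε₁ • u ∉ dT := fun h => huT (by
      have := Submodule.smul_mem _ ε₁⁻¹ h
      rwa [smul_smul, inv_mul_cancel₀ (ne_of_gt hε₁), one_smul] at this)
    rcases hu''eq with h | h <;> rw [h]
    · exact hεu
    · intro hneg; exact hεu (by simpa using Submodule.neg_mem _ hneg)
  have hv''nS' : v'' ∉ dS := by
    have hεv : ε₂ • v ∉ dS := fun h => hvS (by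
      have := Submodule.smul_mem _ ε₂⁻¹ h
      rwa [smul_smul, inv_mul_cancel₀ (ne_of_gt hε₂), one_smul] at this)
    rcases hv''eq with h | h <;> rw [h]
    · exact hεv
    · intro hneg; exact hεv (by simpa using Submodule.neg_mem _ hneg)
  -- crossing
  have hSclosed : IsClosed (convexHull ℝ (S : Set V)) :=
    (S.finite_toSet.isCompact_convexHull ℝ).isClosed
  have hTclosed : IsClosed (convexHull ℝ (T : Set V)) :=
    (T.finite_toSet.isCompact_convexHull ℝ).isClosed
  obtain ⟨z, hzseg, hzS, hzT⟩ := crossing hSclosed hTclosed hU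
    (hhullP hu''p) (hhullQ hv''p)
  obtain ⟨a, b, ha, hb, hab, hzeq⟩ := hzseg
  have hb0 : b ≠ 0 := by
    intro h
    rw [h] at hab hzeq
    rw [add_zero] at hab
    rw [hab, zero_smul, add_zero, one_smul] at hzeq
    exact hu''nT 1 one_pos (by rw [one_smul]; rw [hzeq]; exact hzT)
  have ha0 : a ≠ 0 := by
    intro h
    rw [h] at hab hzeq
    rw [zero_add] at hab
    rw [hab, zero_smul, zero_add, one_smul] at hzeq
    exact hv''nS 1 one_pos (by rw [one_smul]; rw [hzeq]; exact hzS)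
  set w : V := a • u'' + b • v'' with hw
  have hzw : z = x + w := by
    rw [← hzeq, hw]
    rw [smul_add, smul_add]
    have : (a • x + b • x) = x := by
      rw [← add_smul, hab, one_smul]
    rw [show a • x + a • u'' + (b • x + b • v'') = (a • x + b • x) + (a • u'' + b • v'') by abel,
      this]
  have hrseg : x - w ∈ segment ℝ (x - u'') (x - v'') := by
    refine ⟨a, b, ha, hb, hab, ?_⟩
    rw [hw, smul_sub, smul_sub]
    have : (a • x + b • x) = x := by rw [← add_smul, hab, one_smul]
    rw [show a • x - a • u'' + (b • x - b • v'') = (a • x + b • x) - (a • u'' + b • v'') by abel,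
      this]
  have hrmem : x - w ∈ convexHull ℝ (S : Set V) ∪ convexHull ℝ (T : Set V) :=
    hU.segment_subset (Or.inl (hhullP hu''m)) (Or.inr (hhullQ hv''m)) hrseg
  rcases hrmem with hrS | hrT
  · have hw1 : x + (1 : ℝ) • w ∈ convexHull ℝ (S : Set V) := by rw [one_smul, ← hzw]; exact hzS
    have hw2 : x - (1 : ℝ) • w ∈ convexHull ℝ (S : Set V) := by rw [one_smul]; exact hrS
    have hwdS : w ∈ dS := by
      have := (two_sided_mem hxP one_pos one_pos hw1 hw2).1
      simpa [hdS] using this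
    have hbv : b • v'' ∈ dS := by
      have : w - a • u'' ∈ dS := Submodule.sub_mem _ hwdS (Submodule.smul_mem _ a hu''S)
      rwa [hw, add_sub_cancel_left] at this
    exact hv''nS' (by
      have := Submodule.smul_mem _ b⁻¹ hbv
      rwa [smul_smul, inv_mul_cancel₀ hb0, one_smul] at this)
  · have hw1 : x + (1 : ℝ) • w ∈ convexHull ℝ (T : Set V) := by rw [one_smul, ← hzw]; exact hzT
    have hw2 : x - (1 : ℝ) • w ∈ convexHull ℝ (T : Set V) := by rw [one_smul]; exact hrT
    have hwdT : w ∈ dT := by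
      have := (two_sided_mem hxQ one_pos one_pos hw1 hw2).1
      simpa [hdT] using this
    have hau : a • u'' ∈ dT := by
      have : w - b • v'' ∈ dT := Submodule.sub_mem _ hwdT (Submodule.smul_mem _ b hv''T)
      rwa [hw, add_sub_cancel_right] at this
    exact hu''nT' (by
      have := Submodule.smul_mem _ a⁻¹ hau
      rwa [smul_smul, inv_mul_cancel₀ ha0, one_smul] at this)

lemma rep_pair {S : Finset V} {w₁ w₂ : V → ℝ} {y₁ y₂ : V} (h₁ : IsRep S w₁ y₁)
    (h₂ : IsRep S w₂ y₂) :
    IsRep S (fun t => (1/2) * w₁ t + (1/2) * w₂ t) ((1/2 : ℝ) • y₁ + (1/2 : ℝ) • y₂) := by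
  refine ⟨fun s hs => by
    have := h₁.1 s hs; have := h₂.1 s hs
    positivity, ?_, ?_⟩
  · rw [Finset.sum_add_distrib, ← Finset.mul_sum, ← Finset.mul_sum, h₁.2.1, h₂.2.1]
    norm_num
  · have e1 : ∀ s ∈ S, ((1/2) * w₁ s + (1/2) * w₂ s) • s
        = (1/2 : ℝ) • (w₁ s • s) + (1/2 : ℝ) • (w₂ s • s) := fun s _ => by
      rw [add_smul, mul_smul, mul_smul]
    rw [Finset.sum_congr rfl e1, Finset.sum_add_distrib, ← Finset.smul_sum, ← Finset.smul_sum,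
      h₁.2.2, h₂.2.2]

lemma main_nonempty {S T : Finset V} {F : Set V}
    (hU : Convex ℝ (convexHull ℝ (S : Set V) ∪ convexHull ℝ (T : Set V)))
    (hFne : F.Nonempty)
    (hFsub : F ⊆ convexHull ℝ (S : Set V) ∩ convexHull ℝ (T : Set V))
    (hFconv : Convex ℝ F)
    (hkey0 : ∀ x ∈ F, ∀ (wv : V) (ε : ℝ), 0 < ε →
      x + ε • wv ∈ convexHull ℝ (S : Set V) → x + ε • wv ∈ convexHull ℝ (T : Set V) →
      x - ε • wv ∈ convexHull ℝ (S : Set V) → x - ε • wv ∈ convexHull ℝ (T : Set V) →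
      x + ε • wv ∈ F ∧ x - ε • wv ∈ F) :
    ∃ G : Set V,
      ((G = convexHull ℝ (S : Set V) ∨ ∃ (f : V →ₗ[ℝ] ℝ) (c : ℝ), f ≠ 0 ∧
        (∀ y ∈ convexHull ℝ (S : Set V), f y ≤ c) ∧
          G = {y | y ∈ convexHull ℝ (S : Set V) ∧ f y = c}) ∨
       (G = convexHull ℝ (T : Set V) ∨ ∃ (f : V →ₗ[ℝ] ℝ) (c : ℝ), f ≠ 0 ∧
        (∀ y ∈ convexHull ℝ (T : Set V), f y ≤ c) ∧
          G = {y | y ∈ convexHull ℝ (T : Set V) ∧ f y = c})) ∧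
      affineSpan ℝ F = affineSpan ℝ G := by
  classical
  obtain ⟨y₀, hy₀⟩ := hFne
  set SF : Finset V := S.filter (fun s => ∃ y, y ∈ F ∧ ∃ w, IsRep S w y ∧ 0 < w s) with hSF
  set TF : Finset V := T.filter (fun t => ∃ y, y ∈ F ∧ ∃ w, IsRep T w y ∧ 0 < w t) with hTF
  have hrepS : ∀ y ∈ F, ∃ w, IsRep S w y ∧ ∀ s ∈ S, w s ≠ 0 → s ∈ SF := by
    intro y hy
    obtain ⟨w, hw⟩ := mem_hull_iff.1 (hFsub hy).1
    refine ⟨w, hw, fun s hs hne => Finset.mem_filter.2 ⟨hs, y, hy, w, hw,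
      lt_of_le_of_ne (hw.1 s hs) (Ne.symm hne)⟩⟩
  have hrepT : ∀ y ∈ F, ∃ w, IsRep T w y ∧ ∀ t ∈ T, w t ≠ 0 → t ∈ TF := by
    intro y hy
    obtain ⟨w, hw⟩ := mem_hull_iff.1 (hFsub hy).2
    refine ⟨w, hw, fun s hs hne => Finset.mem_filter.2 ⟨hs, y, hy, w, hw,
      lt_of_le_of_ne (hw.1 s hs) (Ne.symm hne)⟩⟩
  have hSFne : SF.Nonempty := by
    obtain ⟨w, hw, hsupp⟩ := hrepS y₀ hy₀
    have : ∃ s ∈ S, w s ≠ 0 := by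
      by_contra hcon
      push_neg at hcon
      have : ∑ s ∈ S, w s = 0 := Finset.sum_eq_zero hcon
      rw [hw.2.1] at this
      norm_num at this
    obtain ⟨s, hs, hws⟩ := this
    exact ⟨s, hsupp s hs hws⟩
  have hTFne : TF.Nonempty := by
    obtain ⟨w, hw, hsupp⟩ := hrepT y₀ hy₀
    have : ∃ t ∈ T, w t ≠ 0 := by
      by_contra hcon
      push_neg at hcon
      have : ∑ t ∈ T, w t = 0 := Finset.sum_eq_zero hcon
      rw [hw.2.1] at this
      norm_num at this
    obtain ⟨t, ht, hwt⟩ := this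
    exact ⟨t, hsupp t ht hwt⟩
  -- choice of witnesses for SF
  set YS : V → V := fun s =>
    if h : ∃ y, y ∈ F ∧ ∃ w, IsRep S w y ∧ 0 < w s then h.choose else 0 with hYSdef
  set WS : V → (V → ℝ) := fun s =>
    if h : ∃ y, y ∈ F ∧ ∃ w, IsRep S w y ∧ 0 < w s then h.choose_spec.2.choose else 0 with hWSdef
  have hYS : ∀ s ∈ SF, YS s ∈ F ∧ IsRep S (WS s) (YS s) ∧ 0 < WS s s := by
    intro s hs
    have h := (Finset.mem_filter.1 hs).2
    simp only [hYSdef, hWSdef, dif_pos h]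
    exact ⟨h.choose_spec.1, h.choose_spec.2.choose_spec.1, h.choose_spec.2.choose_spec.2⟩
  set YT : V → V := fun t =>
    if h : ∃ y, y ∈ F ∧ ∃ w, IsRep T w y ∧ 0 < w t then h.choose else 0 with hYTdef
  set WT : V → (V → ℝ) := fun t =>
    if h : ∃ y, y ∈ F ∧ ∃ w, IsRep T w y ∧ 0 < w t then h.choose_spec.2.choose else 0 with hWTdef
  have hYT : ∀ t ∈ TF, YT t ∈ F ∧ IsRep T (WT t) (YT t) ∧ 0 < WT t t := by
    intro t ht
    have h := (Finset.mem_filter.1 ht).2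
    simp only [hYTdef, hWTdef, dif_pos h]
    exact ⟨h.choose_spec.1, h.choose_spec.2.choose_spec.1, h.choose_spec.2.choose_spec.2⟩
  set nS : ℝ := (SF.card : ℝ) with hnS
  have hnSpos : 0 < nS := by
    simp only [hnS]
    exact_mod_cast Finset.card_pos.2 hSFne
  set nT : ℝ := (TF.card : ℝ) with hnT
  have hnTpos : 0 < nT := by
    simp only [hnT]
    exact_mod_cast Finset.card_pos.2 hTFne
  set xS : V := ∑ s ∈ SF, (nS⁻¹ : ℝ) • YS s with hxSdef
  set xT : V := ∑ t ∈ TF, (nT⁻¹ : ℝ) • YT t with hxTdef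
  have hsumS : ∑ _s ∈ SF, (nS⁻¹ : ℝ) = 1 := by
    rw [Finset.sum_const, nsmul_eq_mul, ← hnS, mul_inv_cancel₀ (ne_of_gt hnSpos)]
  have hsumT : ∑ _t ∈ TF, (nT⁻¹ : ℝ) = 1 := by
    rw [Finset.sum_const, nsmul_eq_mul, ← hnT, mul_inv_cancel₀ (ne_of_gt hnTpos)]
  have hnSinv : (0:ℝ) ≤ nS⁻¹ := inv_nonneg.2 hnSpos.le
  have hnTinv : (0:ℝ) ≤ nT⁻¹ := inv_nonneg.2 hnTpos.le
  have hxSF : xS ∈ F :=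
    hFconv.sum_mem (fun i _ => hnSinv) hsumS (fun i hi => (hYS i hi).1)
  have hxTF : xT ∈ F :=
    hFconv.sum_mem (fun i _ => hnTinv) hsumT (fun i hi => (hYT i hi).1)
  have hxSrep : IsRep S (fun t => ∑ s ∈ SF, nS⁻¹ * WS s t) xS :=
    rep_combo SF _ _ _ (fun i _ => hnSinv) hsumS (fun i hi => (hYS i hi).2.1)
  have hxTrep : IsRep T (fun u => ∑ t ∈ TF, nT⁻¹ * WT t u) xT :=
    rep_combo TF _ _ _ (fun i _ => hnTinv) hsumT (fun i hi => (hYT i hi).2.1)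
  set x : V := (1/2 : ℝ) • xS + (1/2 : ℝ) • xT with hxdef
  have hxF : x ∈ F := hFconv hxSF hxTF (by norm_num) (by norm_num) (by norm_num)
  -- S-side rep of x positive on SF
  obtain ⟨wT', hwT', _⟩ := hrepS xT hxTF
  have hxrepS : IsRep S (fun t => (1/2) * (∑ s ∈ SF, nS⁻¹ * WS s t) + (1/2) * wT' t) x :=
    rep_pair hxSrep hwT'
  obtain ⟨wS', hwS', _⟩ := hrepT xS hxSF
  have hxrepT : IsRep T (fun u => (1/2) * wS' u + (1/2) * (∑ t ∈ TF, nT⁻¹ * WT t u)) x := by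
    have := rep_pair hwS' hxTrep
    have hx2 : (1/2 : ℝ) • xS + (1/2 : ℝ) • xT = x := by rw [hxdef]
    rwa [hx2] at this
  have hxP : x ∈ convexHull ℝ (S : Set V) := hxrepS.mem_hull
  have hxQ : x ∈ convexHull ℝ (T : Set V) := hxrepT.mem_hull
  have hSFstar : SF ⊆ starS S x := by
    intro s hs
    refine support_subset_starS hxrepS (Finset.mem_filter.1 hs).1 (ne_of_gt ?_)
    have hpos : 0 < ∑ s' ∈ SF, nS⁻¹ * WS s' s := by
      refine Finset.sum_pos' (fun i hi => mul_nonneg hnSinv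
        ((hYS i hi).2.1.1 s (Finset.mem_filter.1 hs).1)) ⟨s, hs, ?_⟩
      exact mul_pos (inv_pos.2 hnSpos) (hYS s hs).2.2
    have hnn : 0 ≤ wT' s := hwT'.1 s (Finset.mem_filter.1 hs).1
    show (0:ℝ) < (1/2) * (∑ s' ∈ SF, nS⁻¹ * WS s' s) + (1/2) * wT' s
    linarith
  have hTFstar : TF ⊆ starS T x := by
    intro t ht
    refine support_subset_starS hxrepT (Finset.mem_filter.1 ht).1 (ne_of_gt ?_)
    have hpos : 0 < ∑ t' ∈ TF, nT⁻¹ * WT t' t := by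
      refine Finset.sum_pos' (fun i hi => mul_nonneg hnTinv
        ((hYT i hi).2.1.1 t (Finset.mem_filter.1 ht).1)) ⟨t, ht, ?_⟩
      exact mul_pos (inv_pos.2 hnTpos) (hYT t ht).2.2
    have hnn : 0 ≤ wS' t := hwS'.1 t (Finset.mem_filter.1 ht).1
    show (0:ℝ) < (1/2) * wS' t + (1/2) * (∑ t' ∈ TF, nT⁻¹ * WT t' t)
    linarith
  have hFstarP : F ⊆ convexHull ℝ ((starS S x : Finset V) : Set V) := by
    intro y hy
    obtain ⟨w, hw, hsupp⟩ := hrepS y hy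
    exact (hw.restrict starS_subset fun s hs hne => hSFstar (hsupp s hs hne)).mem_hull
  have hFstarQ : F ⊆ convexHull ℝ ((starS T x : Finset V) : Set V) := by
    intro y hy
    obtain ⟨w, hw, hsupp⟩ := hrepT y hy
    exact (hw.restrict starS_subset fun t ht hne => hTFstar (hsupp t ht hne)).mem_hull
  rcases dichotomy hxP hxQ hU with hsub | hsub
  · obtain ⟨G, hGface, hGspan⟩ := final_step hxP hxQ hxF hFstarP hsub
      (fun wv ε hε h1 h2 h3 h4 => hkey0 x hxF wv ε hε h1 h2 h3 h4)
    exact ⟨G, Or.inl hGface, hGspan⟩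
  · obtain ⟨G, hGface, hGspan⟩ := final_step hxQ hxP hxF hFstarQ hsub
      (fun wv ε hε h1 h2 h3 h4 => hkey0 x hxF wv ε hε h2 h1 h4 h3)
    exact ⟨G, Or.inr hGface, hGspan⟩

end Star

open Pointwise

/-- if `P ∪ Q` is convex and `F` is a `k`-dimensional face of `P ∩ Q`,
then some `k`-dimensional face `F'` of `P` or of `Q` has the same affine hull as `F`. -/
theorem face_of_inter {d k : ℕ} (P Q F : Set (EuclideanSpace ℝ (Fin d)))
    (hP : IsPolytope P) (hQ : IsPolytope Q) (hU : Convex ℝ (P ∪ Q))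
    (hF : IsFaceOf F (P ∩ Q)) (hdim : dimSet F = k) :
    ∃ F' : Set (EuclideanSpace ℝ (Fin d)),
      (IsFaceOf F' P ∨ IsFaceOf F' Q) ∧ dimSet F' = k ∧
      affineSpan ℝ F = affineSpan ℝ F' := by
  classical
  obtain ⟨S, hSne, rfl⟩ := hP
  obtain ⟨T, hTne, rfl⟩ := hQ
  -- the two hulls
  rcases hF with hFeq | ⟨f, c, hfne, hfb, hFeq⟩
  · -- F = P ∩ Q, which is nonempty
    have hSclosed : IsClosed (convexHull ℝ (S : Set (EuclideanSpace ℝ (Fin d)))) :=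
      (S.finite_toSet.isCompact_convexHull ℝ).isClosed
    have hTclosed : IsClosed (convexHull ℝ (T : Set (EuclideanSpace ℝ (Fin d)))) :=
      (T.finite_toSet.isCompact_convexHull ℝ).isClosed
    obtain ⟨s, hs⟩ := hSne
    obtain ⟨t, ht⟩ := hTne
    obtain ⟨z₀, _, hz₀S, hz₀T⟩ := crossing hSclosed hTclosed hU
      (subset_convexHull ℝ (S : Set (EuclideanSpace ℝ (Fin d))) hs) (subset_convexHull ℝ (T : Set (EuclideanSpace ℝ (Fin d))) ht)
    have hFne : F.Nonempty := ⟨z₀, by rw [hFeq]; exact ⟨hz₀S, hz₀T⟩⟩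
    have hFsub : F ⊆ convexHull ℝ (S : Set (EuclideanSpace ℝ (Fin d))) ∩ convexHull ℝ (T : Set (EuclideanSpace ℝ (Fin d))) := hFeq.subset
    have hFconv : Convex ℝ F := by
      rw [hFeq]
      exact (convex_convexHull ℝ _).inter (convex_convexHull ℝ _)
    have hkey0 : ∀ x ∈ F, ∀ (wv : EuclideanSpace ℝ (Fin d)) (ε : ℝ), 0 < ε →
        x + ε • wv ∈ convexHull ℝ (S : Set (EuclideanSpace ℝ (Fin d))) → x + ε • wv ∈ convexHull ℝ (T : Set (EuclideanSpace ℝ (Fin d))) →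
        x - ε • wv ∈ convexHull ℝ (S : Set (EuclideanSpace ℝ (Fin d))) → x - ε • wv ∈ convexHull ℝ (T : Set (EuclideanSpace ℝ (Fin d))) →
        x + ε • wv ∈ F ∧ x - ε • wv ∈ F := by
      intro x _ wv ε _ h1 h2 h3 h4
      rw [hFeq]
      exact ⟨⟨h1, h2⟩, ⟨h3, h4⟩⟩
    obtain ⟨G, hGface, hGspan⟩ := main_nonempty hU hFne hFsub hFconv hkey0
    refine ⟨G, ?_, ?_, hGspan⟩
    · exact hGface
    · simp only [dimSet] at hdim ⊢
      rw [← hGspan]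
      exact hdim
  · -- F is cut out by a supporting functional
    by_cases hFne : F.Nonempty
    · have hFsub : F ⊆ convexHull ℝ (S : Set (EuclideanSpace ℝ (Fin d))) ∩ convexHull ℝ (T : Set (EuclideanSpace ℝ (Fin d))) :=
        fun y hy => (hFeq ▸ hy).1
      have hFconv : Convex ℝ F := by
        rw [hFeq]
        have : {y : EuclideanSpace ℝ (Fin d) | y ∈ convexHull ℝ (S : Set (EuclideanSpace ℝ (Fin d))) ∩ convexHull ℝ (T : Set (EuclideanSpace ℝ (Fin d))) ∧ f y = c}
            = (convexHull ℝ (S : Set (EuclideanSpace ℝ (Fin d))) ∩ convexHull ℝ (T : Set (EuclideanSpace ℝ (Fin d)))) ∩ {y | f y = c} := rfl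
        rw [this]
        exact ((convex_convexHull ℝ _).inter (convex_convexHull ℝ _)).inter
          (convex_hyperplane ⟨f.map_add, f.map_smul⟩ c)
      have hkey0 : ∀ x ∈ F, ∀ (wv : EuclideanSpace ℝ (Fin d)) (ε : ℝ), 0 < ε →
          x + ε • wv ∈ convexHull ℝ (S : Set (EuclideanSpace ℝ (Fin d))) → x + ε • wv ∈ convexHull ℝ (T : Set (EuclideanSpace ℝ (Fin d))) →
          x - ε • wv ∈ convexHull ℝ (S : Set (EuclideanSpace ℝ (Fin d))) → x - ε • wv ∈ convexHull ℝ (T : Set (EuclideanSpace ℝ (Fin d))) →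
          x + ε • wv ∈ F ∧ x - ε • wv ∈ F := by
        intro x hx wv ε hε h1 h2 h3 h4
        have hxc : f x = c := (hFeq ▸ hx).2
        have hb1 : f (x + ε • wv) ≤ c := hfb _ ⟨h1, h2⟩
        have hb2 : f (x - ε • wv) ≤ c := hfb _ ⟨h3, h4⟩
        have e1 : f (x + ε • wv) = f x + ε * f wv := by rw [map_add, map_smul, smul_eq_mul]
        have e2 : f (x - ε • wv) = f x - ε * f wv := by rw [map_sub, map_smul, smul_eq_mul]
        have hfwv : f wv = 0 := by
          rw [e1, hxc] at hb1
          rw [e2, hxc] at hb2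
          nlinarith
        constructor
        · rw [hFeq]
          exact ⟨⟨h1, h2⟩, by rw [e1, hxc, hfwv, mul_zero, add_zero]⟩
        · rw [hFeq]
          exact ⟨⟨h3, h4⟩, by rw [e2, hxc, hfwv, mul_zero, sub_zero]⟩
      obtain ⟨G, hGface, hGspan⟩ := main_nonempty hU hFne hFsub hFconv hkey0
      refine ⟨G, hGface, ?_, hGspan⟩
      simp only [dimSet] at hdim ⊢
      rw [← hGspan]
      exact hdim
    · -- F is empty
      have hF0 : F = ∅ := Set.not_nonempty_iff_eq_empty.1 hFne
      refine ⟨∅, Or.inl (Or.inr ⟨f, S.sup' hSne f + 1, hfne, ?_, ?_⟩), ?_, by rw [hF0]⟩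
      · intro y hy
        have hb : f y ≤ S.sup' hSne f :=
          bound_hull (fun s hs => Finset.le_sup' f hs) y hy
        linarith
      · ext y
        simp only [Set.mem_empty_iff_false, Set.mem_setOf_eq, false_iff]
        rintro ⟨hy1, hy2⟩
        have hb : f y ≤ S.sup' hSne f :=
          bound_hull (fun s hs => Finset.le_sup' f hs) y hy1
        linarith
      · rw [← hF0]
        exact hdim
end

section
/- Let P and Q be convex polytopes in R^d whose union P ∪ Q is convex. Let E be a k-dimensional face of P such that no face of Q has the same affine hull direction (no face of Q is collinear with E). Then E is a k-dimensional face of P ∩ Q or of P ∪ Q. -/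
open Pointwise

/-- A polytope is closed. -/
lemma IsPolytope.isClosed' {d : ℕ} {P : Set (EuclideanSpace ℝ (Fin d))}
    (h : IsPolytope P) : IsClosed P := by
  obtain ⟨S, -, rfl⟩ := h
  exact (S.finite_toSet.isCompact_convexHull (𝕜 := ℝ)).isClosed

/-- Key lemma: if `E ∪ F` is convex, `F` is closed, and `e ∈ E \ F`, then
`affineSpan (E ∪ F) = affineSpan E`. -/
lemma affineSpan_union_eq_left {d : ℕ} {E F : Set (EuclideanSpace ℝ (Fin d))}
    (hF : IsClosed F) (hU : Convex ℝ (E ∪ F)) {e : EuclideanSpace ℝ (Fin d)}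
    (he : e ∈ E) (heF : e ∉ F) :
    affineSpan ℝ (E ∪ F) = affineSpan ℝ E := by
  refine le_antisymm (affineSpan_le.mpr ?_) (affineSpan_mono ℝ Set.subset_union_left)
  intro g hg
  obtain ⟨ε, hε, hball⟩ := Metric.isOpen_iff.mp hF.isOpen_compl e heF
  by_cases hge : g = e
  · exact hge ▸ subset_affineSpan ℝ E he
  have hdist : 0 < dist g e := dist_pos.mpr hge
  set t : ℝ := min (ε / (2 * dist g e)) 1 with ht
  have ht0 : 0 < t := lt_min (by positivity) one_pos
  have ht1 : t ≤ 1 := min_le_right _ _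
  set x := e + t • (g - e) with hx
  have hxmem : x ∈ E ∪ F := by
    have hcomb : (1 - t) • e + t • g ∈ E ∪ F :=
      hU (Set.mem_union_left F he) hg (by linarith) ht0.le (by ring)
    convert hcomb using 1
    rw [hx]; module
  have hxE : x ∈ E := by
    rcases hxmem with h | h
    · exact h
    · exfalso
      refine hball ?_ h
      have hxd : dist x e = t * dist g e := by
        rw [hx, dist_eq_norm]
        simp [norm_smul, abs_of_pos ht0, dist_eq_norm]
      have htle : t ≤ ε / (2 * dist g e) := min_le_left _ _
      have : t * dist g e ≤ ε / 2 := by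
        rw [div_mul_eq_div_div_swap] at htle
        calc t * dist g e ≤ (ε / dist g e / 2) * dist g e := by nlinarith
          _ = ε / 2 := by field_simp
      rw [Metric.mem_ball, hxd]
      linarith
  have hxdir : x - e ∈ (affineSpan ℝ E).direction := by
    have := AffineSubspace.vsub_mem_direction (subset_affineSpan ℝ E hxE)
      (subset_affineSpan ℝ E he)
    simpa using this
  have hgdir : g - e ∈ (affineSpan ℝ E).direction := by
    have h2 : t⁻¹ • (x - e) = g - e := by
      rw [hx]
      rw [add_sub_cancel_left, smul_smul, inv_mul_cancel₀ ht0.ne', one_smul]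
    rw [← h2]
    exact Submodule.smul_mem _ _ hxdir
  have := AffineSubspace.vadd_mem_of_mem_direction hgdir (subset_affineSpan ℝ E he)
  simpa using this

/-- let `P ∪ Q` be convex and let `E` be a `k`-dimensional face of `P` such
that no face of `Q` is collinear with `E` (i.e. no face of `Q` has the same direction of
its affine hull). Then `E` is a `k`-dimensional face of `P ∩ Q` or of `P ∪ Q`. -/
theorem face_not_collinear {d k : ℕ} (P Q E : Set (EuclideanSpace ℝ (Fin d)))
    (hP : IsPolytope P) (hQ : IsPolytope Q) (hU : Convex ℝ (P ∪ Q))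
    (hE : IsFaceOf E P) (hdim : dimSet E = k)
    (hnc : ∀ F : Set (EuclideanSpace ℝ (Fin d)), IsFaceOf F Q →
      (affineSpan ℝ F).direction ≠ (affineSpan ℝ E).direction) :
    (IsFaceOf E (P ∩ Q) ∧ dimSet E = k) ∨ (IsFaceOf E (P ∪ Q) ∧ dimSet E = k) := by
  have hPc : IsClosed P := hP.isClosed'
  have hQc : IsClosed Q := hQ.isClosed'
  rcases hE with rfl | ⟨f, c, hf0, hfP, hEeq⟩
  · -- E = P
    by_cases hPQ : E ⊆ Q
    · left
      exact ⟨Or.inl (Set.inter_eq_self_of_subset_left hPQ).symm, hdim⟩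
    by_cases hQP : Q ⊆ E
    · right
      exact ⟨Or.inl (Set.union_eq_self_of_subset_right hQP).symm, hdim⟩
    · exfalso
      obtain ⟨p, hp, hpQ⟩ := Set.not_subset.mp hPQ
      obtain ⟨q, hq, hqP⟩ := Set.not_subset.mp hQP
      have h1 : affineSpan ℝ (E ∪ Q) = affineSpan ℝ E :=
        affineSpan_union_eq_left hQc hU hp hpQ
      have h2 : affineSpan ℝ (Q ∪ E) = affineSpan ℝ Q :=
        affineSpan_union_eq_left hPc (Set.union_comm E Q ▸ hU) hq hqP
      rw [Set.union_comm, h1] at h2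
      exact hnc Q (Or.inl rfl) (by rw [h2])
  · -- E = {x ∈ P | f x = c}
    subst hEeq
    have hfcont : Continuous f := f.continuous_of_finiteDimensional
    by_cases hA : ∃ q ∈ Q, c < f q
    · -- some point of Q is strictly above the hyperplane; then E ⊆ Q
      obtain ⟨q, hqQ, hqf⟩ := hA
      have hEQ : ∀ e ∈ {x | x ∈ P ∧ f x = c}, e ∈ Q := by
        rintro e ⟨heP, hef⟩
        have hmem : ∀ n : ℕ, e + (1 / ((n : ℝ) + 1)) • (q - e) ∈ Q := by
          intro n
          set t : ℝ := 1 / ((n : ℝ) + 1) with htdef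
          have ht0 : 0 < t := by positivity
          have ht1 : t ≤ 1 := by
            rw [htdef, div_le_one (by positivity)]
            linarith [Nat.cast_nonneg (α := ℝ) n]
          have hunion : e + t • (q - e) ∈ P ∪ Q := by
            have hcomb : (1 - t) • e + t • q ∈ P ∪ Q :=
              hU (Set.mem_union_left Q heP) (Set.mem_union_right P hqQ)
                (by linarith) ht0.le (by ring)
            convert hcomb using 1
            module
          have hfval : f (e + t • (q - e)) = c + t * (f q - c) := by
            simp [map_add, map_smul, map_sub, hef, smul_eq_mul]
          rcases hunion with h | h
          · exfalso
            have := hfP _ h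
            rw [hfval] at this
            nlinarith
          · exact h
        have htend : Filter.Tendsto (fun n : ℕ => e + (1 / ((n : ℝ) + 1)) • (q - e))
            Filter.atTop (nhds e) := by
          have h1 := tendsto_one_div_add_atTop_nhds_zero_nat (𝕜 := ℝ)
          have h2 := (h1.smul_const (q - e)).const_add e
          simpa using h2
        exact hQc.mem_of_tendsto htend (Filter.Eventually.of_forall hmem)
      left
      refine ⟨Or.inr ⟨f, c, hf0, fun x hx => hfP x hx.1, ?_⟩, hdim⟩
      ext x
      constructor
      · rintro ⟨hxP, hxf⟩
        exact ⟨⟨hxP, hEQ x ⟨hxP, hxf⟩⟩, hxf⟩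
      · rintro ⟨⟨hxP, _⟩, hxf⟩
        exact ⟨hxP, hxf⟩
    · -- f ≤ c on all of Q
      push_neg at hA
      set F : Set (EuclideanSpace ℝ (Fin d)) := {x | x ∈ Q ∧ f x = c} with hFdef
      have hFface : IsFaceOf F Q := Or.inr ⟨f, c, hf0, hA, rfl⟩
      have hGU : {x | x ∈ P ∧ f x = c} ∪ F = (P ∪ Q) ∩ {x | f x = c} := by
        ext x; simp [hFdef]; tauto
      have hGconv : Convex ℝ ({x | x ∈ P ∧ f x = c} ∪ F) := by
        rw [hGU]
        exact hU.inter (convex_hyperplane f.isLinear c)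
      have hEclosed : IsClosed {x | x ∈ P ∧ f x = c} :=
        hPc.inter (isClosed_eq hfcont continuous_const)
      have hFclosed : IsClosed F :=
        hQc.inter (isClosed_eq hfcont continuous_const)
      by_cases hEF : {x | x ∈ P ∧ f x = c} ⊆ F
      · -- E ⊆ Q, so E is a face of P ∩ Q
        left
        refine ⟨Or.inr ⟨f, c, hf0, fun x hx => hfP x hx.1, ?_⟩, hdim⟩
        ext x
        constructor
        · rintro ⟨hxP, hxf⟩
          exact ⟨⟨hxP, (hEF ⟨hxP, hxf⟩).1⟩, hxf⟩
        · rintro ⟨⟨hxP, _⟩, hxf⟩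
          exact ⟨hxP, hxf⟩
      by_cases hFE : F ⊆ {x | x ∈ P ∧ f x = c}
      · -- F ⊆ E, so E is a face of P ∪ Q
        right
        refine ⟨Or.inr ⟨f, c, hf0, ?_, ?_⟩, hdim⟩
        · rintro x (hx | hx)
          · exact hfP x hx
          · exact hA x hx
        · ext x
          constructor
          · rintro ⟨hxP, hxf⟩
            exact ⟨Set.mem_union_left Q hxP, hxf⟩
          · rintro ⟨hx, hxf⟩
            rcases hx with hx | hx
            · exact ⟨hx, hxf⟩
            · exact hFE ⟨hx, hxf⟩
      · exfalso
        obtain ⟨e, he, heF⟩ := Set.not_subset.mp hEF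
        obtain ⟨q, hq, hqE⟩ := Set.not_subset.mp hFE
        have h1 : affineSpan ℝ ({x | x ∈ P ∧ f x = c} ∪ F) =
            affineSpan ℝ {x | x ∈ P ∧ f x = c} :=
          affineSpan_union_eq_left hFclosed hGconv he heF
        have h2 : affineSpan ℝ (F ∪ {x | x ∈ P ∧ f x = c}) = affineSpan ℝ F :=
          affineSpan_union_eq_left hEclosed (Set.union_comm _ _ ▸ hGconv) hq hqE
        rw [Set.union_comm, h1] at h2
        exact hnc F hFface (by rw [h2])
end

section
/- Let P and Q be convex polytopes in R^d with P ∪ Q convex, and let H be a supporting hyperplane of P ∩ Q. Then at least one of P, Q lies entirely in one of the closed half-spaces determined by H. -/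
open Pointwise

/-- let `P ∪ Q` be convex and let `{f = c}` be a supporting hyperplane of
`P ∩ Q`. Then at least one of `P`, `Q` lies entirely in one of the two closed half-spaces
determined by this hyperplane. -/
theorem supporting_hyperplane_side {d : ℕ} (P Q : Set (EuclideanSpace ℝ (Fin d)))
    (hP : IsPolytope P) (hQ : IsPolytope Q) (hU : Convex ℝ (P ∪ Q))
    (f : EuclideanSpace ℝ (Fin d) →ₗ[ℝ] ℝ) (c : ℝ) (hf : f ≠ 0)
    (hside : ∀ x ∈ P ∩ Q, f x ≤ c) (htouch : ∃ x ∈ P ∩ Q, f x = c) :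
    (∀ x ∈ P, f x ≤ c) ∨ (∀ x ∈ P, c ≤ f x) ∨
    (∀ x ∈ Q, f x ≤ c) ∨ (∀ x ∈ Q, c ≤ f x) := by
  by_contra h
  push_neg at h
  obtain ⟨⟨p, hpP, hpc⟩, -, ⟨q, hqQ, hqc⟩, -⟩ := h
  -- P and Q are closed
  obtain ⟨S, -, hSP⟩ := hP
  obtain ⟨T, -, hTQ⟩ := hQ
  have hPc : IsClosed P := by
    rw [hSP]; exact (S.finite_toSet.isCompact_convexHull ℝ).isClosed
  have hQc : IsClosed Q := by
    rw [hTQ]; exact (T.finite_toSet.isCompact_convexHull ℝ).isClosed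
  -- the segment from p to q lies in P ∪ Q
  set g : ℝ →ᵃ[ℝ] EuclideanSpace ℝ (Fin d) := AffineMap.lineMap p q with hg
  have hgc : Continuous g := g.continuous_of_finiteDimensional
  have hseg : ∀ t ∈ Set.Icc (0:ℝ) 1, g t ∈ P ∪ Q := by
    intro t ht
    have : g t ∈ segment ℝ p q := by
      rw [segment_eq_image_lineMap]; exact ⟨t, ht, rfl⟩
    exact hU.segment_subset (Or.inl hpP) (Or.inr hqQ) this
  -- connectedness: some point on the segment is in both P and Q
  have hconn : (Set.Icc (0:ℝ) 1 ∩ (g ⁻¹' P ∩ g ⁻¹' Q)).Nonempty := by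
    refine isPreconnected_closed_iff.mp isPreconnected_Icc (g ⁻¹' P) (g ⁻¹' Q)
      (hPc.preimage hgc) (hQc.preimage hgc) ?_ ?_ ?_
    · intro t ht; exact hseg t ht
    · exact ⟨0, ⟨le_refl 0, zero_le_one⟩, by simpa [hg] using hpP⟩
    · exact ⟨1, ⟨zero_le_one, le_refl 1⟩, by simpa [hg] using hqQ⟩
  obtain ⟨t, ht01, htP, htQ⟩ := hconn
  have hle := hside (g t) ⟨htP, htQ⟩
  have hval : f (g t) = f p + t * (f q - f p) := by
    simp [hg, AffineMap.lineMap_apply, map_add, map_smul, map_sub, smul_eq_mul]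
    ring
  rw [hval] at hle
  obtain ⟨ht0, ht1⟩ := ht01
  nlinarith [mul_nonneg ht0 (sub_pos.mpr hqc).le, mul_nonneg (sub_nonneg.mpr ht1) (sub_pos.mpr hpc).le]
end

section
/- Let C ⊆ R^d be a closed convex cone and let W ⊆ R^d be a linear subspace of dimension k ≥ 1 written as W = W⁺ ∪ W⁻, where W⁺ and W⁻ are the two closed half-subspaces of W bounded by a (k−1)-dimensional linear subspace V = W⁺ ∩ W⁻. Suppose there exist nonzero non-collinear points x ∈ C ∩ W⁺ and y ∈ C ∩ W⁻. Then C ∩ V ≠ {0}. -/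
open Pointwise

/-- let `C ⊆ ℝ^d` be a closed convex cone, `W` a linear subspace of
dimension `k ≥ 1`, `V ⊆ W` a `(k-1)`-dimensional subspace cutting `W` into the two closed
half-subspaces `W⁺ = {x ∈ W | f x ≥ 0}` and `W⁻ = {x ∈ W | f x ≤ 0}`.  If there are
nonzero non-collinear points `x ∈ C ∩ W⁺` and `y ∈ C ∩ W⁻`, then `C ∩ V ≠ {0}`. -/
theorem cone_meets_boundary_subspace {d k : ℕ} (hk : 1 ≤ k)
    (C : Set (EuclideanSpace ℝ (Fin d)))
    (hconv : Convex ℝ C) (hcone : ∀ t : ℝ, 0 < t → t • C = C) (hcl : IsClosed C)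
    (W V : Submodule ℝ (EuclideanSpace ℝ (Fin d))) (hVW : V ≤ W)
    (hdW : Module.finrank ℝ W = k) (hdV : Module.finrank ℝ V = k - 1)
    (f : EuclideanSpace ℝ (Fin d) →ₗ[ℝ] ℝ)
    (hV : (V : Set (EuclideanSpace ℝ (Fin d))) =
      (W : Set (EuclideanSpace ℝ (Fin d))) ∩ {x | f x = 0})
    (x y : EuclideanSpace ℝ (Fin d))
    (hxC : x ∈ C) (hxW : x ∈ W) (hxf : 0 ≤ f x) (hx0 : x ≠ 0)
    (hyC : y ∈ C) (hyW : y ∈ W) (hyf : f y ≤ 0) (hy0 : y ≠ 0)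
    (hnc : ∀ t : ℝ, y ≠ t • x) :
    ∃ z : EuclideanSpace ℝ (Fin d), z ∈ C ∧ z ∈ V ∧ z ≠ 0 := by
  have memV : ∀ z : EuclideanSpace ℝ (Fin d), z ∈ W → f z = 0 → z ∈ V := by
    intro z hzW hzf
    have : z ∈ (V : Set (EuclideanSpace ℝ (Fin d))) := by
      rw [hV]; exact ⟨hzW, hzf⟩
    exact this
  rcases eq_or_lt_of_le hxf with hfx0 | hfx
  · exact ⟨x, hxC, memV x hxW hfx0.symm, hx0⟩
  rcases eq_or_lt_of_le hyf with hfy0 | hfy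
  · exact ⟨y, hyC, memV y hyW hfy0, hy0⟩
  set a : ℝ := f x with ha
  set b : ℝ := -f y with hb
  have hbpos : 0 < b := by simp [hb]; linarith
  have htpos : 0 < a + b := by linarith
  refine ⟨b • x + a • y, ?_, ?_, ?_⟩
  · have hu : (b / (a + b)) • x + (a / (a + b)) • y ∈ C := by
      apply hconv hxC hyC (by positivity) (by positivity)
      field_simp; ring
    have : (a + b) • ((b / (a + b)) • x + (a / (a + b)) • y) ∈ (a + b) • C :=
      Set.smul_mem_smul_set hu
    rw [hcone _ htpos] at this
    have heq : (a + b) • ((b / (a + b)) • x + (a / (a + b)) • y) = b • x + a • y := by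
      rw [smul_add, smul_smul, smul_smul]
      congr 1 <;> congr 1 <;> field_simp
    rwa [heq] at this
  · refine memV _ (W.add_mem (W.smul_mem _ hxW) (W.smul_mem _ hyW)) ?_
    simp [hb]; ring
  · intro h
    apply hnc (-(b / a))
    have hay : a • y = -(b • x) := by
      rw [eq_neg_iff_add_eq_zero, add_comm]; exact h
    have : y = a⁻¹ • (a • y) := by
      rw [smul_smul, inv_mul_cancel₀ hfx.ne', one_smul]
    rw [this, hay, smul_neg, smul_smul, ← neg_smul]
    congr 1
    field_simp
end

section
/- For a polyhedral cone C ⊆ R^d, the alternating sum over dimensions of the face numbers satisfies: sum over i from 0 to d of (−1)^i f_i(C) equals (−1)^{dim C} if C is a linear subspace, and equals 0 otherwise, where f_i(C) is the number of i-dimensional faces of C. -/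
open RealInnerProductSpace

/-- A polyhedral cone: a finite intersection of closed linear half-spaces. -/
def IsPolyhedralCone {d : ℕ} (C : Set (EuclideanSpace ℝ (Fin d))) : Prop :=
  ∃ S : Finset (EuclideanSpace ℝ (Fin d)), C = {x | ∀ a ∈ S, ⟪a, x⟫ ≤ 0}

/-- A face of a cone `C`: either `C` itself or the intersection of `C` with a supporting
hyperplane through the origin. -/
def IsConeFaceOf {d : ℕ} (F C : Set (EuclideanSpace ℝ (Fin d))) : Prop :=
  F = C ∨ ∃ a : EuclideanSpace ℝ (Fin d), a ≠ 0 ∧ (∀ x ∈ C, ⟪a, x⟫ ≤ 0) ∧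
    F = {x | x ∈ C ∧ ⟪a, x⟫ = 0}

/-- The dimension of a cone: the dimension of its linear span. -/
noncomputable def coneDim {d : ℕ} (C : Set (EuclideanSpace ℝ (Fin d))) : ℕ :=
  Module.finrank ℝ (Submodule.span ℝ C)

/-- The number of (nonempty) `i`-dimensional faces of `C`. -/
noncomputable def fcount {d : ℕ} (i : ℕ) (C : Set (EuclideanSpace ℝ (Fin d))) : ℕ :=
  Set.ncard {F : Set (EuclideanSpace ℝ (Fin d)) |
    IsConeFaceOf F C ∧ F.Nonempty ∧ coneDim F = i}

set_option linter.unusedSectionVars false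
set_option linter.unusedVariables false
set_option maxHeartbeats 1000000
set_option linter.unreachableTactic false
set_option linter.unusedTactic false

open RealInnerProductSpace Module

namespace EulerCone

variable {E : Type} [NormedAddCommGroup E] [InnerProductSpace ℝ E] [FiniteDimensional ℝ E]

open Classical Finset Submodule

/-- The polyhedral cone determined by a finite set of outer normals. -/
def Kone (S : Finset E) : Set E := {x | ∀ s ∈ S, ⟪s, x⟫ ≤ 0}

/-- The set of constraints tight at `x`. -/
noncomputable def tset (S : Finset E) (x : E) : Finset E := S.filter fun s => ⟪s, x⟫ = 0

/-- General face predicate. -/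
def IsFaceG (F C : Set E) : Prop :=
  F = C ∨ ∃ a : E, a ≠ 0 ∧ (∀ x ∈ C, ⟪a, x⟫ ≤ 0) ∧ F = {x | x ∈ C ∧ ⟪a, x⟫ = 0}

noncomputable def cdim (C : Set E) : ℕ := finrank ℝ (Submodule.span ℝ C)

/-- The face of the cone given by requiring the constraints in `J` to be tight. -/
def FJ (S J : Finset E) : Set E := {x | x ∈ Kone S ∧ ∀ s ∈ J, ⟪s, x⟫ = 0}

/-- Canonical tight sets: those realized exactly by some point of the cone. -/
noncomputable def Jcan (S : Finset E) : Finset (Finset E) :=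
  S.powerset.filter fun J => ∃ x ∈ Kone S, tset S x = J

noncomputable def rk (J : Finset E) : ℕ := finrank ℝ (Submodule.span ℝ (J : Set E))

noncomputable def chi (S : Finset E) : ℤ :=
  ∑ J ∈ Jcan S, (-1) ^ (finrank ℝ E - rk J)

def isLin (C : Set E) : Prop := ∃ V : Submodule ℝ E, C = (V : Set E)

noncomputable def tgt (C : Set E) : ℤ := if isLin C then (-1) ^ (cdim C) else 0

/- ### basic facts -/

lemma zero_mem_Kone (S : Finset E) : (0 : E) ∈ Kone S := by
  intro s _; simp

lemma Kone_add {S : Finset E} {x y : E} (hx : x ∈ Kone S) (hy : y ∈ Kone S) :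
    x + y ∈ Kone S := by
  intro s hs
  rw [inner_add_right]
  exact add_nonpos (hx s hs) (hy s hs)

lemma Kone_smul {S : Finset E} {x : E} (hx : x ∈ Kone S) {c : ℝ} (hc : 0 ≤ c) :
    c • x ∈ Kone S := by
  intro s hs
  rw [real_inner_smul_right]
  exact mul_nonpos_of_nonneg_of_nonpos hc (hx s hs)

lemma mem_tset {S : Finset E} {x s : E} : s ∈ tset S x ↔ s ∈ S ∧ ⟪s, x⟫ = 0 := by
  simp [tset]

lemma tset_subset (S : Finset E) (x : E) : tset S x ⊆ S := Finset.filter_subset _ _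

lemma inner_neg_of_not_tset {S : Finset E} {x s : E} (hx : x ∈ Kone S) (hs : s ∈ S)
    (h : s ∉ tset S x) : ⟪s, x⟫ < 0 :=
  lt_of_le_of_ne (hx s hs) (by simpa [mem_tset, hs] using h)

lemma FJ_subset_Kone (S J : Finset E) : FJ S J ⊆ Kone S := fun _ h => h.1

lemma mem_FJ_tset {S : Finset E} {x : E} (hx : x ∈ Kone S) : x ∈ FJ S (tset S x) :=
  ⟨hx, fun s hs => (mem_tset.1 hs).2⟩

/-- epsilon helper: finitely many strict inequalities can absorb a perturbation. -/
lemma exists_eps (T : Finset E) (f g : E → ℝ) (hf : ∀ s ∈ T, f s < 0) :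
    ∃ ε : ℝ, 0 < ε ∧ ∀ s ∈ T, f s + ε * g s < 0 := by
  classical
  induction T using Finset.induction with
  | empty => exact ⟨1, one_pos, by simp⟩
  | insert _ _ hnot ih =>
    rename_i a T'
    obtain ⟨ε, hε, hε'⟩ := ih (fun s hs => hf s (Finset.mem_insert_of_mem hs))
    have ha : f a < 0 := hf a (Finset.mem_insert_self _ _)
    -- choose ε' ≤ ε with ε' * g a < -f a
    obtain ⟨ε', hε'pos, hε'le, hlt⟩ :
        ∃ ε' : ℝ, 0 < ε' ∧ ε' ≤ ε ∧ f a + ε' * g a < 0 := by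
      rcases le_or_gt (g a) 0 with hg | hg
      · refine ⟨ε, hε, le_rfl, ?_⟩
        have : ε * g a ≤ 0 := mul_nonpos_of_nonneg_of_nonpos hε.le hg
        linarith
      · refine ⟨min ε ((-f a) / (2 * g a)), ?_, min_le_left _ _, ?_⟩
        · exact lt_min hε (div_pos (by linarith) (by linarith))
        · have h1 : min ε ((-f a) / (2 * g a)) ≤ (-f a) / (2 * g a) := min_le_right _ _
          have h2 : min ε ((-f a) / (2 * g a)) * g a ≤ ((-f a) / (2 * g a)) * g a :=
            mul_le_mul_of_nonneg_right h1 hg.le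
          have h3 : ((-f a) / (2 * g a)) * g a = -f a / 2 := by
            field_simp
          nlinarith
    refine ⟨ε', hε'pos, fun s hs => ?_⟩
    rcases Finset.mem_insert.1 hs with rfl | hs
    · exact hlt
    · have h1 := hε' s hs
      rcases le_or_gt (g s) 0 with hg | hg
      · have h2 : ε' * g s ≤ 0 := mul_nonpos_of_nonneg_of_nonpos hε'pos.le hg
        have h3 := hf s (Finset.mem_insert_of_mem hs)
        linarith
      · have h2 : ε' * g s ≤ ε * g s := mul_le_mul_of_nonneg_right hε'le hg.le
        linarith

/-- Span of a canonical face equals the orthogonal complement of span of its tight set. -/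
lemma span_FJ {S : Finset E} {x : E} (hx : x ∈ Kone S) :
    Submodule.span ℝ (FJ S (tset S x)) = (Submodule.span ℝ ((tset S x : Set E)))ᗮ := by
  apply le_antisymm
  · rw [Submodule.span_le]
    intro y hy
    rw [SetLike.mem_coe, Submodule.mem_orthogonal]
    intro u hu
    induction hu using Submodule.span_induction with
    | mem s hs =>
      first
      | exact hy.2 s hs
      | (rw [real_inner_comm]; exact hy.2 s hs)
    | zero => simp
    | add u v _ _ hu hv => rw [inner_add_left, hu, hv]; ring
    | smul c u _ hu => rw [inner_smul_left, hu]; simp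
  · intro v hv
    -- v ⊥ span(tset); show x + ε v and x are in FJ, so v ∈ span
    have hvperp : ∀ s ∈ tset S x, ⟪s, v⟫ = 0 := by
      intro s hs
      have h0 := (Submodule.mem_orthogonal _ _).1 hv s (Submodule.subset_span hs)
      first
      | exact h0
      | (rw [real_inner_comm]; exact h0)
    obtain ⟨ε, hε, hεlt⟩ := exists_eps (S \ tset S x) (fun s => ⟪s, x⟫) (fun s => ⟪s, v⟫)
      (fun s hs => inner_neg_of_not_tset hx (Finset.mem_sdiff.1 hs).1 (Finset.mem_sdiff.1 hs).2)
    have hmem : x + ε • v ∈ FJ S (tset S x) := by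
      constructor
      · intro s hs
        by_cases hts : s ∈ tset S x
        · rw [inner_add_right, real_inner_smul_right, hvperp s hts, (mem_tset.1 hts).2]; simp
        · have := hεlt s (Finset.mem_sdiff.2 ⟨hs, hts⟩)
          rw [inner_add_right, real_inner_smul_right]
          linarith
      · intro s hs
        rw [inner_add_right, real_inner_smul_right, hvperp s hs, (mem_tset.1 hs).2]; simp
    have h1 : x + ε • v ∈ Submodule.span ℝ (FJ S (tset S x)) := Submodule.subset_span hmem
    have h2 : x ∈ Submodule.span ℝ (FJ S (tset S x)) := Submodule.subset_span (mem_FJ_tset hx)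
    have h3 : ε • v ∈ Submodule.span ℝ (FJ S (tset S x)) := by
      have := Submodule.sub_mem _ h1 h2
      simpa using this
    have := Submodule.smul_mem _ (ε⁻¹) h3
    rwa [smul_smul, inv_mul_cancel₀ (ne_of_gt hε), one_smul] at this

lemma rk_le (J : Finset E) : rk J ≤ finrank ℝ E := Submodule.finrank_le _

lemma cdim_FJ {S : Finset E} {x : E} (hx : x ∈ Kone S) :
    cdim (FJ S (tset S x)) = finrank ℝ E - rk (tset S x) := by
  have h := Submodule.finrank_add_finrank_orthogonal (Submodule.span ℝ ((tset S x : Set E)))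
  rw [cdim, span_FJ hx]
  have h' : rk (tset S x) + finrank ℝ ((Submodule.span ℝ ((tset S x : Set E)))ᗮ) = finrank ℝ E := h
  omega


/- ### Face classification -/

/-- C1: each canonical `FJ` is a face. -/
lemma FJ_isFace {S : Finset E} {x : E} (hx : x ∈ Kone S) :
    IsFaceG (FJ S (tset S x)) (Kone S) := by
  set J := tset S x with hJ
  by_cases ha : (∑ s ∈ J, s) = 0
  · left
    ext y
    constructor
    · exact fun hy => hy.1
    · intro hy
      refine ⟨hy, fun s hs => ?_⟩
      have hsum : ∑ s ∈ J, ⟪s, y⟫ = 0 := by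
        have : ⟪∑ s ∈ J, s, y⟫ = 0 := by rw [ha]; simp
        rwa [sum_inner] at this
      have := (Finset.sum_eq_zero_iff_of_nonpos
        (fun s hs => hy s (tset_subset S x hs))).1 hsum
      exact this s hs
  · right
    refine ⟨∑ s ∈ J, s, ha, fun y hy => ?_, ?_⟩
    · rw [sum_inner]
      exact Finset.sum_nonpos (fun s hs => hy s (tset_subset S x hs))
    · ext y
      constructor
      · rintro ⟨hy, hJy⟩
        refine ⟨hy, ?_⟩
        rw [sum_inner]
        exact Finset.sum_eq_zero hJy
      · rintro ⟨hy, hJy⟩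
        refine ⟨hy, fun s hs => ?_⟩
        have hsum : ∑ s ∈ J, ⟪s, y⟫ = 0 := by rwa [sum_inner] at hJy
        exact (Finset.sum_eq_zero_iff_of_nonpos
          (fun s hs => hy s (tset_subset S x hs))).1 hsum s hs

/-- relative interior point construction. -/
lemma exists_relint {S : Finset E} (G : Set E) (hsub : G ⊆ Kone S)
    (hadd : ∀ x ∈ G, ∀ y ∈ G, x + y ∈ G) (h0 : (0:E) ∈ G) :
    ∃ x ∈ G, ∀ s ∈ tset S x, ∀ y ∈ G, ⟪s, y⟫ = 0 := by
  classical
  set T := S.filter (fun s => ∃ y ∈ G, ⟪s, y⟫ < 0) with hT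
  -- choose witnesses
  have hch : ∀ s ∈ T, ∃ y ∈ G, ⟪s, y⟫ < 0 := fun s hs => (Finset.mem_filter.1 hs).2
  choose w hwG hwlt using hch
  -- x := sum of all witnesses
  have key : ∀ T' : Finset E, T' ⊆ T → ∃ x ∈ G, ∀ s ∈ T', ⟪s, x⟫ < 0 := by
    intro T'
    induction T' using Finset.induction with
    | empty => exact fun _ => ⟨0, h0, by simp⟩
    | insert _ _ hnot ih =>
      rename_i a T''
      intro hsubT
      obtain ⟨x, hxG, hx⟩ := ih (fun u hu => hsubT (Finset.mem_insert_of_mem hu))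
      have haT : a ∈ T := hsubT (Finset.mem_insert_self _ _)
      refine ⟨x + w a haT, hadd x hxG _ (hwG a haT), fun s hs => ?_⟩
      rcases Finset.mem_insert.1 hs with rfl | hs
      · have h1 : ⟪s, x⟫ ≤ 0 := hsub hxG s (Finset.mem_filter.1 haT).1
        have h2 := hwlt s haT
        rw [inner_add_right]; linarith
      · have h1 := hx s hs
        have h2 : ⟪s, w a haT⟫ ≤ 0 := hsub (hwG a haT) s (Finset.mem_filter.1 (hsubT (Finset.mem_insert_of_mem hs))).1
        rw [inner_add_right]; linarith
  obtain ⟨x, hxG, hx⟩ := key T (Finset.Subset.refl T)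
  refine ⟨x, hxG, fun s hs y hy => ?_⟩
  have hsS : s ∈ S := tset_subset S x hs
  have hsT : s ∉ T := by
    intro hsT
    have := hx s hsT
    rw [(mem_tset.1 hs).2] at this
    exact lt_irrefl _ this
  have : ¬ ∃ y ∈ G, ⟪s, y⟫ < 0 := by
    intro h
    exact hsT (Finset.mem_filter.2 ⟨hsS, h⟩)
  push_neg at this
  exact le_antisymm (hsub hy s hsS) (this y hy)

/-- C2: every face is a canonical `FJ`. -/
lemma face_eq_FJ {S : Finset E} {F : Set E} (hF : IsFaceG F (Kone S)) :
    ∃ x ∈ Kone S, F = FJ S (tset S x) := by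
  rcases hF with rfl | ⟨a, ha0, hsupp, rfl⟩
  · obtain ⟨x, hxG, hmin⟩ := exists_relint (Kone S) (le_refl _) (fun x hx y hy => Kone_add hx hy)
      (zero_mem_Kone S)
    refine ⟨x, hxG, ?_⟩
    ext y
    exact ⟨fun hy => ⟨hy, fun s hs => hmin s hs y hy⟩, fun hy => hy.1⟩
  · set F := {x | x ∈ Kone S ∧ ⟪a, x⟫ = 0} with hFdef
    have hFsub : F ⊆ Kone S := fun x hx => hx.1
    have hFadd : ∀ x ∈ F, ∀ y ∈ F, x + y ∈ F := by
      rintro x ⟨hx, hax⟩ y ⟨hy, hay⟩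
      exact ⟨Kone_add hx hy, by rw [inner_add_right, hax, hay]; ring⟩
    have hF0 : (0:E) ∈ F := ⟨zero_mem_Kone S, by simp⟩
    obtain ⟨x, hxF, hmin⟩ := exists_relint F hFsub hFadd hF0
    refine ⟨x, hFsub hxF, ?_⟩
    ext y
    constructor
    · exact fun hy => ⟨hy.1, fun s hs => hmin s hs y hy⟩
    · rintro ⟨hy, hty⟩
      refine ⟨hy, ?_⟩
      -- epsilon argument : x - ε y ∈ Kone S
      obtain ⟨ε, hε, hεlt⟩ := exists_eps (S \ tset S x) (fun s => ⟪s, x⟫) (fun s => -⟪s, y⟫)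
        (fun s hs => inner_neg_of_not_tset (hFsub hxF) (Finset.mem_sdiff.1 hs).1
          (Finset.mem_sdiff.1 hs).2)
      have hmem : x - ε • y ∈ Kone S := by
        intro s hs
        by_cases hts : s ∈ tset S x
        · rw [inner_sub_right, real_inner_smul_right, (mem_tset.1 hts).2, hty s hts]
          simp
        · have := hεlt s (Finset.mem_sdiff.2 ⟨hs, hts⟩)
          rw [inner_sub_right, real_inner_smul_right]
          linarith
      have h1 : ⟪a, x - ε • y⟫ ≤ 0 := hsupp _ hmem
      rw [inner_sub_right, real_inner_smul_right, hxF.2] at h1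
      have h2 : ⟪a, y⟫ ≤ 0 := hsupp y hy
      nlinarith

/-- C3: the canonical tight set can be recovered from the face. -/
lemma tset_eq_of_FJ_eq {S : Finset E} {x y : E} (hx : x ∈ Kone S) (hy : y ∈ Kone S)
    (h : FJ S (tset S x) = FJ S (tset S y)) : tset S x = tset S y := by
  have key : ∀ z : E, z ∈ Kone S → tset S z =
      S.filter (fun s => ∀ u ∈ FJ S (tset S z), ⟪s, u⟫ = 0) := by
    intro z hz
    apply Finset.ext
    intro s
    simp only [Finset.mem_filter, mem_tset]
    constructor
    · rintro ⟨hsS, hsz⟩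
      exact ⟨hsS, fun u hu => hu.2 s (mem_tset.2 ⟨hsS, hsz⟩)⟩
    · rintro ⟨hsS, hall⟩
      exact ⟨hsS, hall z (mem_FJ_tset hz)⟩
  rw [key x hx, key y hy, h]

lemma Jcan_mem_iff {S J : Finset E} :
    J ∈ Jcan S ↔ ∃ x ∈ Kone S, tset S x = J := by
  constructor
  · exact fun h => (Finset.mem_filter.1 h).2
  · rintro ⟨x, hx, rfl⟩
    exact Finset.mem_filter.2 ⟨Finset.mem_powerset.2 (tset_subset S x), ⟨x, hx, rfl⟩⟩

lemma facesSet_eq (S : Finset E) :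
    {F : Set E | IsFaceG F (Kone S)} = ↑((Jcan S).image (FJ S)) := by
  ext F
  simp only [Set.mem_setOf_eq, Finset.coe_image, Set.mem_image, Finset.mem_coe]
  constructor
  · intro hF
    obtain ⟨x, hx, rfl⟩ := face_eq_FJ hF
    exact ⟨tset S x, Jcan_mem_iff.2 ⟨x, hx, rfl⟩, rfl⟩
  · rintro ⟨J, hJ, rfl⟩
    obtain ⟨x, hx, rfl⟩ := Jcan_mem_iff.1 hJ
    exact FJ_isFace hx

lemma FJ_injOn (S : Finset E) :
    Set.InjOn (FJ S) ↑(Jcan S) := by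
  intro J₁ h₁ J₂ h₂ h
  obtain ⟨x, hx, rfl⟩ := Jcan_mem_iff.1 (Finset.mem_coe.1 h₁)
  obtain ⟨y, hy, rfl⟩ := Jcan_mem_iff.1 (Finset.mem_coe.1 h₂)
  exact tset_eq_of_FJ_eq hx hy h

lemma chi_geo (S : Finset E) :
    chi S = ∑ᶠ F ∈ {F : Set E | IsFaceG F (Kone S)}, (-1:ℤ) ^ (cdim F) := by
  rw [facesSet_eq, finsum_mem_coe_finset, Finset.sum_image (fun J hJ J' hJ' h =>
    FJ_injOn S (Finset.mem_coe.2 hJ) (Finset.mem_coe.2 hJ') h)]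
  apply Finset.sum_congr rfl
  intro J hJ
  obtain ⟨x, hx, rfl⟩ := Jcan_mem_iff.1 hJ
  rw [cdim_FJ hx]

lemma chi_congr {S₁ S₂ : Finset E} (h : Kone S₁ = Kone S₂) : chi S₁ = chi S₂ := by
  rw [chi_geo, chi_geo, h]

lemma isLin_face {C F : Set E} (hlin : isLin C) (hF : IsFaceG F C) : F = C := by
  obtain ⟨V, rfl⟩ := hlin
  rcases hF with rfl | ⟨a, ha0, hsupp, rfl⟩
  · rfl
  · ext x
    constructor
    · exact fun hx => hx.1
    · intro hx
      refine ⟨hx, le_antisymm (hsupp x hx) ?_⟩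
      have := hsupp (-x) (by simpa using Submodule.neg_mem V (by simpa using hx))
      rw [inner_neg_right] at this
      linarith

lemma chi_isLin {S : Finset E} (h : isLin (Kone S)) : chi S = tgt (Kone S) := by
  have hset : {F : Set E | IsFaceG F (Kone S)} = {Kone S} := by
    ext F
    simp only [Set.mem_setOf_eq, Set.mem_singleton_iff]
    exact ⟨fun hF => isLin_face h hF, fun hF => hF ▸ Or.inl rfl⟩
  rw [chi_geo, hset, finsum_mem_singleton, tgt, if_pos h]


/- ### rank lemmas -/

lemma span_insert_finset (t : E) (J : Finset E) :
    Submodule.span ℝ ((insert t J : Finset E) : Set E) =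
      Submodule.span ℝ (insert t (J : Set E)) := by
  rw [Finset.coe_insert]

lemma rk_insert_mem_span {t : E} {J : Finset E} (h : t ∈ Submodule.span ℝ (J : Set E)) :
    rk (insert t J) = rk J := by
  rw [rk, span_insert_finset, Submodule.span_insert_eq_span h]; rfl

lemma rk_insert_not_mem_span {t : E} {J : Finset E} (h : t ∉ Submodule.span ℝ (J : Set E)) :
    rk (insert t J) = rk J + 1 := by
  have ht0 : t ≠ 0 := fun h0 => h (h0 ▸ Submodule.zero_mem _)
  rw [rk, span_insert_finset, Submodule.span_insert]
  have hinf : (ℝ ∙ t) ⊓ Submodule.span ℝ (J : Set E) = ⊥ := by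
    rw [Submodule.eq_bot_iff]
    rintro v ⟨hv1, hv2⟩
    obtain ⟨c, rfl⟩ := Submodule.mem_span_singleton.1 hv1
    rcases eq_or_ne c 0 with rfl | hc
    · simp
    · exfalso
      apply h
      have := Submodule.smul_mem _ c⁻¹ hv2
      rwa [smul_smul, inv_mul_cancel₀ hc, one_smul] at this
  have := Submodule.finrank_sup_add_finrank_inf_eq (ℝ ∙ t) (Submodule.span ℝ (J : Set E))
  rw [hinf] at this
  simp only [finrank_bot, add_zero] at this
  rw [this, finrank_span_singleton ht0, rk]
  ring

lemma span_insert_neg (t : E) (J : Finset E) :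
    Submodule.span ℝ ((insert (-t) J : Finset E) : Set E) =
      Submodule.span ℝ ((insert t J : Finset E) : Set E) := by
  apply le_antisymm
  · rw [span_insert_finset, Submodule.span_le, Set.insert_subset_iff]
    constructor
    · exact Submodule.neg_mem _ (Submodule.subset_span (by simp))
    · intro v hv
      exact Submodule.subset_span (by simp [Finset.mem_coe.1 hv])
  · rw [span_insert_finset, Submodule.span_le, Set.insert_subset_iff]
    constructor
    · simpa using Submodule.neg_mem _ (Submodule.subset_span
        (show (-t) ∈ ((insert (-t) J : Finset E) : Set E) by simp))
    · intro v hv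
      exact Submodule.subset_span (by simp [Finset.mem_coe.1 hv])

lemma rk_insert_neg (t : E) (J : Finset E) : rk (insert (-t) J) = rk (insert t J) := by
  rw [rk, rk, span_insert_neg]

/- ### sign trichotomy -/

def Rneg (S₀ : Finset E) (t : E) (J : Finset E) : Prop :=
  ∃ x ∈ Kone S₀, tset S₀ x = J ∧ ⟪t, x⟫ < 0

def Rz (S₀ : Finset E) (t : E) (J : Finset E) : Prop :=
  ∃ x ∈ Kone S₀, tset S₀ x = J ∧ ⟪t, x⟫ = 0

def Rpos (S₀ : Finset E) (t : E) (J : Finset E) : Prop :=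
  ∃ x ∈ Kone S₀, tset S₀ x = J ∧ 0 < ⟪t, x⟫

lemma inner_zero_of_mem_span {t x : E} {J : Finset E}
    (hx : ∀ s ∈ J, ⟪s, x⟫ = 0) (ht : t ∈ Submodule.span ℝ (J : Set E)) : ⟪t, x⟫ = 0 := by
  induction ht using Submodule.span_induction with
  | mem s hs => exact hx s hs
  | zero => simp
  | add u v _ _ hu hv => rw [inner_add_left, hu, hv]; ring
  | smul c u _ hu => rw [real_inner_smul_left, hu]; ring

lemma not_Rneg_of_mem_span {S₀ : Finset E} {t : E} {J : Finset E}
    (ht : t ∈ Submodule.span ℝ (J : Set E)) : ¬ Rneg S₀ t J ∧ ¬ Rpos S₀ t J := by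
  constructor
  · rintro ⟨x, hx, rfl, hlt⟩
    rw [inner_zero_of_mem_span (fun s hs => (mem_tset.1 hs).2) ht] at hlt
    exact lt_irrefl _ hlt
  · rintro ⟨x, hx, rfl, hlt⟩
    rw [inner_zero_of_mem_span (fun s hs => (mem_tset.1 hs).2) ht] at hlt
    exact lt_irrefl _ hlt

/-- perturbation: relative interior points move freely in directions ⊥ to tight set. -/
lemma perturb {S₀ : Finset E} {x w : E} (hx : x ∈ Kone S₀)
    (hw : ∀ s ∈ tset S₀ x, ⟪s, w⟫ = 0) :
    ∃ ε : ℝ, 0 < ε ∧ (x + ε • w) ∈ Kone S₀ ∧ tset S₀ (x + ε • w) = tset S₀ x := by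
  obtain ⟨ε, hε, hεlt⟩ := exists_eps (S₀ \ tset S₀ x) (fun s => ⟪s, x⟫) (fun s => ⟪s, w⟫)
    (fun s hs => inner_neg_of_not_tset hx (Finset.mem_sdiff.1 hs).1 (Finset.mem_sdiff.1 hs).2)
  have hmem : x + ε • w ∈ Kone S₀ := by
    intro s hs
    by_cases hts : s ∈ tset S₀ x
    · rw [inner_add_right, real_inner_smul_right, hw s hts, (mem_tset.1 hts).2]; simp
    · have := hεlt s (Finset.mem_sdiff.2 ⟨hs, hts⟩)
      rw [inner_add_right, real_inner_smul_right]; linarith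
  refine ⟨ε, hε, hmem, ?_⟩
  apply Finset.ext
  intro s
  rw [mem_tset, mem_tset]
  constructor
  · rintro ⟨hsS, hs0⟩
    refine ⟨hsS, ?_⟩
    by_contra hne
    have hlt := hεlt s (Finset.mem_sdiff.2 ⟨hsS, fun h => hne (mem_tset.1 h).2⟩)
    rw [inner_add_right, real_inner_smul_right] at hs0
    linarith
  · rintro ⟨hsS, hs0⟩
    refine ⟨hsS, ?_⟩
    rw [inner_add_right, real_inner_smul_right, hs0, hw s (mem_tset.2 ⟨hsS, hs0⟩)]
    ring

lemma Rneg_Rpos_of_Rz {S₀ : Finset E} {t : E} {J : Finset E}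
    (ht : t ∉ Submodule.span ℝ (J : Set E)) (hz : Rz S₀ t J) :
    Rneg S₀ t J ∧ Rpos S₀ t J := by
  obtain ⟨x, hx, hts, hx0⟩ := hz
  set U := Submodule.span ℝ (J : Set E) with hU
  set w := t - (orthogonalProjection U t : E) with hwdef
  have hwmem : w ∈ Uᗮ := Submodule.sub_starProjection_mem_orthogonal (K := U) t
  have hw0 : w ≠ 0 := by
    intro h
    apply ht
    have h2 : t = (orthogonalProjection U t : E) := sub_eq_zero.1 h
    rw [h2]
    exact Submodule.coe_mem _
  have htw : ⟪t, w⟫ = ‖w‖^2 := by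
    have h1 : t = (orthogonalProjection U t : E) + w := by rw [hwdef]; abel
    have h2 : ⟪(orthogonalProjection U t : E), w⟫ = 0 := by
      have := (Submodule.mem_orthogonal U w).1 hwmem (orthogonalProjection U t : E)
        (Submodule.coe_mem _)
      first
      | exact this
      | (rw [real_inner_comm]; exact this)
    rw [h1, inner_add_left, h2, real_inner_self_eq_norm_sq]
    ring
  have hwJ : ∀ s ∈ tset S₀ x, ⟪s, w⟫ = 0 := by
    intro s hs
    have hsJ : s ∈ J := by rw [← hts]; exact hs
    have hsU : s ∈ U := Submodule.subset_span (Finset.mem_coe.2 hsJ)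
    have := (Submodule.mem_orthogonal U w).1 hwmem s hsU
    first
    | exact this
    | (rw [real_inner_comm]; exact this)
  constructor
  · obtain ⟨ε, hε, hmem, htseq⟩ := perturb hx (w := -w) (by intro s hs; rw [inner_neg_right, hwJ s hs]; ring)
    refine ⟨x + ε • (-w), hmem, by rw [htseq, hts], ?_⟩
    rw [inner_add_right, real_inner_smul_right, hx0, inner_neg_right, htw]
    have hwn : (0:ℝ) < ‖w‖ := norm_pos_iff.2 hw0
    have : ‖w‖^2 > 0 := by positivity
    nlinarith
  · obtain ⟨ε, hε, hmem, htseq⟩ := perturb hx hwJ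
    refine ⟨x + ε • w, hmem, by rw [htseq, hts], ?_⟩
    rw [inner_add_right, real_inner_smul_right, hx0, htw]
    have hwn : (0:ℝ) < ‖w‖ := norm_pos_iff.2 hw0
    have : ‖w‖^2 > 0 := by positivity
    nlinarith

lemma Rz_of_Rneg_Rpos {S₀ : Finset E} {t : E} {J : Finset E}
    (hn : Rneg S₀ t J) (hp : Rpos S₀ t J) : Rz S₀ t J := by
  obtain ⟨x, hx, htsx, hx0⟩ := hn
  obtain ⟨y, hy, htsy, hy0⟩ := hp
  refine ⟨⟪t, y⟫ • x + (-⟪t, x⟫) • y, ?_, ?_, ?_⟩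
  · exact Kone_add (Kone_smul hx hy0.le) (Kone_smul hy (by linarith))
  · apply Finset.ext
    intro s
    rw [mem_tset]
    constructor
    · rintro ⟨hsS, hs0⟩
      rw [inner_add_right, real_inner_smul_right, real_inner_smul_right] at hs0
      by_contra hsJ
      have h1 : ⟪s, x⟫ < 0 := by
        apply inner_neg_of_not_tset hx hsS
        rw [htsx]; exact hsJ
      have h2 : ⟪s, y⟫ < 0 := by
        apply inner_neg_of_not_tset hy hsS
        rw [htsy]; exact hsJ
      nlinarith
    · intro hsJ
      have hsS : s ∈ S₀ := by
        rw [← htsx] at hsJ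
        exact tset_subset _ _ hsJ
      have h1 : ⟪s, x⟫ = 0 := by
        rw [← htsx] at hsJ
        exact (mem_tset.1 hsJ).2
      have h2 : ⟪s, y⟫ = 0 := by
        rw [← htsy] at hsJ
        exact (mem_tset.1 hsJ).2
      refine ⟨hsS, ?_⟩
      rw [inner_add_right, real_inner_smul_right, real_inner_smul_right, h1, h2]
      ring
  · rw [inner_add_right, real_inner_smul_right, real_inner_smul_right]
    ring


/- ### decomposition of `chi` under adding a constraint -/

lemma Kone_insert_mem {S₀ : Finset E} {t x : E} :
    x ∈ Kone (insert t S₀) ↔ x ∈ Kone S₀ ∧ ⟪t, x⟫ ≤ 0 := by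
  constructor
  · intro h
    exact ⟨fun s hs => h s (Finset.mem_insert_of_mem hs), h t (Finset.mem_insert_self _ _)⟩
  · rintro ⟨h1, h2⟩ s hs
    rcases Finset.mem_insert.1 hs with rfl | hs
    · exact h2
    · exact h1 s hs

lemma tset_insert (S₀ : Finset E) (t x : E) :
    tset (insert t S₀) x = if ⟪t, x⟫ = 0 then insert t (tset S₀ x) else tset S₀ x := by
  rw [tset, Finset.filter_insert]
  split <;> rfl

local notation "dd" => finrank ℝ E

lemma chi_insert_eq {S₀ : Finset E} {t : E} (htS : t ∉ S₀) :
    chi (insert t S₀) = ∑ J ∈ S₀.powerset,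
      ((if Rneg S₀ t J then (-1:ℤ)^(dd - rk J) else 0)
        + (if Rz S₀ t J then (-1:ℤ)^(dd - rk (insert t J)) else 0)) := by
  classical
  have claim1 : (Jcan (insert t S₀)).filter (fun J => t ∉ J)
      = S₀.powerset.filter (Rneg S₀ t) := by
    apply Finset.ext
    intro J
    simp only [Finset.mem_filter, Finset.mem_powerset]
    constructor
    · rintro ⟨hJ, htJ⟩
      obtain ⟨x, hx, rfl⟩ := Jcan_mem_iff.1 hJ
      obtain ⟨hx0, htx⟩ := Kone_insert_mem.1 hx
      rw [tset_insert] at htJ ⊢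
      by_cases h0 : ⟪t, x⟫ = 0
      · rw [if_pos h0] at htJ
        exact absurd (Finset.mem_insert_self _ _) htJ
      · rw [if_neg h0]
        exact ⟨tset_subset _ _, ⟨x, hx0, rfl, lt_of_le_of_ne htx h0⟩⟩
    · rintro ⟨hJsub, x, hx, rfl, hlt⟩
      have hxm : x ∈ Kone (insert t S₀) := Kone_insert_mem.2 ⟨hx, hlt.le⟩
      constructor
      · refine Jcan_mem_iff.2 ⟨x, hxm, ?_⟩
        rw [tset_insert, if_neg (ne_of_lt hlt)]
      · intro htJ
        exact htS (tset_subset _ _ htJ)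
  have claim2 : (Jcan (insert t S₀)).filter (fun J => t ∈ J)
      = (S₀.powerset.filter (Rz S₀ t)).image (insert t) := by
    apply Finset.ext
    intro J
    simp only [Finset.mem_filter, Finset.mem_powerset, Finset.mem_image]
    constructor
    · rintro ⟨hJ, htJ⟩
      obtain ⟨x, hx, rfl⟩ := Jcan_mem_iff.1 hJ
      obtain ⟨hx0, htx⟩ := Kone_insert_mem.1 hx
      rw [tset_insert] at htJ ⊢
      by_cases h0 : ⟪t, x⟫ = 0
      · rw [if_pos h0]
        exact ⟨tset S₀ x, ⟨tset_subset _ _, ⟨x, hx0, rfl, h0⟩⟩, rfl⟩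
      · rw [if_neg h0] at htJ
        exact absurd (tset_subset _ _ htJ) htS
    · rintro ⟨J₀, ⟨hJ₀sub, x, hx, rfl, h0⟩, rfl⟩
      have hxm : x ∈ Kone (insert t S₀) := Kone_insert_mem.2 ⟨hx, le_of_eq h0⟩
      refine ⟨Jcan_mem_iff.2 ⟨x, hxm, ?_⟩, Finset.mem_insert_self _ _⟩
      rw [tset_insert, if_pos h0]
  rw [chi, ← Finset.sum_filter_add_sum_filter_not (Jcan (insert t S₀)) (fun J => t ∉ J),
    claim1]
  have : (Jcan (insert t S₀)).filter (fun J => ¬ t ∉ J)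
      = (Jcan (insert t S₀)).filter (fun J => t ∈ J) := by
    apply Finset.filter_congr
    intro J _
    simp
  rw [this, claim2, Finset.sum_image ?hinj]
  case hinj =>
    intro J₁ h₁ J₂ h₂ h
    have ht₁ : t ∉ J₁ := fun hc => htS (Finset.mem_powerset.1 (Finset.mem_filter.1 h₁).1 hc)
    have ht₂ : t ∉ J₂ := fun hc => htS (Finset.mem_powerset.1 (Finset.mem_filter.1 h₂).1 hc)
    rw [← Finset.erase_insert ht₁, ← Finset.erase_insert ht₂, h]
  rw [Finset.sum_filter, Finset.sum_filter, ← Finset.sum_add_distrib]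

lemma chi_base_eq (S₀ : Finset E) (t : E) :
    chi S₀ = ∑ J ∈ S₀.powerset,
      (if (Rneg S₀ t J ∨ Rz S₀ t J ∨ Rpos S₀ t J) then (-1:ℤ)^(dd - rk J) else 0) := by
  classical
  have : Jcan S₀ = S₀.powerset.filter
      (fun J => Rneg S₀ t J ∨ Rz S₀ t J ∨ Rpos S₀ t J) := by
    apply Finset.ext
    intro J
    simp only [Finset.mem_filter, Finset.mem_powerset]
    constructor
    · intro hJ
      obtain ⟨x, hx, rfl⟩ := Jcan_mem_iff.1 hJ
      refine ⟨tset_subset _ _, ?_⟩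
      rcases lt_trichotomy (⟪t, x⟫) 0 with h | h | h
      · exact Or.inl ⟨x, hx, rfl, h⟩
      · exact Or.inr (Or.inl ⟨x, hx, rfl, h⟩)
      · exact Or.inr (Or.inr ⟨x, hx, rfl, h⟩)
    · rintro ⟨hsub, (⟨x, hx, rfl, _⟩ | ⟨x, hx, rfl, _⟩ | ⟨x, hx, rfl, _⟩)⟩ <;>
        exact Jcan_mem_iff.2 ⟨x, hx, rfl⟩
  rw [chi, this, Finset.sum_filter]

lemma chi_D_eq {S₀ : Finset E} {t : E} (ht0 : t ≠ 0) (htS : t ∉ S₀) (htS' : -t ∉ S₀) :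
    chi (insert t (insert (-t) S₀)) = ∑ J ∈ S₀.powerset,
      (if Rz S₀ t J then (-1:ℤ)^(dd - rk (insert t J)) else 0) := by
  classical
  have htne : t ≠ -t := by
    intro h
    have h2 : t + t = 0 := by nth_rewrite 2 [h]; simp
    have h3 : (2:ℝ) • t = 0 := by rw [two_smul]; exact h2
    exact ht0 ((smul_eq_zero.1 h3).resolve_left (by norm_num))
  have hmemG : ∀ x : E, x ∈ Kone (insert t (insert (-t) S₀)) ↔
      x ∈ Kone S₀ ∧ ⟪t, x⟫ = 0 := by
    intro x
    rw [Kone_insert_mem, Kone_insert_mem]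
    constructor
    · rintro ⟨⟨h1, h2⟩, h3⟩
      rw [inner_neg_left] at h2
      exact ⟨h1, le_antisymm h3 (by linarith)⟩
    · rintro ⟨h1, h2⟩
      exact ⟨⟨h1, by rw [inner_neg_left]; linarith⟩, le_of_eq h2⟩
  have hJeq : Jcan (insert t (insert (-t) S₀))
      = (S₀.powerset.filter (Rz S₀ t)).image (fun J => insert t (insert (-t) J)) := by
    apply Finset.ext
    intro J
    simp only [Finset.mem_image, Finset.mem_filter, Finset.mem_powerset]
    constructor
    · intro hJ
      obtain ⟨x, hx, rfl⟩ := Jcan_mem_iff.1 hJ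
      obtain ⟨hx0, htx⟩ := (hmemG x).1 hx
      refine ⟨tset S₀ x, ⟨tset_subset _ _, ⟨x, hx0, rfl, htx⟩⟩, ?_⟩
      rw [tset_insert, if_pos htx, tset_insert, if_pos (by rw [inner_neg_left, htx]; ring)]
    · rintro ⟨J₀, ⟨hsub, x, hx, rfl, h0⟩, rfl⟩
      refine Jcan_mem_iff.2 ⟨x, (hmemG x).2 ⟨hx, h0⟩, ?_⟩
      rw [tset_insert, if_pos h0, tset_insert, if_pos (by rw [inner_neg_left, h0]; ring)]
  rw [chi, hJeq, Finset.sum_image ?hinj]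
  case hinj =>
    intro J₁ h₁ J₂ h₂ h
    have hJ₁ := Finset.mem_powerset.1 (Finset.mem_filter.1 h₁).1
    have hJ₂ := Finset.mem_powerset.1 (Finset.mem_filter.1 h₂).1
    have e₁ : ∀ J : Finset E, J ⊆ S₀ →
        ((insert t (insert (-t) J)).erase t).erase (-t) = J := by
      intro J hJ
      rw [Finset.erase_insert (by
        simp only [Finset.mem_insert]
        push_neg
        exact ⟨htne, fun hc => htS (hJ hc)⟩)]
      rw [Finset.erase_insert (fun hc => htS' (hJ hc))]
    rw [← e₁ J₁ hJ₁, ← e₁ J₂ hJ₂]; exact congrArg (fun K => (K.erase t).erase (-t)) h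
  have hcongr : ∀ J ∈ S₀.powerset.filter (Rz S₀ t),
      ((-1:ℤ))^(dd - rk (insert t (insert (-t) J))) = ((-1:ℤ))^(dd - rk (insert t J)) := by
    intro J hJ
    congr 2
    have hcomm : insert t (insert (-t) J) = insert (-t) (insert t J) := Finset.insert_comm _ _ _
    rw [hcomm, rk_insert_mem_span (Submodule.neg_mem _ (Submodule.subset_span (by simp)))]
  rw [Finset.sum_congr rfl hcongr, Finset.sum_filter]

/- ### THE KEY IDENTITY -/

lemma key_identity {S₀ : Finset E} {t : E} (ht0 : t ≠ 0) (htS : t ∉ S₀) (htS' : -t ∉ S₀) :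
    chi (insert t S₀) + chi (insert (-t) S₀)
      = chi S₀ + chi (insert t (insert (-t) S₀)) := by
  classical
  have hRnegneg : ∀ J, Rneg S₀ (-t) J ↔ Rpos S₀ t J := by
    intro J
    constructor
    · rintro ⟨x, hx, rfl, h⟩
      rw [inner_neg_left] at h
      exact ⟨x, hx, rfl, by linarith⟩
    · rintro ⟨x, hx, rfl, h⟩
      exact ⟨x, hx, rfl, by rw [inner_neg_left]; linarith⟩
  have hRzneg : ∀ J, Rz S₀ (-t) J ↔ Rz S₀ t J := by
    intro J
    constructor
    · rintro ⟨x, hx, rfl, h⟩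
      rw [inner_neg_left] at h
      exact ⟨x, hx, rfl, by linarith⟩
    · rintro ⟨x, hx, rfl, h⟩
      exact ⟨x, hx, rfl, by rw [inner_neg_left]; linarith⟩
  rw [chi_insert_eq htS, chi_insert_eq htS', chi_base_eq S₀ t, chi_D_eq ht0 htS htS',
    ← Finset.sum_add_distrib, ← Finset.sum_add_distrib]
  apply Finset.sum_congr rfl
  intro J hJ
  rw [hRnegneg J, hRzneg J, rk_insert_neg]
  by_cases hsp : t ∈ Submodule.span ℝ (J : Set E)
  · obtain ⟨hn, hp⟩ := not_Rneg_of_mem_span (S₀ := S₀) hsp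
    rw [if_neg hn, if_neg hp, rk_insert_mem_span hsp]
    by_cases hz : Rz S₀ t J
    · rw [if_pos hz, if_pos (Or.inr (Or.inl hz))]
      ring
    · rw [if_neg hz, if_neg (by rintro (h | h | h) <;> first | exact hn h | exact hz h | exact hp h)]
      ring
  · have hr1 : rk (insert t J) = rk J + 1 := rk_insert_not_mem_span hsp
    have hle : rk J + 1 ≤ dd := hr1 ▸ rk_le (insert t J)
    have hsign : ((-1:ℤ))^(dd - rk (insert t J)) = -((-1:ℤ))^(dd - rk J) := by
      rw [hr1]
      have h2 : dd - rk J = (dd - (rk J + 1)) + 1 := by omega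
      rw [h2, pow_succ]
      ring
    rw [hsign]
    by_cases hz : Rz S₀ t J
    · obtain ⟨hn, hp⟩ := Rneg_Rpos_of_Rz hsp hz
      rw [if_pos hn, if_pos hp, if_pos hz, if_pos (Or.inl hn)]
      ring
    · rw [if_neg hz]
      have hnp : ¬ (Rneg S₀ t J ∧ Rpos S₀ t J) := fun ⟨hn, hp⟩ => hz (Rz_of_Rneg_Rpos hn hp)
      by_cases hn : Rneg S₀ t J
      · have hp : ¬ Rpos S₀ t J := fun hp => hnp ⟨hn, hp⟩
        rw [if_pos hn, if_neg hp, if_pos (Or.inl hn)]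
        ring
      · by_cases hp : Rpos S₀ t J
        · rw [if_neg hn, if_pos hp, if_pos (Or.inr (Or.inr hp))]
          ring
        · rw [if_neg hn, if_neg hp,
            if_neg (by rintro (h | h | h) <;> first | exact hn h | exact hz h | exact hp h)]
          ring


/- ### transport to a subspace -/

lemma inner_proj (V : Submodule ℝ E) (s : E) (x : ↥V) :
    ⟪((orthogonalProjection V s : ↥V) : E), (x : E)⟫ = ⟪s, (x : E)⟫ := by
  have hw : s - (orthogonalProjection V s : E) ∈ Vᗮ :=
    Submodule.sub_starProjection_mem_orthogonal (K := V) s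
  have h0 : ⟪s - (orthogonalProjection V s : E), (x : E)⟫ = 0 := by
    have h1 := (Submodule.mem_orthogonal V (s - (orthogonalProjection V s : E))).1 hw
      (x : E) x.2
    first
    | exact h1
    | (rw [real_inner_comm]; exact h1)
  rw [← sub_eq_zero]
  rw [inner_sub_left] at h0
  linarith

section Transport

variable (S : Finset E)

noncomputable def Vspan (S : Finset E) : Submodule ℝ E := Submodule.span ℝ (Kone S)

noncomputable def Sproj (S : Finset E) : Finset ↥(Vspan S) :=
  S.image (fun s => orthogonalProjection (Vspan S) s)

lemma Kone_sub_V : Kone S ⊆ ↑(Vspan S) := Submodule.subset_span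

lemma mem_Kone_proj (x : ↥(Vspan S)) : x ∈ Kone (Sproj S) ↔ (x : E) ∈ Kone S := by
  constructor
  · intro h s hs
    have := h (orthogonalProjection (Vspan S) s) (Finset.mem_image_of_mem _ hs)
    rwa [Submodule.coe_inner, inner_proj] at this
  · intro h s' hs'
    obtain ⟨s, hs, rfl⟩ := Finset.mem_image.1 hs'
    rw [Submodule.coe_inner, inner_proj]
    exact h s hs

lemma Kone_eq_image : Kone S = (fun x : ↥(Vspan S) => (x : E)) '' Kone (Sproj S) := by
  ext x
  constructor
  · intro hx
    exact ⟨⟨x, Kone_sub_V S hx⟩, (mem_Kone_proj S _).2 hx, rfl⟩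
  · rintro ⟨x', hx', rfl⟩
    exact (mem_Kone_proj S x').1 hx'

lemma cdim_image (F' : Set ↥(Vspan S)) :
    cdim ((fun x : ↥(Vspan S) => (x : E)) '' F') = cdim F' := by
  rw [cdim, cdim]
  have h1 : (fun x : ↥(Vspan S) => (x : E)) '' F' = ((Vspan S).subtype) '' F' := rfl
  rw [h1, Submodule.span_image]
  exact (LinearEquiv.finrank_eq
    (Submodule.equivMapOfInjective _ (Submodule.injective_subtype _) _)).symm

lemma face_correspondence (F : Set E) :
    IsFaceG F (Kone S) ↔ ∃ F' : Set ↥(Vspan S),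
      IsFaceG F' (Kone (Sproj S)) ∧ F = (fun x : ↥(Vspan S) => (x : E)) '' F' := by
  constructor
  · intro hF
    rcases hF with rfl | ⟨a, ha0, hsupp, rfl⟩
    · exact ⟨Kone (Sproj S), Or.inl rfl, Kone_eq_image S⟩
    · set a' := orthogonalProjection (Vspan S) a with ha'
      by_cases h0 : a' = 0
      · -- a vanishes on V, so the face is everything
        refine ⟨Kone (Sproj S), Or.inl rfl, ?_⟩
        have hzero : ∀ x ∈ Kone S, ⟪a, x⟫ = 0 := by
          intro x hx
          have hxV : x ∈ Vspan S := Kone_sub_V S hx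
          have := inner_proj (Vspan S) a ⟨x, hxV⟩
          rw [← ha'] at this
          rw [← this, h0]
          simp
        have : {x | x ∈ Kone S ∧ ⟪a, x⟫ = 0} = Kone S := by
          ext x
          exact ⟨fun h => h.1, fun h => ⟨h, hzero x h⟩⟩
        rw [this]
        exact Kone_eq_image S
      · refine ⟨{x | x ∈ Kone (Sproj S) ∧ ⟪a', x⟫ = 0}, Or.inr ⟨a', h0, ?_, rfl⟩, ?_⟩
        · intro x hx
          rw [Submodule.coe_inner, inner_proj]
          exact hsupp _ ((mem_Kone_proj S x).1 hx)
        · ext x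
          constructor
          · rintro ⟨hx, hax⟩
            have hxV : x ∈ Vspan S := Kone_sub_V S hx
            refine ⟨⟨x, hxV⟩, ⟨(mem_Kone_proj S _).2 hx, ?_⟩, rfl⟩
            rw [Submodule.coe_inner, inner_proj]
            exact hax
          · rintro ⟨x', ⟨hx', hax'⟩, rfl⟩
            rw [Submodule.coe_inner, inner_proj] at hax'
            exact ⟨(mem_Kone_proj S x').1 hx', hax'⟩
  · rintro ⟨F', hF', rfl⟩
    rcases hF' with rfl | ⟨a', ha0, hsupp, rfl⟩
    · rw [← Kone_eq_image S]
      exact Or.inl rfl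
    · right
      refine ⟨(a' : E), fun h => ha0 (by exact_mod_cast h), ?_, ?_⟩
      · intro x hx
        rw [Kone_eq_image S] at hx
        obtain ⟨x', hx', rfl⟩ := hx
        rw [← Submodule.coe_inner]
        exact hsupp x' hx'
      · ext x
        constructor
        · rintro ⟨x', ⟨hx', hax'⟩, rfl⟩
          refine ⟨(mem_Kone_proj S x').1 hx', ?_⟩
          rw [← Submodule.coe_inner]
          exact hax'
        · rintro ⟨hx, hax⟩
          have hxV : x ∈ Vspan S := Kone_sub_V S hx
          refine ⟨⟨x, hxV⟩, ⟨(mem_Kone_proj S _).2 hx, ?_⟩, rfl⟩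
          rw [Submodule.coe_inner]
          exact hax

lemma chi_transport : chi S = chi (Sproj S) := by
  rw [chi_geo, chi_geo]
  have hset : {F : Set E | IsFaceG F (Kone S)}
      = (fun F' : Set ↥(Vspan S) => (fun x : ↥(Vspan S) => (x : E)) '' F') ''
        {F' : Set ↥(Vspan S) | IsFaceG F' (Kone (Sproj S))} := by
    ext F
    simp only [Set.mem_setOf_eq, Set.mem_image]
    constructor
    · intro hF
      obtain ⟨F', h1, h2⟩ := (face_correspondence S F).1 hF
      exact ⟨F', h1, h2.symm⟩
    · rintro ⟨F', h1, rfl⟩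
      exact (face_correspondence S _).2 ⟨F', h1, rfl⟩
  rw [hset]
  rw [finsum_mem_image]
  · apply finsum_mem_congr rfl
    intro F' hF'
    rw [cdim_image]
  · intro F₁ _ F₂ _ h
    exact Set.image_injective.2 Subtype.coe_injective h

lemma tgt_transport : tgt (Kone S) = tgt (Kone (Sproj S)) := by
  have hlin : isLin (Kone S) ↔ isLin (Kone (Sproj S)) := by
    constructor
    · rintro ⟨W, hW⟩
      refine ⟨W.comap (Vspan S).subtype, ?_⟩
      ext x
      rw [SetLike.mem_coe, Submodule.mem_comap]
      change x ∈ Kone (Sproj S) ↔ _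
      rw [mem_Kone_proj, hW]
      rfl
    · rintro ⟨W', hW'⟩
      refine ⟨W'.map (Vspan S).subtype, ?_⟩
      rw [Kone_eq_image S, hW', Submodule.map_coe]
      rfl
  have hdim : cdim (Kone S) = cdim (Kone (Sproj S)) := by
    rw [Kone_eq_image S, cdim_image]
  rw [tgt, tgt, hdim]
  by_cases h : isLin (Kone S)
  · rw [if_pos h, if_pos (hlin.1 h)]
  · rw [if_neg h, if_neg (fun h' => h (hlin.2 h'))]

lemma finrank_V_lt (hsp : Submodule.span ℝ (Kone S) ≠ ⊤) :
    finrank ℝ ↥(Vspan S) < finrank ℝ E :=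
  Submodule.finrank_lt hsp

end Transport


/- ### the hypercube of sign flips -/

noncomputable def TA (S A : Finset E) : Finset E := (S \ A) ∪ A.image (fun a => -a)

def Clean (S A : Finset E) : Prop :=
  (TA S A).card = S.card ∧ Submodule.span ℝ (Kone (TA S A)) = ⊤ ∧
    ∀ u ∈ TA S A, Kone ((TA S A).erase u) ≠ Kone (TA S A)

lemma TA_empty (S : Finset E) : TA S ∅ = S := by simp [TA]

lemma span_ne_top_of_pm {T : Finset E} {t : E} (ht0 : t ≠ 0) (h1 : t ∈ T) (h2 : -t ∈ T) :
    Submodule.span ℝ (Kone T) ≠ ⊤ := by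
  have hsub : Kone T ⊆ ↑((ℝ ∙ t)ᗮ) := by
    intro x hx
    have ha := hx t h1
    have hb := hx (-t) h2
    rw [inner_neg_left] at hb
    have h0 : ⟪t, x⟫ = 0 := le_antisymm ha (by linarith)
    rw [SetLike.mem_coe, Submodule.mem_orthogonal]
    intro u hu
    obtain ⟨c, rfl⟩ := Submodule.mem_span_singleton.1 hu
    rw [real_inner_smul_left, h0]
    ring
  intro htop
  have h1' : Submodule.span ℝ (Kone T) ≤ (ℝ ∙ t)ᗮ := by
    rw [Submodule.span_le]
    exact hsub
  rw [htop, top_le_iff] at h1'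
  have : t ∈ (ℝ ∙ t)ᗮ := h1' ▸ Submodule.mem_top
  have := (Submodule.mem_orthogonal _ _).1 this t (Submodule.mem_span_singleton_self t)
  rw [real_inner_self_eq_norm_sq] at this
  exact ht0 (by
    have : ‖t‖ = 0 := by nlinarith [norm_nonneg t]
    simpa using this)

lemma disjoint_of_card {S A : Finset E} (hA : A ⊆ S) (hcard : (TA S A).card = S.card) :
    Disjoint (S \ A) (A.image (fun a => -a)) := by
  by_contra hdis
  have h1 : ((S \ A) ∪ A.image (fun a => -a)).card
      < (S \ A).card + (A.image (fun a => -a)).card := by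
    have h2 := Finset.card_union_add_card_inter (S \ A) (A.image (fun a => -a))
    have h3 : ((S \ A) ∩ A.image (fun a => -a)).card ≠ 0 := by
      rw [Ne, Finset.card_eq_zero, ← Finset.disjoint_iff_inter_eq_empty]
      exact hdis
    omega
  have h4 : (A.image (fun a => -a)).card ≤ A.card := Finset.card_image_le
  have h5 : (S \ A).card = S.card - A.card := Finset.card_sdiff_of_subset hA
  have h6 : A.card ≤ S.card := Finset.card_le_card hA
  rw [TA] at hcard
  omega

lemma neg_notin_sdiff {S A : Finset E} (hA : A ⊆ S) (hcard : (TA S A).card = S.card)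
    {a : E} (ha : a ∈ A) : -a ∉ S \ A := by
  intro hc
  have := disjoint_of_card hA hcard
  exact (Finset.disjoint_left.1 this hc) (Finset.mem_image_of_mem _ ha)

/-- The finset surgery for flipping `t ∉ A`. -/
lemma TA_surgery {S A : Finset E} {t : E} (hA : A ⊆ S) (ht : t ∈ S) (htA : t ∉ A)
    (hcard : (TA S A).card = S.card) :
    t ∈ TA S A ∧ TA S (insert t A) = insert (-t) ((TA S A).erase t) := by
  have hdisj := disjoint_of_card hA hcard
  have htTA : t ∈ TA S A :=
    Finset.mem_union_left _ (Finset.mem_sdiff.2 ⟨ht, htA⟩)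
  refine ⟨htTA, ?_⟩
  have himg : t ∉ A.image (fun a => -a) := by
    intro hc
    exact (Finset.disjoint_left.1 hdisj (Finset.mem_sdiff.2 ⟨ht, htA⟩)) hc
  have herase : (TA S A).erase t = (S \ insert t A) ∪ A.image (fun a => -a) := by
    rw [TA, Finset.erase_union_distrib, Finset.erase_eq_of_notMem himg]
    congr 1
    apply Finset.ext
    intro u
    simp only [Finset.mem_erase, Finset.mem_sdiff, Finset.mem_insert]
    tauto
  rw [herase, TA, Finset.image_insert, Finset.union_insert]

/- ### the edge relation -/

lemma Kone_pm_eq {S₀ : Finset E} {t : E} :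
    Kone (insert t (insert (-t) S₀)) = {x | x ∈ Kone S₀ ∧ ⟪t, x⟫ = 0} := by
  ext x
  rw [Set.mem_setOf_eq, Kone_insert_mem, Kone_insert_mem]
  constructor
  · rintro ⟨⟨h1, h2⟩, h3⟩
    rw [inner_neg_left] at h2
    exact ⟨h1, le_antisymm h3 (by linarith)⟩
  · rintro ⟨h1, h2⟩
    exact ⟨⟨h1, by rw [inner_neg_left]; linarith⟩, le_of_eq h2⟩

/-- the crucial "D is a subspace implies C' is a subspace" argument. -/
lemma isLin_of_D_isLin {S₀ : Finset E} {t x₀ y₀ : E}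
    (hx₀ : x₀ ∈ Kone (insert t S₀)) (hx₀t : ⟪t, x₀⟫ < 0)
    (hy₀ : y₀ ∈ Kone S₀) (hy₀t : 0 < ⟪t, y₀⟫)
    (hD : isLin (Kone (insert t (insert (-t) S₀)))) : isLin (Kone S₀) := by
  obtain ⟨W, hW⟩ := hD
  have hDset : (W : Set E) = {x | x ∈ Kone S₀ ∧ ⟪t, x⟫ = 0} := by
    rw [← hW, Kone_pm_eq]
  -- membership in the D-subspace kills all S₀ constraints
  have hkill : ∀ z : E, z ∈ Kone S₀ → ⟪t, z⟫ = 0 → ∀ s ∈ S₀, ⟪s, z⟫ = 0 := by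
    intro z hz hzt s hs
    have hzW : z ∈ W := by
      rw [← SetLike.mem_coe, hDset]
      exact ⟨hz, hzt⟩
    have hnegW : -z ∈ W := Submodule.neg_mem _ hzW
    have : (-z) ∈ {x | x ∈ Kone S₀ ∧ ⟪t, x⟫ = 0} := by rw [← hDset]; exact hnegW
    have h1 := this.1 s hs
    rw [inner_neg_right] at h1
    exact le_antisymm (hz s hs) (by linarith)
  have hx₀' : x₀ ∈ Kone S₀ := (Kone_insert_mem.1 hx₀).1
  -- the combination trick
  have hcomb : ∀ u v : E, u ∈ Kone S₀ → v ∈ Kone S₀ → ⟪t, u⟫ < 0 → 0 < ⟪t, v⟫ →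
      ∀ s ∈ S₀, ⟪t, v⟫ * ⟪s, u⟫ + (-⟪t, u⟫) * ⟪s, v⟫ = 0 := by
    intro u v hu hv hut hvt s hs
    have hz : (⟪t, v⟫ • u + (-⟪t, u⟫) • v) ∈ Kone S₀ :=
      Kone_add (Kone_smul hu hvt.le) (Kone_smul hv (by linarith))
    have hzt : ⟪t, ⟪t, v⟫ • u + (-⟪t, u⟫) • v⟫ = 0 := by
      rw [inner_add_right, real_inner_smul_right, real_inner_smul_right]
      ring
    have := hkill _ hz hzt s hs
    rw [inner_add_right, real_inner_smul_right, real_inner_smul_right] at this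
    exact this
  -- first: x₀ and y₀ are tight everywhere
  have hxy : ∀ s ∈ S₀, ⟪s, x₀⟫ = 0 ∧ ⟪s, y₀⟫ = 0 := by
    intro s hs
    have h0 := hcomb x₀ y₀ hx₀' hy₀ hx₀t hy₀t s hs
    have h1 : ⟪t, y₀⟫ * ⟪s, x₀⟫ ≤ 0 :=
      mul_nonpos_of_nonneg_of_nonpos hy₀t.le (hx₀' s hs)
    have h2 : (-⟪t, x₀⟫) * ⟪s, y₀⟫ ≤ 0 :=
      mul_nonpos_of_nonneg_of_nonpos (by linarith) (hy₀ s hs)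
    have h3 : ⟪t, y₀⟫ * ⟪s, x₀⟫ = 0 := by linarith
    have h4 : (-⟪t, x₀⟫) * ⟪s, y₀⟫ = 0 := by linarith
    constructor
    · rcases mul_eq_zero.1 h3 with h | h
      · linarith
      · exact h
    · rcases mul_eq_zero.1 h4 with h | h
      · linarith
      · exact h
  -- now every element of the cone is tight everywhere
  have hall : ∀ c ∈ Kone S₀, ∀ s ∈ S₀, ⟪s, c⟫ = 0 := by
    intro c hc s hs
    rcases lt_trichotomy (⟪t, c⟫) 0 with h | h | h
    · have h0 := hcomb c y₀ hc hy₀ h hy₀t s hs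
      rw [(hxy s hs).2] at h0
      have : ⟪t, y₀⟫ * ⟪s, c⟫ = 0 := by linarith
      rcases mul_eq_zero.1 this with h' | h'
      · linarith
      · exact h'
    · exact hkill c hc h s hs
    · have h0 := hcomb x₀ c hx₀' hc hx₀t h s hs
      rw [(hxy s hs).1] at h0
      have : (-⟪t, x₀⟫) * ⟪s, c⟫ = 0 := by linarith
      rcases mul_eq_zero.1 this with h' | h'
      · linarith
      · exact h'
  -- hence the cone is the orthogonal complement of span S₀
  refine ⟨(Submodule.span ℝ (S₀ : Set E))ᗮ, ?_⟩
  ext x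
  rw [SetLike.mem_coe, Submodule.mem_orthogonal]
  constructor
  · intro hx
    intro u hu
    have hx0 : ∀ s ∈ S₀, ⟪s, x⟫ = 0 := hall x hx
    induction hu using Submodule.span_induction with
    | mem s hs => exact hx0 s hs
    | zero => simp
    | add u v _ _ hu hv => rw [inner_add_left, hu, hv]; ring
    | smul c u _ hu => rw [real_inner_smul_left, hu]; ring
  · intro hx s hs
    exact le_of_eq (hx s (Submodule.subset_span hs))


/-- span preservation across a flip. -/
lemma span_flip {S₀ : Finset E} {t y₀ : E}
    (hsp : Submodule.span ℝ (Kone (insert t S₀)) = ⊤)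
    (hy₀ : y₀ ∈ Kone S₀) (hy₀t : 0 < ⟪t, y₀⟫) :
    Submodule.span ℝ (Kone (insert (-t) S₀)) = ⊤ := by
  have hsub : Kone (insert t S₀) ⊆ Kone S₀ := fun x hx => (Kone_insert_mem.1 hx).1
  have hS₀top : Submodule.span ℝ (Kone S₀) = ⊤ := by
    apply top_unique
    rw [← hsp]
    exact Submodule.span_mono hsub
  apply top_unique
  rw [← hS₀top, Submodule.span_le]
  intro y hy
  rcases le_or_gt 0 (⟪t, y⟫) with h | h
  · apply Submodule.subset_span
    exact Kone_insert_mem.2 ⟨hy, by rw [inner_neg_left]; linarith⟩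
  · set M := (-⟪t, y⟫) / ⟪t, y₀⟫ with hM
    have hM0 : 0 ≤ M := by
      apply div_nonneg (by linarith) hy₀t.le
    have h1 : y + M • y₀ ∈ Kone (insert (-t) S₀) := by
      apply Kone_insert_mem.2
      constructor
      · exact Kone_add hy (Kone_smul hy₀ hM0)
      · rw [inner_neg_left, inner_add_right, real_inner_smul_right, hM]
        have : -⟪t, y⟫ / ⟪t, y₀⟫ * ⟪t, y₀⟫ = -⟪t, y⟫ := by
          field_simp
        rw [this]
        ring_nf
        simp
    have h2 : y₀ ∈ Kone (insert (-t) S₀) :=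
      Kone_insert_mem.2 ⟨hy₀, by rw [inner_neg_left]; linarith⟩
    have h3 := Submodule.sub_mem _ (Submodule.subset_span (s := Kone (insert (-t) S₀)) h1)
      (Submodule.smul_mem _ M (Submodule.subset_span h2))
    simpa using h3

/-- The edge relation: flipping one irredundant constraint negates `chi`. -/
lemma edge_relation {S₀ : Finset E} {t : E} (ht0 : t ≠ 0) (htS : t ∉ S₀) (htS' : -t ∉ S₀)
    (hsp : Submodule.span ℝ (Kone (insert t S₀)) = ⊤)
    (hirr : Kone (insert t S₀) ≠ Kone S₀)
    (hbase : chi S₀ = tgt (Kone S₀))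
    (hlow : ∀ T : Finset E, Submodule.span ℝ (Kone T) ≠ ⊤ → chi T = tgt (Kone T)) :
    chi (insert (-t) S₀) = - chi (insert t S₀) ∧
      Submodule.span ℝ (Kone (insert (-t) S₀)) = ⊤ := by
  -- existence of strictly negative and strictly positive points
  have hx₀ : ∃ x₀ ∈ Kone (insert t S₀), ⟪t, x₀⟫ < 0 := by
    by_contra hc
    push_neg at hc
    have : Kone (insert t S₀) ⊆ ↑((ℝ ∙ t)ᗮ) := by
      intro x hx
      have h1 := (Kone_insert_mem.1 hx).2
      have h2 := hc x hx
      have h0 : ⟪t, x⟫ = 0 := le_antisymm h1 h2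
      rw [SetLike.mem_coe, Submodule.mem_orthogonal]
      intro u hu
      obtain ⟨c, rfl⟩ := Submodule.mem_span_singleton.1 hu
      rw [real_inner_smul_left, h0]; ring
    have h1' : Submodule.span ℝ (Kone (insert t S₀)) ≤ (ℝ ∙ t)ᗮ := by
      rw [Submodule.span_le]; exact this
    rw [hsp, top_le_iff] at h1'
    have := (Submodule.mem_orthogonal _ _).1 (h1' ▸ Submodule.mem_top (x := t)) t
      (Submodule.mem_span_singleton_self t)
    rw [real_inner_self_eq_norm_sq] at this
    apply ht0
    have : ‖t‖ = 0 := by nlinarith [norm_nonneg t]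
    simpa using this
  have hy₀ : ∃ y₀ ∈ Kone S₀, 0 < ⟪t, y₀⟫ := by
    by_contra hc
    push_neg at hc
    apply hirr
    apply Set.Subset.antisymm (fun x hx => (Kone_insert_mem.1 hx).1)
    intro y hy
    exact Kone_insert_mem.2 ⟨hy, hc y hy⟩
  obtain ⟨x₀, hx₀m, hx₀t⟩ := hx₀
  obtain ⟨y₀, hy₀m, hy₀t⟩ := hy₀
  -- D has small span
  have hDlow : Submodule.span ℝ (Kone (insert t (insert (-t) S₀))) ≠ ⊤ :=
    span_ne_top_of_pm ht0 (Finset.mem_insert_self _ _)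
      (Finset.mem_insert_of_mem (Finset.mem_insert_self _ _))
  have hDval := hlow _ hDlow
  -- target identity : tgt C' + tgt D = 0
  have htarg : tgt (Kone S₀) + tgt (Kone (insert t (insert (-t) S₀))) = 0 := by
    by_cases hlin : isLin (Kone S₀)
    · -- C' is a subspace of full span, hence everything
      have hS₀top : Submodule.span ℝ (Kone S₀) = ⊤ := by
        apply top_unique
        rw [← hsp]
        exact Submodule.span_mono (fun x hx => (Kone_insert_mem.1 hx).1)
      have hKuniv : Kone S₀ = Set.univ := by
        obtain ⟨W, hW⟩ := hlin
        rw [hW] at hS₀top ⊢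
        rw [Submodule.span_eq] at hS₀top
        rw [hS₀top]
        simp
      have hD : Kone (insert t (insert (-t) S₀)) = ↑((ℝ ∙ t)ᗮ) := by
        rw [Kone_pm_eq, hKuniv]
        ext x
        simp only [Set.mem_setOf_eq, Set.mem_univ, true_and, SetLike.mem_coe,
          Submodule.mem_orthogonal]
        constructor
        · intro h u hu
          obtain ⟨c, rfl⟩ := Submodule.mem_span_singleton.1 hu
          rw [real_inner_smul_left, h]; ring
        · intro h
          exact h t (Submodule.mem_span_singleton_self t)
      have hd1 : cdim (Kone S₀) = finrank ℝ E := by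
        rw [cdim, hKuniv]
        rw [Submodule.span_univ]
        exact finrank_top ℝ E
      have hd2 : cdim (Kone (insert t (insert (-t) S₀))) = finrank ℝ E - 1 := by
        rw [cdim, hD, Submodule.span_eq]
        have h := Submodule.finrank_add_finrank_orthogonal (ℝ ∙ t)
        rw [finrank_span_singleton ht0] at h
        omega
      have hdpos : 1 ≤ finrank ℝ E := by
        have : Nontrivial E := ⟨t, 0, ht0⟩
        exact Module.finrank_pos
      rw [tgt, tgt, if_pos hlin, if_pos ⟨(ℝ ∙ t)ᗮ, hD⟩, hd1, hd2]
      have hparity : finrank ℝ E = (finrank ℝ E - 1) + 1 := by omega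
      nth_rewrite 1 [hparity]
      rw [pow_succ]
      ring
    · -- C' is not a subspace; then D is not one either
      have hDlin : ¬ isLin (Kone (insert t (insert (-t) S₀))) := by
        intro hD
        exact hlin (isLin_of_D_isLin hx₀m hx₀t hy₀m hy₀t hD)
      rw [tgt, tgt, if_neg hlin, if_neg hDlin]
      ring
  have hkey := key_identity (S₀ := S₀) ht0 htS htS'
  constructor
  · rw [hbase, hDval] at hkey
    linarith
  · exact span_flip hsp hy₀m hy₀t


/- ### the path lemma -/

lemma path_lemma {S : Finset E} (h0S : (0:E) ∉ S)
    (hlow : ∀ T : Finset E, Submodule.span ℝ (Kone T) ≠ ⊤ → chi T = tgt (Kone T))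
    (hbase : ∀ T : Finset E, T.card < S.card → chi T = tgt (Kone T))
    (hsp : Submodule.span ℝ (Kone S) = ⊤) :
    ∀ A : Finset E, A ⊆ S → (∀ B, B ⊆ S → B.card < A.card → Clean S B) →
      chi (TA S A) = (-1)^(A.card) * chi S ∧
        Submodule.span ℝ (Kone (TA S A)) = ⊤ := by
  intro A
  induction A using Finset.strongInduction with
  | _ A IH =>
    intro hAS hpack
    rcases Finset.eq_empty_or_nonempty A with rfl | ⟨t, htA⟩
    · rw [TA_empty]
      simp [hsp]
    · set A' := A.erase t with hA'
      have htS : t ∈ S := hAS htA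
      have hA'sub : A' ⊆ S := fun u hu => hAS (Finset.erase_subset _ _ hu)
      have hA'ss : A' ⊂ A := Finset.erase_ssubset htA
      have hcardlt : A'.card < A.card := Finset.card_lt_card hA'ss
      have hpack' : ∀ B, B ⊆ S → B.card < A'.card → Clean S B :=
        fun B h1 h2 => hpack B h1 (lt_trans h2 hcardlt)
      obtain ⟨hchiA', hspA'⟩ := IH A' hA'ss hA'sub hpack'
      have hcleanA' : Clean S A' := hpack A' hA'sub hcardlt
      have htA' : t ∉ A' := Finset.notMem_erase _ _
      obtain ⟨htTA, hTAeq⟩ := TA_surgery hA'sub htS htA' hcleanA'.1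
      set S₀ := (TA S A').erase t with hS₀def
      have hS₀ : insert t S₀ = TA S A' := Finset.insert_erase htTA
      have ht0 : t ≠ 0 := fun h => h0S (h ▸ htS)
      have htnotS₀ : t ∉ S₀ := Finset.notMem_erase _ _
      have hnegnotS₀ : -t ∉ S₀ := by
        intro hc
        apply span_ne_top_of_pm ht0 htTA (Finset.erase_subset _ _ hc)
        exact hcleanA'.2.1
      have hsp' : Submodule.span ℝ (Kone (insert t S₀)) = ⊤ := by
        rw [hS₀]
        exact hcleanA'.2.1
      have hirr : Kone (insert t S₀) ≠ Kone S₀ := by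
        rw [hS₀]
        exact (hcleanA'.2.2 t htTA).symm
      have hbase' : chi S₀ = tgt (Kone S₀) := by
        apply hbase
        rw [hS₀def, Finset.card_erase_of_mem htTA, hcleanA'.1]
        have : 0 < S.card := Finset.card_pos.2 ⟨t, htS⟩
        omega
      obtain ⟨hflip, hspflip⟩ := edge_relation ht0 htnotS₀ hnegnotS₀ hsp' hirr hbase' hlow
      have hAeq : insert t A' = A := Finset.insert_erase htA
      have hTAA : TA S A = insert (-t) S₀ := by
        rw [← hAeq, hTAeq]
      constructor
      · rw [hTAA, hflip, hS₀, hchiA']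
        have hcard : A.card = A'.card + 1 := by
          rw [hA', Finset.card_erase_of_mem htA]
          have : 0 < A.card := Finset.card_pos.2 ⟨t, htA⟩
          omega
        rw [hcard, pow_succ]
        ring
      · rw [hTAA]
        exact hspflip


/- ### master sum: unsigned reindexing -/

def Pat (S Z P : Finset E) : Prop :=
  ∃ x : E, (∀ s ∈ Z, ⟪s, x⟫ = 0) ∧ (∀ s ∈ P, 0 < ⟪s, x⟫) ∧
    (∀ s ∈ S, s ∉ Z → s ∉ P → ⟪s, x⟫ < 0)

def RelN (S Z A : Finset E) : Prop :=
  ∃ x : E, (∀ s ∈ Z, ⟪s, x⟫ = 0) ∧ (∀ s ∈ A, s ∉ Z → 0 < ⟪s, x⟫) ∧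
    (∀ s ∈ S, s ∉ A → s ∉ Z → ⟪s, x⟫ < 0)

lemma RelN_iff_Pat {S Z A : Finset E} (hA : A ⊆ S) :
    RelN S Z A ↔ Pat S Z (A \ Z) := by
  constructor
  · rintro ⟨x, h1, h2, h3⟩
    refine ⟨x, h1, fun s hs => h2 s (Finset.mem_sdiff.1 hs).1 (Finset.mem_sdiff.1 hs).2,
      fun s hsS hsZ hsP => h3 s hsS (fun hsA => hsP (Finset.mem_sdiff.2 ⟨hsA, hsZ⟩)) hsZ⟩
  · rintro ⟨x, h1, h2, h3⟩
    refine ⟨x, h1, fun s hsA hsZ => h2 s (Finset.mem_sdiff.2 ⟨hsA, hsZ⟩),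
      fun s hsS hsA hsZ => h3 s hsS hsZ (fun hc => hsA (Finset.mem_sdiff.1 hc).1)⟩

lemma rk_psi {Z A : Finset E} :
    rk ((Z \ A) ∪ (Z ∩ A).image (fun a => -a)) = rk Z := by
  have hspan : Submodule.span ℝ (((Z \ A) ∪ (Z ∩ A).image (fun a => -a) : Finset E) : Set E)
      = Submodule.span ℝ ((Z : Finset E) : Set E) := by
    apply le_antisymm
    · rw [Submodule.span_le]
      intro u hu
      rw [Finset.coe_union, Set.mem_union] at hu
      rcases hu with hu | hu
      · exact Submodule.subset_span (by
          have := Finset.mem_coe.1 hu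
          exact Finset.mem_coe.2 ((Finset.sdiff_subset) this))
      · rw [Finset.coe_image, Set.mem_image] at hu
        obtain ⟨a, ha, rfl⟩ := hu
        exact Submodule.neg_mem _ (Submodule.subset_span
          (Finset.mem_coe.2 (Finset.mem_of_mem_inter_left (Finset.mem_coe.1 ha))))
    · rw [Submodule.span_le]
      intro z hz
      have hzZ := Finset.mem_coe.1 hz
      by_cases hzA : z ∈ A
      · have : -z ∈ (Z \ A) ∪ (Z ∩ A).image (fun a => -a) :=
          Finset.mem_union_right _ (Finset.mem_image_of_mem _
            (Finset.mem_inter.2 ⟨hzZ, hzA⟩))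
        have h2 : -z ∈ Submodule.span ℝ
            (((Z \ A) ∪ (Z ∩ A).image (fun a => -a) : Finset E) : Set E) :=
          Submodule.subset_span (Finset.mem_coe.2 this)
        simpa using Submodule.neg_mem _ h2
      · exact Submodule.subset_span (Finset.mem_coe.2
          (Finset.mem_union_left _ (Finset.mem_sdiff.2 ⟨hzZ, hzA⟩)))
  rw [rk, rk, hspan]

lemma chi_TA_eq {S A : Finset E} (hA : A ⊆ S) (hcard : (TA S A).card = S.card) :
    chi (TA S A) = ∑ Z ∈ S.powerset,
      (if RelN S Z A then ((-1:ℤ))^(dd - rk Z) else 0) := by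
  classical
  have hdisj := disjoint_of_card hA hcard
  have hormem : ∀ s ∈ S, (if s ∈ A then -s else s) ∈ TA S A := by
    intro s hs
    by_cases hsA : s ∈ A
    · rw [if_pos hsA]
      exact Finset.mem_union_right _ (Finset.mem_image_of_mem _ hsA)
    · rw [if_neg hsA]
      exact Finset.mem_union_left _ (Finset.mem_sdiff.2 ⟨hs, hsA⟩)
  have hi : ∀ J ∈ Jcan (TA S A),
      S.filter (fun s => (if s ∈ A then -s else s) ∈ J)
        ∈ S.powerset.filter (fun Z => RelN S Z A) := by
    intro J hJ
    obtain ⟨x, hx, rfl⟩ := Jcan_mem_iff.1 hJ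
    rw [Finset.mem_filter, Finset.mem_powerset]
    refine ⟨Finset.filter_subset _ _, ?_⟩
    have hzeros : ∀ s ∈ S,
        (s ∈ S.filter (fun s => (if s ∈ A then -s else s) ∈ tset (TA S A) x)
          ↔ ⟪s, x⟫ = 0) := by
      intro s hs
      rw [Finset.mem_filter, mem_tset]
      constructor
      · rintro ⟨_, _, h2⟩
        by_cases hsA : s ∈ A
        · rw [if_pos hsA] at h2
          rw [inner_neg_left] at h2
          linarith
        · rwa [if_neg hsA] at h2
      · intro h
        refine ⟨hs, hormem s hs, ?_⟩
        by_cases hsA : s ∈ A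
        · rw [if_pos hsA, inner_neg_left, h]; ring
        · rwa [if_neg hsA]
    refine ⟨x, ?_, ?_, ?_⟩
    · intro s hsf
      exact (hzeros s (Finset.filter_subset _ _ hsf)).1 hsf
    · intro s hsA hsf
      have hne : ⟪s, x⟫ ≠ 0 := fun h => hsf ((hzeros s (hA hsA)).2 h)
      have hle := hx (-s) (Finset.mem_union_right _ (Finset.mem_image_of_mem _ hsA))
      rw [inner_neg_left] at hle
      cases lt_or_gt_of_ne hne with
      | inl h => linarith
      | inr h => exact h
    · intro s hsS hsA hsf
      have hne : ⟪s, x⟫ ≠ 0 := fun h => hsf ((hzeros s hsS).2 h)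
      have hle := hx s (Finset.mem_union_left _ (Finset.mem_sdiff.2 ⟨hsS, hsA⟩))
      exact lt_of_le_of_ne hle hne
  have hj : ∀ Z ∈ S.powerset.filter (fun Z => RelN S Z A),
      (Z \ A) ∪ (Z ∩ A).image (fun a => -a) ∈ Jcan (TA S A) := by
    intro Z hZ
    rw [Finset.mem_filter, Finset.mem_powerset] at hZ
    obtain ⟨hZS, x, h1, h2, h3⟩ := hZ
    apply Jcan_mem_iff.2
    refine ⟨x, ?_, ?_⟩
    · intro u hu
      rcases Finset.mem_union.1 hu with hu | hu
      · obtain ⟨huS, huA⟩ := Finset.mem_sdiff.1 hu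
        by_cases huZ : u ∈ Z
        · exact le_of_eq (h1 u huZ)
        · exact (h3 u huS huA huZ).le
      · obtain ⟨a, haA, rfl⟩ := Finset.mem_image.1 hu
        rw [inner_neg_left]
        by_cases haZ : a ∈ Z
        · rw [h1 a haZ]; simp
        · have := h2 a haA haZ
          linarith
    · apply Finset.ext
      intro u
      rw [mem_tset, Finset.mem_union]
      constructor
      · rintro ⟨huTA, hu0⟩
        rcases Finset.mem_union.1 huTA with hu | hu
        · obtain ⟨huS, huA⟩ := Finset.mem_sdiff.1 hu
          left
          refine Finset.mem_sdiff.2 ⟨?_, huA⟩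
          by_contra huZ
          exact absurd hu0 (ne_of_lt (h3 u huS huA huZ))
        · obtain ⟨a, haA, rfl⟩ := Finset.mem_image.1 hu
          right
          rw [inner_neg_left] at hu0
          have ha0 : ⟪a, x⟫ = 0 := by linarith
          refine Finset.mem_image_of_mem _ (Finset.mem_inter.2 ⟨?_, haA⟩)
          by_contra haZ
          exact absurd ha0 (ne_of_gt (h2 a haA haZ))
      · rintro (hu | hu)
        · obtain ⟨huZ, huA⟩ := Finset.mem_sdiff.1 hu
          exact ⟨Finset.mem_union_left _ (Finset.mem_sdiff.2 ⟨hZS huZ, huA⟩), h1 u huZ⟩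
        · obtain ⟨a, ha, rfl⟩ := Finset.mem_image.1 hu
          obtain ⟨haZ, haA⟩ := Finset.mem_inter.1 ha
          refine ⟨Finset.mem_union_right _ (Finset.mem_image_of_mem _ haA), ?_⟩
          rw [inner_neg_left, h1 a haZ]
          ring
  have hleft : ∀ J ∈ Jcan (TA S A),
      ((S.filter (fun s => (if s ∈ A then -s else s) ∈ J)) \ A)
        ∪ ((S.filter (fun s => (if s ∈ A then -s else s) ∈ J)) ∩ A).image (fun a => -a)
      = J := by
    intro J hJ
    have hJTA : J ⊆ TA S A := Finset.mem_powerset.1 (Finset.mem_filter.1 hJ).1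
    apply Finset.ext
    intro u
    constructor
    · intro hu
      rcases Finset.mem_union.1 hu with hu | hu
      · obtain ⟨huf, huA⟩ := Finset.mem_sdiff.1 hu
        obtain ⟨huS, hor⟩ := Finset.mem_filter.1 huf
        rwa [if_neg huA] at hor
      · obtain ⟨a, ha, rfl⟩ := Finset.mem_image.1 hu
        obtain ⟨haf, haA⟩ := Finset.mem_inter.1 ha
        obtain ⟨haS, hor⟩ := Finset.mem_filter.1 haf
        rwa [if_pos haA] at hor
    · intro hu
      rcases Finset.mem_union.1 (hJTA hu) with hu' | hu'
      · obtain ⟨huS, huA⟩ := Finset.mem_sdiff.1 hu'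
        exact Finset.mem_union_left _ (Finset.mem_sdiff.2
          ⟨Finset.mem_filter.2 ⟨huS, by rwa [if_neg huA]⟩, huA⟩)
      · obtain ⟨a, haA, rfl⟩ := Finset.mem_image.1 hu'
        exact Finset.mem_union_right _ (Finset.mem_image_of_mem _ (Finset.mem_inter.2
          ⟨Finset.mem_filter.2 ⟨hA haA, by rwa [if_pos haA]⟩, haA⟩))
  have hright : ∀ Z ∈ S.powerset.filter (fun Z => RelN S Z A),
      S.filter (fun s => (if s ∈ A then -s else s)
        ∈ ((Z \ A) ∪ (Z ∩ A).image (fun a => -a))) = Z := by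
    intro Z hZ
    have hZS : Z ⊆ S := Finset.mem_powerset.1 (Finset.mem_filter.1 hZ).1
    apply Finset.ext
    intro s
    rw [Finset.mem_filter]
    constructor
    · rintro ⟨hsS, hor⟩
      by_cases hsA : s ∈ A
      · rw [if_pos hsA] at hor
        rcases Finset.mem_union.1 hor with h | h
        · exfalso
          have h1 : -s ∈ S \ A := Finset.mem_sdiff.2
            ⟨hZS (Finset.mem_sdiff.1 h).1, (Finset.mem_sdiff.1 h).2⟩
          exact (Finset.disjoint_left.1 hdisj h1) (Finset.mem_image_of_mem _ hsA)
        · obtain ⟨a, ha, haeq⟩ := Finset.mem_image.1 h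
          have haeq' : a = s := neg_injective haeq
          rw [← haeq']
          exact Finset.mem_of_mem_inter_left ha
      · rw [if_neg hsA] at hor
        rcases Finset.mem_union.1 hor with h | h
        · exact (Finset.mem_sdiff.1 h).1
        · exfalso
          have h1 : s ∈ S \ A := Finset.mem_sdiff.2 ⟨hsS, hsA⟩
          refine (Finset.disjoint_left.1 hdisj h1) ?_
          obtain ⟨a, ha, haeq⟩ := Finset.mem_image.1 h
          exact haeq ▸ Finset.mem_image_of_mem _ (Finset.mem_of_mem_inter_right ha)
    · intro hsZ
      refine ⟨hZS hsZ, ?_⟩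
      by_cases hsA : s ∈ A
      · rw [if_pos hsA]
        exact Finset.mem_union_right _
          (Finset.mem_image_of_mem _ (Finset.mem_inter.2 ⟨hsZ, hsA⟩))
      · rw [if_neg hsA]
        exact Finset.mem_union_left _ (Finset.mem_sdiff.2 ⟨hsZ, hsA⟩)
  rw [chi, ← Finset.sum_filter]
  refine Finset.sum_nbij' (i := fun J => S.filter (fun s => (if s ∈ A then -s else s) ∈ J))
    (j := fun Z => (Z \ A) ∪ (Z ∩ A).image (fun a => -a)) hi hj hleft hright ?_
  intro J hJ
  have hrk : rk J = rk (S.filter (fun s => (if s ∈ A then -s else s) ∈ J)) := by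
    conv_lhs => rw [← hleft J hJ]
    rw [rk_psi]
  rw [hrk]


/- ### master sum evaluation -/

noncomputable def gsum (S : Finset E) : ℤ :=
  ∑ P ∈ S.powerset, (if Pat S ∅ P then (-1:ℤ)^(P.card) else 0)

lemma rk_empty : rk (∅ : Finset E) = 0 := by
  rw [rk]
  simp

lemma master_eval {S : Finset E} (hcard : ∀ A ∈ S.powerset, (TA S A).card = S.card) :
    ∑ A ∈ S.powerset, ((-1:ℤ))^(A.card) * chi (TA S A) = ((-1:ℤ))^(dd) * gsum S := by
  classical
  have h1 : ∀ A ∈ S.powerset, ((-1:ℤ))^(A.card) * chi (TA S A)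
      = ∑ Z ∈ S.powerset, (if Pat S Z (A \ Z) then ((-1:ℤ))^(A.card) * (-1)^(dd - rk Z) else 0) := by
    intro A hA
    rw [chi_TA_eq (Finset.mem_powerset.1 hA) (hcard A hA), Finset.mul_sum]
    apply Finset.sum_congr rfl
    intro Z hZ
    rw [mul_ite, mul_zero]
    congr 1
    · exact propext (RelN_iff_Pat (Finset.mem_powerset.1 hA))
  rw [Finset.sum_congr rfl h1, Finset.sum_comm]
  have h2 : ∀ Z ∈ S.powerset,
      (∑ A ∈ S.powerset, if Pat S Z (A \ Z) then ((-1:ℤ))^(A.card) * (-1)^(dd - rk Z) else 0)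
      = (if Z = ∅ then 1 else 0) *
          ((∑ P ∈ (S \ Z).powerset, if Pat S Z P then ((-1:ℤ))^(P.card) else 0)
            * (-1)^(dd - rk Z)) := by
    intro Z hZ
    have hZS : Z ⊆ S := Finset.mem_powerset.1 hZ
    have hswap : (∑ A ∈ S.powerset, if Pat S Z (A \ Z) then ((-1:ℤ))^(A.card) * (-1)^(dd - rk Z) else 0)
        = ∑ PB ∈ (S \ Z).powerset ×ˢ Z.powerset,
            (if Pat S Z PB.1 then ((-1:ℤ))^(PB.1.card + PB.2.card) * (-1)^(dd - rk Z) else 0) := by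
      apply Finset.sum_nbij' (i := fun A => (A \ Z, A ∩ Z)) (j := fun PB => PB.1 ∪ PB.2)
      · intro A hA
        rw [Finset.mem_product]
        exact ⟨Finset.mem_powerset.2 (Finset.sdiff_subset_sdiff (Finset.mem_powerset.1 hA)
          (Finset.Subset.refl Z)), Finset.mem_powerset.2 Finset.inter_subset_right⟩
      · intro PB hPB
        rw [Finset.mem_product] at hPB
        apply Finset.mem_powerset.2
        intro u hu
        rcases Finset.mem_union.1 hu with h | h
        · exact (Finset.mem_sdiff.1 (Finset.mem_powerset.1 hPB.1 h)).1
        · exact hZS (Finset.mem_powerset.1 hPB.2 h)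
      · intro A hA
        exact Finset.sdiff_union_inter A Z
      · intro PB hPB
        rw [Finset.mem_product] at hPB
        have hP : PB.1 ⊆ S \ Z := Finset.mem_powerset.1 hPB.1
        have hB : PB.2 ⊆ Z := Finset.mem_powerset.1 hPB.2
        have hPdisj : Disjoint PB.1 Z := by
          rw [Finset.disjoint_left]
          intro u hu hc
          exact absurd hc (Finset.mem_sdiff.1 (hP hu)).2
        have e1 : (PB.1 ∪ PB.2) \ Z = PB.1 := by
          rw [Finset.union_sdiff_distrib, Finset.sdiff_eq_self_of_disjoint hPdisj,
            Finset.sdiff_eq_empty_iff_subset.2 hB, Finset.union_empty]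
        have e2 : (PB.1 ∪ PB.2) ∩ Z = PB.2 := by
          rw [Finset.union_inter_distrib_right,
            (Finset.disjoint_iff_inter_eq_empty).1 hPdisj,
            Finset.inter_eq_left.2 hB, Finset.empty_union]
        rw [Prod.ext_iff]
        exact ⟨e1, e2⟩
      · intro A hA
        have : A.card = (A \ Z).card + (A ∩ Z).card :=
          (Finset.card_sdiff_add_card_inter A Z).symm
        rw [this]
    rw [hswap, Finset.sum_product]
    have hfact : ∀ P ∈ (S \ Z).powerset,
        (∑ B ∈ Z.powerset, if Pat S Z P then ((-1:ℤ))^(P.card + B.card) * (-1)^(dd - rk Z) else 0)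
        = (if Pat S Z P then ((-1:ℤ))^(P.card) else 0) * (-1)^(dd - rk Z)
            * (∑ B ∈ Z.powerset, ((-1:ℤ))^(B.card)) := by
      intro P hP
      by_cases hp : Pat S Z P
      · simp only [if_pos hp, pow_add, Finset.mul_sum]
        apply Finset.sum_congr rfl
        intro B hB
        ring
      · simp [if_neg hp]
    rw [Finset.sum_congr rfl hfact, ← Finset.sum_mul, ← Finset.sum_mul,
      Finset.sum_powerset_neg_one_pow_card]
    ring
  rw [Finset.sum_congr rfl h2, Finset.sum_eq_single ∅]
  · rw [if_pos rfl, Finset.sdiff_empty, rk_empty, Nat.sub_zero, gsum]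
    ring
  · intro Z hZ hZne
    rw [if_neg hZne]
    ring
  · intro h
    exact absurd (Finset.empty_mem_powerset S) h

/- ### the cut lemmas -/

lemma exists_violator {T : Finset E} {u : E} (hu : u ∈ T)
    (hne : Kone (T.erase u) ≠ Kone T) :
    ∃ y ∈ Kone (T.erase u), 0 < ⟪u, y⟫ := by
  have hsub : Kone T ⊆ Kone (T.erase u) := fun x hx s hs => hx s (Finset.erase_subset _ _ hs)
  have hns : ¬ Kone (T.erase u) ⊆ Kone T := by
    intro hc
    exact hne (Set.Subset.antisymm hc hsub)
  obtain ⟨y, hy1, hy2⟩ := Set.not_subset.1 hns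
  refine ⟨y, hy1, ?_⟩
  have : ∃ s ∈ T, ¬ ⟪s, y⟫ ≤ 0 := by
    by_contra hc
    push_neg at hc
    exact hy2 (fun s hs => hc s hs)
  obtain ⟨s, hsT, hsy⟩ := this
  rcases eq_or_ne s u with rfl | hne'
  · linarith [lt_of_not_ge hsy]
  · exact absurd (hy1 s (Finset.mem_erase.2 ⟨hne', hsT⟩)) hsy

lemma cut_up {S P : Finset E} {t : E} (hP : P ⊆ S) (htS : t ∈ S) (htP : t ∉ P)
    (hcard : (TA S P).card = S.card)
    (hirr : ∀ u ∈ TA S P, Kone ((TA S P).erase u) ≠ Kone (TA S P))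
    (hpat : Pat S ∅ P) : Pat S ∅ (insert t P) := by
  obtain ⟨x, _, hx2, hx3⟩ := hpat
  have hdisj := disjoint_of_card hP hcard
  have htTA : t ∈ TA S P := Finset.mem_union_left _ (Finset.mem_sdiff.2 ⟨htS, htP⟩)
  obtain ⟨y, hy, hty⟩ := exists_violator htTA (hirr t htTA)
  have hyP : ∀ s ∈ P, 0 ≤ ⟪s, y⟫ := by
    intro s hs
    have hnegs : -s ∈ TA S P := Finset.mem_union_right _ (Finset.mem_image_of_mem _ hs)
    have hne : -s ≠ t := by
      intro hc
      exact (Finset.disjoint_left.1 hdisj (Finset.mem_sdiff.2 ⟨htS, htP⟩))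
        (hc ▸ Finset.mem_image_of_mem _ hs)
    have := hy (-s) (Finset.mem_erase.2 ⟨hne, hnegs⟩)
    rw [inner_neg_left] at this
    linarith
  have hyS : ∀ s ∈ S, s ∉ P → s ≠ t → ⟪s, y⟫ ≤ 0 := by
    intro s hsS hsP hst
    exact hy s (Finset.mem_erase.2 ⟨hst, Finset.mem_union_left _
      (Finset.mem_sdiff.2 ⟨hsS, hsP⟩)⟩)
  -- pick ε
  obtain ⟨ε, hε, hεt⟩ : ∃ ε : ℝ, 0 < ε ∧ 0 < ⟪t, y⟫ + ε * ⟪t, x⟫ := by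
    by_cases h : 0 ≤ ⟪t, x⟫
    · exact ⟨1, one_pos, by nlinarith⟩
    · push_neg at h
      refine ⟨⟪t, y⟫ / (2 * (-⟪t, x⟫)), div_pos hty (by linarith), ?_⟩
      have hq : ⟪t, y⟫ / (2 * (-⟪t, x⟫)) * ⟪t, x⟫ = -(⟪t, y⟫ / 2) := by
        have hx0 : ⟪t, x⟫ ≠ 0 := ne_of_lt h
        field_simp
      rw [hq]
      linarith
  refine ⟨y + ε • x, by simp, ?_, ?_⟩
  · intro s hs
    rcases Finset.mem_insert.1 hs with rfl | hs
    · rw [inner_add_right, real_inner_smul_right]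
      exact hεt
    · rw [inner_add_right, real_inner_smul_right]
      have h1 := hyP s hs
      have h2 := hx2 s hs
      nlinarith
  · intro s hsS _ hsP
    have hst : s ≠ t := fun h => hsP (h ▸ Finset.mem_insert_self _ _)
    have hsP' : s ∉ P := fun h => hsP (Finset.mem_insert_of_mem h)
    rw [inner_add_right, real_inner_smul_right]
    have h1 := hyS s hsS hsP' hst
    have h2 := hx3 s hsS (Finset.notMem_empty s) hsP'
    nlinarith

lemma cut_down {S P : Finset E} {t : E} (hP : P ⊆ S) (htP : t ∈ P)
    (hcard : (TA S P).card = S.card)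
    (hirr : ∀ u ∈ TA S P, Kone ((TA S P).erase u) ≠ Kone (TA S P))
    (hpat : Pat S ∅ P) : Pat S ∅ (P.erase t) := by
  obtain ⟨x, _, hx2, hx3⟩ := hpat
  have hdisj := disjoint_of_card hP hcard
  have hnegt : -t ∈ TA S P := Finset.mem_union_right _ (Finset.mem_image_of_mem _ htP)
  obtain ⟨y, hy, hty'⟩ := exists_violator hnegt (hirr (-t) hnegt)
  rw [inner_neg_left] at hty'
  have hty : ⟪t, y⟫ < 0 := by linarith
  have hyP : ∀ s ∈ P, s ≠ t → 0 ≤ ⟪s, y⟫ := by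
    intro s hs hst
    have hnegs : -s ∈ TA S P := Finset.mem_union_right _ (Finset.mem_image_of_mem _ hs)
    have hne : -s ≠ -t := fun hc => hst (neg_injective hc)
    have := hy (-s) (Finset.mem_erase.2 ⟨hne, hnegs⟩)
    rw [inner_neg_left] at this
    linarith
  have hyS : ∀ s ∈ S, s ∉ P → ⟪s, y⟫ ≤ 0 := by
    intro s hsS hsP
    have hmem : s ∈ TA S P := Finset.mem_union_left _ (Finset.mem_sdiff.2 ⟨hsS, hsP⟩)
    have hne : s ≠ -t := by
      intro hc
      exact (Finset.disjoint_left.1 hdisj (Finset.mem_sdiff.2 ⟨hsS, hsP⟩))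
        (hc ▸ Finset.mem_image_of_mem _ htP)
    exact hy s (Finset.mem_erase.2 ⟨hne, hmem⟩)
  have htx : 0 < ⟪t, x⟫ := hx2 t htP
  set ε := (-⟪t, y⟫) / (2 * ⟪t, x⟫) with hεdef
  have hε : 0 < ε := div_pos (by linarith) (by linarith)
  refine ⟨y + ε • x, by simp, ?_, ?_⟩
  · intro s hs
    obtain ⟨hst, hsP⟩ := Finset.mem_erase.1 hs
    rw [inner_add_right, real_inner_smul_right]
    have h1 := hyP s hsP hst
    have h2 := hx2 s hsP
    nlinarith
  · intro s hsS _ hsP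
    rw [inner_add_right, real_inner_smul_right]
    rcases eq_or_ne s t with rfl | hst
    · have hq : ε * ⟪s, x⟫ = -(⟪s, y⟫ / 2) := by
        rw [hεdef]
        have hx0 : ⟪s, x⟫ ≠ 0 := ne_of_gt htx
        field_simp
      rw [hq]
      linarith
    · have hsP' : s ∉ P := fun h => hsP (Finset.mem_erase.2 ⟨hst, h⟩)
      have h1 := hyS s hsS hsP'
      have h2 := hx3 s hsS (Finset.notMem_empty s) hsP'
      nlinarith

lemma gsum_zero {S : Finset E} (hS : S.Nonempty)
    (hclean : ∀ A ⊆ S, Clean S A) : gsum S = 0 := by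
  classical
  obtain ⟨t, htS⟩ := hS
  rw [gsum]
  apply Finset.sum_involution (g := fun P _ => if t ∈ P then P.erase t else insert t P)
  · intro P hP
    have hPS : P ⊆ S := Finset.mem_powerset.1 hP
    by_cases htP : t ∈ P
    · rw [if_pos htP]
      have hiff : Pat S ∅ P ↔ Pat S ∅ (P.erase t) := by
        constructor
        · intro h
          exact cut_down hPS htP (hclean P hPS).1 (hclean P hPS).2.2 h
        · intro h
          have hsub : P.erase t ⊆ S := fun u hu => hPS (Finset.erase_subset _ _ hu)
          have := cut_up hsub htS (Finset.notMem_erase _ _)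
            (hclean _ hsub).1 (hclean _ hsub).2.2 h
          rwa [Finset.insert_erase htP] at this
      have hcard : P.card = (P.erase t).card + 1 := by
        rw [Finset.card_erase_of_mem htP]
        have : 0 < P.card := Finset.card_pos.2 ⟨t, htP⟩
        omega
      by_cases hp : Pat S ∅ P
      · rw [if_pos hp, if_pos (hiff.1 hp), hcard, pow_succ]
        ring
      · rw [if_neg hp, if_neg (fun h => hp (hiff.2 h))]
        ring
    · rw [if_neg htP]
      have hiff : Pat S ∅ P ↔ Pat S ∅ (insert t P) := by
        constructor
        · intro h
          exact cut_up hPS htS htP (hclean P hPS).1 (hclean P hPS).2.2 h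
        · intro h
          have hsub : insert t P ⊆ S := Finset.insert_subset htS hPS
          have := cut_down hsub (Finset.mem_insert_self _ _)
            (hclean _ hsub).1 (hclean _ hsub).2.2 h
          rwa [Finset.erase_insert htP] at this
      have hcard : (insert t P).card = P.card + 1 := Finset.card_insert_of_notMem htP
      by_cases hp : Pat S ∅ P
      · rw [if_pos hp, if_pos (hiff.1 hp), hcard, pow_succ]
        ring
      · rw [if_neg hp, if_neg (fun h => hp (hiff.2 h))]
        ring
  · intro P hP hne
    by_cases htP : t ∈ P
    · rw [if_pos htP]
      intro hc
      exact (Finset.notMem_erase t P) (hc.symm ▸ htP)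
    · rw [if_neg htP]
      intro hc
      exact htP (hc ▸ Finset.mem_insert_self t P)
  · intro P hP
    by_cases htP : t ∈ P
    · rw [if_pos htP, if_neg (Finset.notMem_erase t P), Finset.insert_erase htP]
    · rw [if_neg htP, if_pos (Finset.mem_insert_self t P), Finset.erase_insert htP]
  · intro P hP
    by_cases htP : t ∈ P
    · rw [if_pos htP]
      exact Finset.mem_powerset.2 (fun u hu =>
        (Finset.mem_powerset.1 hP) (Finset.erase_subset _ _ hu))
    · rw [if_neg htP]
      exact Finset.mem_powerset.2 (Finset.insert_subset htS (Finset.mem_powerset.1 hP))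


/- ### auxiliary small lemmas for the main theorem -/

lemma Kone_univ_of_subsingleton [Subsingleton E] (S : Finset E) : Kone S = Set.univ := by
  ext x
  simp only [Set.mem_univ, iff_true]
  intro s hs
  have hx : x = 0 := Subsingleton.elim x 0
  rw [hx, inner_zero_right]

lemma Kone_empty : Kone (∅ : Finset E) = Set.univ := by
  ext x
  simp [Kone]

lemma isLin_univ : isLin (Set.univ : Set E) := ⟨⊤, by simp⟩

lemma not_isLin_full {T : Finset E} (hsp : Submodule.span ℝ (Kone T) = ⊤)
    {s₀ : E} (hs₀ : s₀ ∈ T) (hs₀0 : s₀ ≠ 0) : ¬ isLin (Kone T) := by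
  rintro ⟨W, hW⟩
  have hWtop : W = ⊤ := by
    rw [hW] at hsp
    rwa [Submodule.span_eq] at hsp
  have huniv : Kone T = Set.univ := by
    rw [hW, hWtop]
    simp
  have : s₀ ∈ Kone T := by rw [huniv]; trivial
  have h2 := this s₀ hs₀
  rw [real_inner_self_eq_norm_sq] at h2
  have h3 : ‖s₀‖ = 0 := by nlinarith [norm_nonneg s₀]
  exact hs₀0 (by simpa using h3)

lemma Kone_erase_zero {S : Finset E} (h : (0:E) ∈ S) :
    Kone (S.erase 0) = Kone S := by
  ext x
  constructor
  · intro hx s hs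
    rcases eq_or_ne s 0 with rfl | hne
    · rw [inner_zero_left]
    · exact hx s (Finset.mem_erase.2 ⟨hne, hs⟩)
  · intro hx s hs
    exact hx s (Finset.erase_subset _ _ hs)

lemma card_TA_le (S A : Finset E) (hA : A ⊆ S) : (TA S A).card ≤ S.card := by
  have h1 := Finset.card_union_le (S \ A) (A.image (fun a => -a))
  have h2 : (A.image (fun a => -a)).card ≤ A.card := Finset.card_image_le
  have h3 : (S \ A).card = S.card - A.card := Finset.card_sdiff_of_subset hA
  have h4 : A.card ≤ S.card := Finset.card_le_card hA
  rw [TA]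
  omega

/- ### THE MAIN THEOREM -/

theorem mainAux : ∀ (n : ℕ) (E : Type) [NormedAddCommGroup E] [InnerProductSpace ℝ E]
    [FiniteDimensional ℝ E], finrank ℝ E ≤ n → ∀ (k : ℕ) (S : Finset E), S.card ≤ k →
      chi S = tgt (Kone S) := by
  intro n
  induction n with
  | zero =>
    intro E _ _ _ hE k S _
    have hsub : Subsingleton E := finrank_zero_iff.1 (le_antisymm hE (Nat.zero_le _))
    rw [Kone_univ_of_subsingleton]
    rw [← Kone_univ_of_subsingleton S]
    exact chi_isLin (by rw [Kone_univ_of_subsingleton S]; exact isLin_univ)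
  | succ n IHn =>
    intro E _ _ _ hE k
    induction k with
    | zero =>
      intro S hS
      have hSempty : S = ∅ := Finset.card_eq_zero.1 (le_antisymm hS (Nat.zero_le _))
      subst hSempty
      exact chi_isLin (by rw [Kone_empty]; exact isLin_univ)
    | succ k IHk =>
      intro S hScard
      have hlow : ∀ T : Finset E, Submodule.span ℝ (Kone T) ≠ ⊤ → chi T = tgt (Kone T) := by
        intro T hT
        rw [chi_transport T, tgt_transport T]
        refine IHn ↥(Vspan T) ?_ (Sproj T).card (Sproj T) le_rfl
        have := finrank_V_lt T hT
        omega
      by_cases hred : ∃ u ∈ S, Kone (S.erase u) = Kone S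
      · obtain ⟨u, huS, hKe⟩ := hred
        have hcard : (S.erase u).card ≤ k := by
          rw [Finset.card_erase_of_mem huS]
          have : 0 < S.card := Finset.card_pos.2 ⟨u, huS⟩
          omega
        rw [chi_congr hKe.symm, ← hKe]
        exact IHk (S.erase u) hcard
      · push_neg at hred
        by_cases hsp : Submodule.span ℝ (Kone S) = ⊤
        swap
        · exact hlow S hsp
        rcases Finset.eq_empty_or_nonempty S with rfl | hSne
        · exact chi_isLin (by rw [Kone_empty]; exact isLin_univ)
        have h0S : (0:E) ∉ S := by
          intro h
          exact hred 0 h (Kone_erase_zero h)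
        have hbase : ∀ T : Finset E, T.card < S.card → chi T = tgt (Kone T) := by
          intro T hT
          exact IHk T (by omega)
        have hnlS : ¬ isLin (Kone S) := by
          obtain ⟨s₀, hs₀⟩ := hSne
          exact not_isLin_full hsp hs₀ (fun h => h0S (h ▸ hs₀))
        have htgtS : tgt (Kone S) = 0 := by rw [tgt, if_neg hnlS]
        rw [htgtS]
        by_cases hallclean : ∀ A ⊆ S, Clean S A
        · -- all nodes clean: master sum argument
          have hM := master_eval (S := S) (fun A hA => (hallclean A (Finset.mem_powerset.1 hA)).1)
          have hg : gsum S = 0 := gsum_zero hSne hallclean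
          rw [hg, mul_zero] at hM
          have hterm : ∀ A ∈ S.powerset, ((-1:ℤ))^(A.card) * chi (TA S A) = chi S := by
            intro A hA
            obtain ⟨h1, _⟩ := path_lemma h0S hlow hbase hsp A (Finset.mem_powerset.1 hA)
              (fun B hB _ => hallclean B hB)
            rw [h1, ← mul_assoc, ← pow_add]
            rw [Even.neg_one_pow ⟨A.card, rfl⟩, one_mul]
          rw [Finset.sum_congr rfl hterm, Finset.sum_const, Finset.card_powerset,
            nsmul_eq_mul] at hM
          have h2 : ((2:ℕ)^S.card : ℤ) ≠ 0 := by positivity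
          rcases mul_eq_zero.1 hM with h | h
          · exact absurd (by exact_mod_cast h) h2
          · exact h
        · -- there is an unclean node: find a minimal one
          push_neg at hallclean
          obtain ⟨A₀, hA₀S, hA₀ncl⟩ := hallclean
          set U := S.powerset.filter (fun A => ¬ Clean S A) with hU
          have hUne : U.Nonempty :=
            ⟨A₀, Finset.mem_filter.2 ⟨Finset.mem_powerset.2 hA₀S, hA₀ncl⟩⟩
          obtain ⟨A₁, hA₁U, hmin⟩ := Finset.exists_min_image U (fun A => A.card) hUne
          have hA₁S : A₁ ⊆ S := Finset.mem_powerset.1 (Finset.mem_filter.1 hA₁U).1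
          have hA₁ncl : ¬ Clean S A₁ := (Finset.mem_filter.1 hA₁U).2
          have hcleanlt : ∀ B, B ⊆ S → B.card < A₁.card → Clean S B := by
            intro B hBS hBcard
            by_contra hc
            have := hmin B (Finset.mem_filter.2 ⟨Finset.mem_powerset.2 hBS, hc⟩)
            omega
          obtain ⟨hchiA₁, hspA₁⟩ := path_lemma h0S hlow hbase hsp A₁ hA₁S hcleanlt
          -- chi (TA S A₁) = tgt (Kone (TA S A₁))
          have hval : chi (TA S A₁) = tgt (Kone (TA S A₁)) := by
            by_cases hc : (TA S A₁).card = S.card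
            · have hexu : ∃ u ∈ TA S A₁, Kone ((TA S A₁).erase u) = Kone (TA S A₁) := by
                by_contra hirr2
                push_neg at hirr2
                exact hA₁ncl ⟨hc, hspA₁, hirr2⟩
              obtain ⟨u, huT, hKu⟩ := hexu
              rw [chi_congr hKu.symm, ← hKu]
              apply hbase
              rw [Finset.card_erase_of_mem huT, hc]
              have : 0 < S.card := Finset.card_pos.2 hSne
              omega
            · apply hbase
              have := card_TA_le S A₁ hA₁S
              omega
          -- TA S A₁ is not a subspace cone
          have hTAne : (TA S A₁).Nonempty := by
            obtain ⟨s₀, hs₀⟩ := hSne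
            by_cases hs₀A : s₀ ∈ A₁
            · exact ⟨-s₀, Finset.mem_union_right _ (Finset.mem_image_of_mem _ hs₀A)⟩
            · exact ⟨s₀, Finset.mem_union_left _ (Finset.mem_sdiff.2 ⟨hs₀, hs₀A⟩)⟩
          obtain ⟨u₀, hu₀⟩ := hTAne
          have hu₀0 : u₀ ≠ 0 := by
            rcases Finset.mem_union.1 hu₀ with h | h
            · exact fun hc => h0S (hc ▸ (Finset.mem_sdiff.1 h).1)
            · obtain ⟨a, haA, rfl⟩ := Finset.mem_image.1 h
              intro hc
              rw [neg_eq_zero] at hc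
              exact h0S (hc ▸ hA₁S haA)
          have hnlTA : ¬ isLin (Kone (TA S A₁)) := not_isLin_full hspA₁ hu₀ hu₀0
          have htgtTA : tgt (Kone (TA S A₁)) = 0 := by rw [tgt, if_neg hnlTA]
          rw [hval, htgtTA] at hchiA₁
          have h3 : ((-1:ℤ))^(A₁.card) ≠ 0 := by
            intro h
            have := pow_eq_zero_iff (n := A₁.card) (by
              intro hc
              rw [hc] at h
              norm_num at h) |>.1 h
            norm_num at this
          rcases mul_eq_zero.1 hchiA₁.symm with h | h
          · exact absurd h h3
          · exact h


lemma face_nonempty {S : Finset E} {F : Set E} (hF : IsFaceG F (Kone S)) : F.Nonempty := by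
  rcases hF with rfl | ⟨a, _, _, rfl⟩
  · exact ⟨0, zero_mem_Kone S⟩
  · exact ⟨0, zero_mem_Kone S, by rw [inner_zero_right]⟩

theorem main_final (S : Finset E) :
    (∑ i ∈ Finset.range (finrank ℝ E + 1),
      (-1 : ℤ) ^ i * ((Set.ncard {F : Set E | IsFaceG F (Kone S) ∧ F.Nonempty ∧ cdim F = i}) : ℤ))
    = if isLin (Kone S) then (-1 : ℤ) ^ (cdim (Kone S)) else 0 := by
  classical
  have hmain := mainAux (finrank ℝ E) E le_rfl S.card S le_rfl
  have hcdim : ∀ J ∈ Jcan S, cdim (FJ S J) = finrank ℝ E - rk J := by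
    intro J hJ
    obtain ⟨x, hx, rfl⟩ := Jcan_mem_iff.1 hJ
    exact cdim_FJ hx
  -- the set of i-dimensional faces as a finset image
  have hset : ∀ i : ℕ, {F : Set E | IsFaceG F (Kone S) ∧ F.Nonempty ∧ cdim F = i}
      = ↑(((Jcan S).filter (fun J => cdim (FJ S J) = i)).image (FJ S)) := by
    intro i
    ext F
    simp only [Set.mem_setOf_eq, Finset.coe_image, Set.mem_image, Finset.mem_coe,
      Finset.mem_filter]
    constructor
    · rintro ⟨hF, _, hdim⟩
      obtain ⟨x, hx, rfl⟩ := face_eq_FJ hF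
      exact ⟨tset S x, ⟨Jcan_mem_iff.2 ⟨x, hx, rfl⟩, hdim⟩, rfl⟩
    · rintro ⟨J, ⟨hJ, hdim⟩, rfl⟩
      obtain ⟨x, hx, rfl⟩ := Jcan_mem_iff.1 hJ
      exact ⟨FJ_isFace hx, face_nonempty (FJ_isFace hx), hdim⟩
  have hcount : ∀ i : ℕ, (Set.ncard {F : Set E | IsFaceG F (Kone S) ∧ F.Nonempty ∧ cdim F = i})
      = (((Jcan S).filter (fun J => cdim (FJ S J) = i))).card := by
    intro i
    rw [hset i, Set.ncard_coe_finset, Finset.card_image_of_injOn]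
    intro J₁ h₁ J₂ h₂ h
    exact FJ_injOn S (Finset.mem_coe.2 (Finset.filter_subset _ _ (Finset.mem_coe.1 h₁)))
      (Finset.mem_coe.2 (Finset.filter_subset _ _ (Finset.mem_coe.1 h₂))) h
  have hLHS : (∑ i ∈ Finset.range (finrank ℝ E + 1),
      (-1 : ℤ) ^ i * ((Set.ncard {F : Set E | IsFaceG F (Kone S) ∧ F.Nonempty ∧ cdim F = i}) : ℤ))
      = chi S := by
    have h1 : ∀ i ∈ Finset.range (finrank ℝ E + 1),
        (-1 : ℤ) ^ i * ((Set.ncard {F : Set E | IsFaceG F (Kone S) ∧ F.Nonempty ∧ cdim F = i}) : ℤ)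
        = ∑ J ∈ Jcan S, (if cdim (FJ S J) = i then ((-1:ℤ))^i else 0) := by
      intro i hi
      rw [hcount i, Finset.card_filter]
      push_cast
      rw [Finset.mul_sum]
      apply Finset.sum_congr rfl
      intro J hJ
      by_cases h : cdim (FJ S J) = i
      · rw [if_pos h, if_pos h, mul_one]
      · rw [if_neg h, if_neg h, mul_zero]
    rw [Finset.sum_congr rfl h1, Finset.sum_comm, chi]
    apply Finset.sum_congr rfl
    intro J hJ
    rw [Finset.sum_eq_single (cdim (FJ S J))]
    · rw [if_pos rfl, hcdim J hJ]
    · intro i _ hne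
      rw [if_neg (fun h => hne h.symm)]
    · intro hnotmem
      exfalso
      apply hnotmem
      rw [Finset.mem_range, hcdim J hJ]
      omega
  rw [hLHS, hmain, tgt]

end EulerCone


-- STATEMENT 8 (Euler's relation for polyhedral cones):
-- `∑_{i=0}^{d} (-1)^i f_i(C)` equals `(-1)^{dim C}` if `C` is a linear subspace, `0` otherwise.
open Classical in
theorem euler_relation_polyhedral_cone {d : ℕ} (C : Set (EuclideanSpace ℝ (Fin d)))
    (hC : IsPolyhedralCone C) :
    (∑ i ∈ Finset.range (d + 1), (-1 : ℤ) ^ i * (fcount i C : ℤ)) =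
      if ∃ V : Submodule ℝ (EuclideanSpace ℝ (Fin d)), C = (V : Set _) then
        (-1 : ℤ) ^ (coneDim C) else 0 := by
  obtain ⟨S, rfl⟩ := hC
  have h := EulerCone.main_final (E := EuclideanSpace ℝ (Fin d)) S
  rw [finrank_euclideanSpace_fin] at h
  exact h
end
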